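/- arXiv:2012.05828 — 16 statements merged into one kernel-verified Lean document; each statement's English description precedes it below -/
import Mathlib

section
/- For every integer n ≥ 7, the least common multiple of 1, 2, ..., n is at least 2^n. -/
open Finset

lemma key (r : ℕ) : ∀ k : ℕ, ∑ j ∈ Finset.range (r+1), ((-1:ℚ)^j * (r.choose j)) / (k+j+1)
    = ((k.factorial * r.factorial : ℕ) : ℚ) / ((k+r+1).factorial : ℕ) := by
  induction r with
  | zero =>
    intro k
    have h : (k.factorial : ℚ) ≠ 0 := by exact_mod_cast k.factorial_pos.ne'
    simp [Nat.factorial_succ]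
    field_simp
  | succ r ih =>
    intro k
    have hfac : ∀ m : ℕ, ((m.factorial : ℕ) : ℚ) ≠ 0 := fun m => by
      exact_mod_cast m.factorial_pos.ne'
    calc ∑ j ∈ Finset.range (r+1+1), ((-1:ℚ)^j * ((r+1).choose j)) / (k+j+1)
        = (∑ i ∈ Finset.range (r+1), ((-1:ℚ)^(i+1) * ((r+1).choose (i+1))) / (k+((i+1):ℕ)+1))
          + ((-1:ℚ)^0 * ((r+1).choose 0)) / (k+((0:ℕ):ℚ)+1) :=
          Finset.sum_range_succ' _ (r+1)
      _ = (∑ i ∈ Finset.range (r+1),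
            (((-1:ℚ)^(i+1) * (r.choose (i+1))) / (k+((i+1):ℕ)+1)
              - ((-1:ℚ)^i * (r.choose i)) / (((k+1:ℕ):ℚ)+i+1)))
          + ((-1:ℚ)^0 * ((r:ℕ).choose 0)) / (k+((0:ℕ):ℚ)+1) := by
          congr 1
          · apply Finset.sum_congr rfl
            intro i hi
            rw [Nat.choose_succ_succ]
            push_cast
            ring
          · simp
      _ = ((∑ i ∈ Finset.range (r+1), ((-1:ℚ)^(i+1) * (r.choose (i+1))) / (k+((i+1):ℕ)+1))
            + ((-1:ℚ)^0 * (r.choose 0)) / (k+((0:ℕ):ℚ)+1))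
          - ∑ i ∈ Finset.range (r+1), ((-1:ℚ)^i * (r.choose i)) / (((k+1:ℕ):ℚ)+i+1) := by
          rw [Finset.sum_sub_distrib]; ring
      _ = (∑ i ∈ Finset.range (r+2), ((-1:ℚ)^i * (r.choose i)) / (k+i+1))
          - ∑ i ∈ Finset.range (r+1), ((-1:ℚ)^i * (r.choose i)) / (((k+1:ℕ):ℚ)+i+1) := by
          rw [Finset.sum_range_succ' (fun i => ((-1:ℚ)^i * (r.choose i)) / (k+i+1)) (r+1)]
      _ = (∑ i ∈ Finset.range (r+1), ((-1:ℚ)^i * (r.choose i)) / (k+i+1))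
          - ∑ i ∈ Finset.range (r+1), ((-1:ℚ)^i * (r.choose i)) / (((k+1:ℕ):ℚ)+i+1) := by
          rw [Finset.sum_range_succ]
          simp [Nat.choose_succ_self]
      _ = ((k.factorial * r.factorial : ℕ) : ℚ) / ((k+r+1).factorial : ℕ)
          - (((k+1).factorial * r.factorial : ℕ) : ℚ) / ((k+1+r+1).factorial : ℕ) := by
          rw [ih k, ih (k+1)]
      _ = ((k.factorial * (r+1).factorial : ℕ) : ℚ) / ((k+(r+1)+1).factorial : ℕ) := by
          have e1 : k+1+r+1 = k+r+2 := by omega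
          have e2 : k+(r+1)+1 = k+r+2 := by omega
          rw [e1, e2]
          have e3 : (k+r+2).factorial = (k+r+2) * (k+r+1).factorial := Nat.factorial_succ _
          rw [e3, Nat.factorial_succ k, Nat.factorial_succ r]
          push_cast
          have := hfac (k+r+1)
          field_simp
          ring




lemma nair (m k : ℕ) (hk : k ≤ m) :
    (m+1) * m.choose k ∣ (Finset.Icc 1 (m+1)).lcm id := by
  set L := (Finset.Icc 1 (m+1)).lcm id with hL
  set r := m - k with hr
  have hkr : k + r = m := by omega
  set c : ℕ → ℕ := fun j => L / (k+j+1) with hc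
  have hdvd : ∀ j, j ≤ r → (k+j+1) ∣ L := by
    intro j hj
    have : (k+j+1) ∈ Finset.Icc 1 (m+1) := by simp [Finset.mem_Icc]; omega
    exact Finset.dvd_lcm this
  have hQ : (L : ℚ) = (((m+1) * m.choose k : ℕ) : ℚ) *
      ∑ j ∈ Finset.range (r+1), (-1:ℚ)^j * (r.choose j) * ((c j : ℕ) : ℚ) := by
    have hsum : ∀ j ∈ Finset.range (r+1),
        (-1:ℚ)^j * (r.choose j) * ((c j : ℕ) : ℚ)
          = (L:ℚ) * (((-1:ℚ)^j * (r.choose j)) / (k+j+1)) := by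
      intro j hj
      rw [Finset.mem_range] at hj
      have hne0 : ((k+j+1 : ℕ) : ℚ) ≠ 0 := by positivity
      rw [hc]
      rw [Nat.cast_div (hdvd j (by omega)) hne0]
      push_cast; ring
    rw [Finset.sum_congr rfl hsum, ← Finset.mul_sum, key r k]
    have hfaceq : ((m+1) * m.choose k) * (k.factorial * r.factorial) = (k+r+1).factorial := by
      have := Nat.choose_mul_factorial_mul_factorial hk
      rw [hkr]
      calc (m+1) * m.choose k * (k.factorial * (m-k).factorial)
          = (m+1) * (m.choose k * k.factorial * (m-k).factorial) := by ring
        _ = (m+1) * m.factorial := by rw [this]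
        _ = (m+1).factorial := (Nat.factorial_succ m).symm
    have hne : (((k+r+1).factorial : ℕ) : ℚ) ≠ 0 := by
      exact_mod_cast (k+r+1).factorial_pos.ne'
    field_simp
    rw [← hfaceq]
    push_cast
    ring
  have hZ : (L : ℤ) = (((m+1) * m.choose k : ℕ) : ℤ) *
      ∑ j ∈ Finset.range (r+1), (-1:ℤ)^j * (r.choose j) * ((c j : ℕ) : ℤ) := by
    have h2 : ((L:ℤ) : ℚ) = (((((m+1) * m.choose k : ℕ) : ℤ) *
        ∑ j ∈ Finset.range (r+1), (-1:ℤ)^j * (r.choose j) * ((c j : ℕ) : ℤ)) : ℚ) := by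
      push_cast
      push_cast at hQ
      exact hQ
    exact_mod_cast h2
  have : (((m+1) * m.choose k : ℕ) : ℤ) ∣ (L : ℤ) := ⟨_, hZ⟩
  exact_mod_cast this



lemma lcm_Icc_pos (n : ℕ) : 0 < (Finset.Icc 1 n).lcm id := by
  rw [Nat.pos_iff_ne_zero]
  intro h
  rw [Finset.lcm_eq_zero_iff] at h
  simp [Finset.mem_Icc] at h

lemma lcm_Icc_mono {a b : ℕ} (h : a ≤ b) :
    (Finset.Icc 1 a).lcm id ∣ (Finset.Icc 1 b).lcm id := by
  apply Finset.lcm_dvd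
  intro x hx
  apply Finset.dvd_lcm
  simp [Finset.mem_Icc] at hx ⊢
  omega

lemma main_odd (m : ℕ) (hm : 4 ≤ m) :
    2 ^ (2*m+2) ≤ (Finset.Icc 1 (2*m+1)).lcm id := by
  obtain ⟨a, rfl⟩ : ∃ a, m = a + 1 := ⟨m-1, by omega⟩
  set L := (Finset.Icc 1 (2*(a+1)+1)).lcm id with hL
  have hB : (2*(a+1)+1) * (a+1).centralBinom ∣ L := by
    have := nair (2*(a+1)) (a+1) (by omega)
    simpa [Nat.centralBinom] using this
  have hA : (a+1) * (a+1).centralBinom ∣ L := by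
    have h1 : (2*a+1+1) * (2*a+1).choose a ∣ (Finset.Icc 1 (2*a+1+1)).lcm id :=
      nair (2*a+1) a (by omega)
    have hsym : (2*a+1).choose (a+1) = (2*a+1).choose a := by
      have := Nat.choose_symm (by omega : a+1 ≤ 2*a+1)
      rw [show 2*a+1-(a+1) = a from by omega] at this
      exact this.symm
    have e2 : (a+1) * (a+1).centralBinom = (2*a+1+1) * ((2*a+1).choose a) := by
      rw [Nat.centralBinom, show 2*(a+1) = (2*a+1)+1 from by ring,
        Nat.choose_succ_succ, hsym]
      ring
    rw [e2]
    exact dvd_trans h1 (lcm_Icc_mono (by omega))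
  have hcop : Nat.Coprime (a+1) (2*(a+1)+1) := by
    rw [show 2*(a+1)+1 = 1 + 2*(a+1) from by ring,
      Nat.coprime_add_mul_right_right (a+1) 1 2]
    exact Nat.coprime_one_right _
  have hdvd : (a+1) * (2*(a+1)+1) * (a+1).centralBinom ∣ L := by
    have hl := Nat.lcm_dvd hA hB
    rwa [Nat.lcm_mul_right, Nat.Coprime.lcm_eq_mul hcop] at hl
  have hbound : 2 ^ (2*(a+1)+2) ≤ (a+1) * (2*(a+1)+1) * (a+1).centralBinom := by
    have h4 := Nat.four_pow_lt_mul_centralBinom (a+1) hm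
    have e : (2:ℕ)^(2*(a+1)+2) = 4 * 4^(a+1) := by
      rw [pow_add, pow_mul]
      norm_num
      ring
    rw [e]
    calc 4 * 4^(a+1) ≤ (2*(a+1)+1) * 4^(a+1) := by
          apply Nat.mul_le_mul_right
          omega
      _ ≤ (2*(a+1)+1) * ((a+1) * (a+1).centralBinom) := Nat.mul_le_mul_left _ h4.le
      _ = (a+1) * (2*(a+1)+1) * (a+1).centralBinom := by ring
  exact le_trans hbound (Nat.le_of_dvd (lcm_Icc_pos _) hdvd)

theorem stmt_0 (n : ℕ) (hn : 7 ≤ n) :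
    2 ^ n ≤ Finset.lcm (Finset.Icc 1 n) id := by
  rcases le_or_gt n 8 with h8 | h9
  · interval_cases n
    · have e : Finset.Icc 1 7 = ({1,2,3,4,5,6,7} : Finset ℕ) := by decide
      rw [e]
      simp only [Finset.lcm_insert, Finset.lcm_singleton, id, lcm_eq_nat_lcm]
      norm_num [Nat.lcm]
    · have e : Finset.Icc 1 8 = ({1,2,3,4,5,6,7,8} : Finset ℕ) := by decide
      rw [e]
      simp only [Finset.lcm_insert, Finset.lcm_singleton, id, lcm_eq_nat_lcm]
      norm_num [Nat.lcm]
  · rcases Nat.even_or_odd n with ⟨m, hm⟩ | ⟨m, hm⟩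
    · have hm4 : 4 ≤ m - 1 := by omega
      have h := main_odd (m-1) hm4
      have e : 2*(m-1)+2 = n := by omega
      rw [e] at h
      calc 2^n ≤ (Finset.Icc 1 (2*(m-1)+1)).lcm id := h
        _ ≤ (Finset.Icc 1 n).lcm id :=
            Nat.le_of_dvd (lcm_Icc_pos _) (lcm_Icc_mono (by omega))
    · have hm4 : 4 ≤ m := by omega
      have h := main_odd m hm4
      have e : n = 2*m+1 := by omega
      rw [e]
      calc 2^(2*m+1) ≤ 2^(2*m+2) := Nat.pow_le_pow_right (by norm_num) (by omega)
        _ ≤ (Finset.Icc 1 (2*m+1)).lcm id := h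
end

section
/- For every integer n ≥ 1, the least common multiple of 1, 2, ..., n is at most 4^n. -/
open Finset

lemma my_L_pos (m : ℕ) : 0 < Finset.lcm (Finset.Icc 1 m) id := by
  apply Nat.pos_of_ne_zero
  intro h
  rw [Finset.lcm_eq_zero_iff] at h
  simp only [Set.mem_image, Finset.mem_coe, Finset.mem_Icc, id_eq] at h
  omega

lemma my_dvd_L {k m : ℕ} (h1 : 1 ≤ k) (h2 : k ≤ m) :
    k ∣ Finset.lcm (Finset.Icc 1 m) id :=
  Finset.dvd_lcm (Finset.mem_Icc.2 ⟨h1, h2⟩)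

lemma my_prime_dvd_choose {p v n : ℕ} (hp : p.Prime) (h1 : n + 1 < p ^ v)
    (h2 : p ^ v ≤ 2 * n + 1) : p ∣ (2 * n + 1).choose n := by
  have hv : 1 ≤ v := by
    by_contra h
    interval_cases v
    simp at h1
  have hb : Nat.log p (2 * n + 1) < v + 1 := by
    apply Nat.log_lt_of_lt_pow (by omega)
    have : p ^ (v + 1) = p ^ v * p := pow_succ p v
    nlinarith [hp.two_le]
  have hmult := hp.emultiplicity_choose (k := n) (n := 2 * n + 1) (b := v + 1)
    (by omega) hb
  have hmem : v ∈ (Finset.Ico 1 (v + 1)).filter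
      fun i => p ^ i ≤ n % p ^ i + (2 * n + 1 - n) % p ^ i := by
    rw [Finset.mem_filter, Finset.mem_Ico]
    refine ⟨⟨hv, by omega⟩, ?_⟩
    have h3 : 2 * n + 1 - n = n + 1 := by omega
    rw [h3, Nat.mod_eq_of_lt (by omega), Nat.mod_eq_of_lt h1]
    omega
  have hcard : 1 ≤ ((Finset.Ico 1 (v + 1)).filter
      fun i => p ^ i ≤ n % p ^ i + (2 * n + 1 - n) % p ^ i).card :=
    Finset.card_pos.2 ⟨v, hmem⟩
  have : (1 : ℕ∞) ≤ emultiplicity p ((2 * n + 1).choose n) := by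
    rw [hmult]
    exact_mod_cast hcard
  simpa using pow_dvd_of_le_emultiplicity this

lemma my_odd_dvd (n : ℕ) (hn : 1 ≤ n) :
    Finset.lcm (Finset.Icc 1 (2 * n + 1)) id ∣
      Finset.lcm (Finset.Icc 1 (n + 1)) id * (2 * n + 1).choose n := by
  apply Finset.lcm_dvd
  intro k hk
  rw [Finset.mem_Icc] at hk
  obtain ⟨hk1, hk2⟩ := hk
  simp only [id]
  by_cases hbig : ∃ p, p.Prime ∧ n + 1 < p ^ (k.factorization p)
  · obtain ⟨p, hp, hpv⟩ := hbig
    set v := k.factorization p with hv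
    have hdvd : p ^ v ∣ k := Nat.ordProj_dvd k p
    have hkp : k = p ^ v := by
      obtain ⟨m, hm⟩ := hdvd
      rcases m with _ | _ | m
      · omega
      · omega
      · exfalso; nlinarith
    have hv1 : 1 ≤ v := by
      by_contra h
      interval_cases v
      simp at hpv
    have hple : p ^ (v - 1) ≤ n := by
      have : p ^ v = p ^ (v - 1) * p := by
        rw [← pow_succ]; congr 1; omega
      nlinarith [hp.two_le, Nat.one_le_two_pow (n := v - 1),
        Nat.one_le_iff_ne_zero.2 (pow_ne_zero (v-1) hp.pos.ne')]
    have h1 : p ^ (v - 1) ∣ Finset.lcm (Finset.Icc 1 (n + 1)) id :=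
      my_dvd_L (Nat.one_le_iff_ne_zero.2 (pow_ne_zero _ hp.pos.ne')) (by omega)
    have h2 : p ∣ (2 * n + 1).choose n := my_prime_dvd_choose hp hpv (by omega)
    have : k = p ^ (v - 1) * p := by
      rw [hkp, ← pow_succ]; congr 1; omega
    rw [this]
    exact mul_dvd_mul h1 h2
  · push_neg at hbig
    have h1 : k ∣ Finset.lcm (Finset.Icc 1 (n + 1)) id := by
      rw [← Nat.factorization_le_iff_dvd (by omega) (my_L_pos (n + 1)).ne',
        Finsupp.le_def]
      intro p
      by_cases hp : p.Prime
      · have hle : p ^ (k.factorization p) ≤ n + 1 := by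
          have := hbig p hp; omega
        have : p ^ (k.factorization p) ∣ Finset.lcm (Finset.Icc 1 (n + 1)) id :=
          my_dvd_L (Nat.one_le_iff_ne_zero.2 (pow_ne_zero _ hp.pos.ne')) hle
        exact (Nat.Prime.pow_dvd_iff_le_factorization hp (my_L_pos (n + 1)).ne').1 this
      · simp [Nat.factorization_eq_zero_of_not_prime k hp]
    exact h1.trans (dvd_mul_right _ _)

lemma my_lcm_le_four_pow (m : ℕ) : Finset.lcm (Finset.Icc 1 m) id ≤ 4 ^ m := by
  induction m using Nat.strong_induction_on with
  | _ m ih =>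
    match m with
    | 0 => simp
    | 1 => simp [Finset.Icc_self]
    | 2 =>
      have : Finset.Icc 1 2 = {1, 2} := by decide
      rw [this]; simp [Finset.lcm_insert, Finset.lcm_singleton]
    | (m + 3) =>
      rcases Nat.even_or_odd (m + 3) with ⟨t, ht⟩ | ⟨t, ht⟩
      · -- even: m + 3 = 2t, t ≥ 2
        have ht2 : 2 ≤ t := by omega
        have hdvd : Finset.lcm (Finset.Icc 1 (m + 3)) id ∣
            2 * Finset.lcm (Finset.Icc 1 (m + 2)) id := by
          apply Finset.lcm_dvd
          intro k hk
          rw [Finset.mem_Icc] at hk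
          simp only [id]
          rcases Nat.lt_or_ge k (m + 3) with h | h
          · exact dvd_mul_of_dvd_right (my_dvd_L hk.1 (by omega)) 2
          · have hk3 : k = 2 * t := by omega
            rw [hk3]
            exact mul_dvd_mul_left 2 (my_dvd_L (by omega) (by omega))
        have hle := Nat.le_of_dvd (Nat.mul_pos two_pos (my_L_pos (m + 2))) hdvd
        have ih2 := ih (m + 2) (by omega)
        calc Finset.lcm (Finset.Icc 1 (m + 3)) id
            ≤ 2 * Finset.lcm (Finset.Icc 1 (m + 2)) id := hle
          _ ≤ 2 * 4 ^ (m + 2) := by omega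
          _ ≤ 4 ^ (m + 3) := by ring_nf; nlinarith [pow_pos (by norm_num : (0:ℕ) < 4) m]
      · -- odd: m + 3 = 2t + 1, t ≥ 1
        have ht1 : 1 ≤ t := by omega
        rw [ht]
        have hdvd := my_odd_dvd t ht1
        have hle := Nat.le_of_dvd (Nat.mul_pos (my_L_pos (t + 1))
          (Nat.choose_pos (by omega))) hdvd
        have ih1 := ih (t + 1) (by omega)
        have hch : (2 * t + 1).choose t ≤ 4 ^ t := Nat.choose_middle_le_pow t
        calc Finset.lcm (Finset.Icc 1 (2 * t + 1)) id
            ≤ Finset.lcm (Finset.Icc 1 (t + 1)) id * (2 * t + 1).choose t := hle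
          _ ≤ 4 ^ (t + 1) * 4 ^ t := Nat.mul_le_mul ih1 hch
          _ = 4 ^ (2 * t + 1) := by rw [← pow_add]; ring_nf

theorem stmt_1 (n : ℕ) (hn : 1 ≤ n) :
    Finset.lcm (Finset.Icc 1 n) id ≤ 4 ^ n := my_lcm_le_four_pow n
end

section
/- For all positive integers m and n with m ≤ n, the product m * C(n, m) divides lcm(1, 2, ..., n), where C(n, m) is the binomial coefficient. -/
open Nat Finset

lemma key_carry {p n k : ℕ} (hp : p.Prime) (hk : k ≠ 0) (hkn : k ≤ n) :
    emultiplicity p (Nat.choose n k) + emultiplicity p k ≤ (Nat.log p n : ℕ∞) := by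
  set L := Nat.log p n with hL
  have hdisj :
      Disjoint {i ∈ Ico 1 (L + 1) | p ^ i ≤ k % p ^ i + (n - k) % p ^ i}
        {i ∈ Ico 1 (L + 1) | p ^ i ∣ k} := by
    simp +contextual [Finset.disjoint_right, Nat.dvd_iff_mod_eq_zero,
      Nat.mod_lt _ (pow_pos hp.pos _)]
  rw [hp.emultiplicity_choose hkn (Nat.lt_succ_self _),
    Nat.emultiplicity_eq_card_pow_dvd hp.ne_one hk.bot_lt
      (Nat.lt_succ_of_le (Nat.log_mono_right hkn)), ← Nat.cast_add, Nat.cast_le,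
    ← Finset.card_union_of_disjoint hdisj, Finset.filter_union_right]
  have h := (Ico 1 (L + 1)).card_filter_le
    fun x => p ^ x ≤ k % p ^ x + (n - k) % p ^ x ∨ p ^ x ∣ k
  rwa [Nat.card_Ico, Nat.add_sub_cancel] at h

theorem stmt_2 (m n : ℕ) (hm : 0 < m) (hmn : m ≤ n) :
    m * Nat.choose n m ∣ Finset.lcm (Finset.Icc 1 n) id := by
  rw [Nat.dvd_iff_prime_pow_dvd_dvd]
  intro p a hp hdvd
  have hp' : p.Prime := hp
  have hn : 0 < n := hm.trans_le hmn
  have hle : (a : ℕ∞) ≤ (Nat.log p n : ℕ∞) := by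
    calc (a : ℕ∞) ≤ emultiplicity p (m * Nat.choose n m) :=
          le_emultiplicity_of_pow_dvd hdvd
      _ = emultiplicity p m + emultiplicity p (Nat.choose n m) := emultiplicity_mul hp'.prime
      _ ≤ (Nat.log p n : ℕ∞) := by rw [add_comm]; exact key_carry hp' hm.ne' hmn
  have ha' : a ≤ Nat.log p n := by exact_mod_cast hle
  have hpan : p ^ a ≤ n :=
    le_trans (Nat.pow_le_pow_right hp'.pos ha') (Nat.pow_log_le_self p hn.ne')
  exact Finset.dvd_lcm (by
    simp only [Finset.mem_Icc]
    exact ⟨Nat.one_le_iff_ne_zero.mpr (pow_ne_zero _ hp'.pos.ne'), hpan⟩)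
end

section
/- For every positive integer n, lcm(1, 2, ..., n) = lcm(1·C(n,1), 2·C(n,2), ..., n·C(n,n)). -/
open Nat Finset

lemma key_s3 {p n k : ℕ} (hp : p.Prime) (hk : 1 ≤ k) (hkn : k ≤ n) :
    (Nat.choose n k).factorization p + k.factorization p ≤ Nat.log p n := by
  set a := k.factorization p with ha_def
  have ha : p ^ a ∣ k := Nat.ordProj_dvd k p
  have ha_le : a ≤ Nat.log p n :=
    Nat.le_log_of_pow_le hp.one_lt ((Nat.le_of_dvd hk ha).trans hkn)
  have hsub : ({i ∈ Ico 1 (Nat.log p n + 1) | p ^ i ≤ k % p ^ i + (n - k) % p ^ i} : Finset ℕ)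
      ⊆ Ico (a + 1) (Nat.log p n + 1) := by
    intro i hi
    simp only [Finset.mem_filter, Finset.mem_Ico] at hi ⊢
    obtain ⟨⟨hi1, hi2⟩, hle⟩ := hi
    refine ⟨?_, hi2⟩
    by_contra h
    push_neg at h
    have hdvd : p ^ i ∣ k := dvd_trans (pow_dvd_pow p (by omega)) ha
    have hmod : k % p ^ i = 0 := Nat.eq_zero_of_dvd_of_lt hdvd |> fun _ => Nat.mod_eq_zero_of_dvd hdvd
    have hlt : (n - k) % p ^ i < p ^ i := Nat.mod_lt _ (pow_pos hp.pos i)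
    omega
  have hcard : ({i ∈ Ico 1 (Nat.log p n + 1) | p ^ i ≤ k % p ^ i + (n - k) % p ^ i} : Finset ℕ).card
      ≤ Nat.log p n - a := by
    calc _ ≤ (Ico (a + 1) (Nat.log p n + 1)).card := Finset.card_le_card hsub
    _ = Nat.log p n - a := by rw [Nat.card_Ico]; omega
  have hchoose : (Nat.choose n k).factorization p ≤ Nat.log p n - a := by
    rw [factorization_def _ hp, @padicValNat_def _ ⟨hp⟩ _ (choose_pos hkn).ne']
    rw [← Nat.cast_le (α := ℕ∞), ← FiniteMultiplicity.emultiplicity_eq_multiplicity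
      (Nat.finiteMultiplicity_iff.2 ⟨hp.ne_one, choose_pos hkn⟩)]
    rw [hp.emultiplicity_choose hkn (lt_add_one _)]
    exact_mod_cast hcard
  omega

theorem stmt_3 (n : ℕ) (hn : 0 < n) :
    Finset.lcm (Finset.Icc 1 n) id
      = Finset.lcm (Finset.Icc 1 n) (fun k => k * Nat.choose n k) := by
  apply Nat.dvd_antisymm
  · apply Finset.lcm_dvd
    intro k hk
    simp only [Finset.mem_Icc] at hk
    exact dvd_trans (dvd_mul_right k _) (Finset.dvd_lcm (by simp [Finset.mem_Icc]; omega))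
  · apply Finset.lcm_dvd
    intro k hk
    simp only [Finset.mem_Icc] at hk
    have hL0 : Finset.lcm (Finset.Icc 1 n) (id : ℕ → ℕ) ≠ 0 := by
      rw [Ne, Finset.lcm_eq_zero_iff]
      simp only [Set.mem_image, Finset.mem_coe, Finset.mem_Icc, id_eq]
      rintro ⟨x, ⟨hx1, _⟩, hx0⟩
      omega
    have hk0 : k * Nat.choose n k ≠ 0 :=
      Nat.mul_ne_zero (by omega) (Nat.choose_pos hk.2).ne'
    show k * Nat.choose n k ∣ _
    rw [← Nat.factorization_le_iff_dvd hk0 hL0]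
    intro p
    by_cases hp : p.Prime
    · rw [Nat.factorization_mul (show k ≠ 0 by omega) (Nat.choose_pos hk.2).ne']
      simp only [Finsupp.coe_add, Pi.add_apply]
      have h1 : k.factorization p + (Nat.choose n k).factorization p ≤ Nat.log p n := by
        have := key_s3 hp hk.1 hk.2
        omega
      refine le_trans h1 ?_
      have hdvd : p ^ Nat.log p n ∣ Finset.lcm (Finset.Icc 1 n) (id : ℕ → ℕ) := by
        apply Finset.dvd_lcm (f := (id : ℕ → ℕ)) (b := p ^ Nat.log p n)
        simp only [Finset.mem_Icc]
        exact ⟨Nat.one_le_pow _ _ hp.pos, Nat.pow_log_le_self p (by omega)⟩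
      have := (Nat.Prime.pow_dvd_iff_le_factorization hp hL0).1 hdvd
      simpa using this
    · simp [Nat.factorization_eq_zero_of_not_prime _ hp]
end

section
/- For every natural number n, lcm(C(n,0), C(n,1), ..., C(n,n)) = lcm(1, 2, ..., n+1) / (n+1). -/
open Finset Nat

/-- lcm distributes over constant multiplication on nonempty finsets (in ℕ). -/
lemma aux_lcm_mul_left {s : Finset ℕ} (hs : s.Nonempty) (c : ℕ) (f : ℕ → ℕ) :
    s.lcm (fun k => c * f k) = c * s.lcm f := by
  induction hs using Finset.Nonempty.cons_induction with
  | singleton a => simp [Finset.lcm_singleton, normalize_eq]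
  | cons a s ha hs ih =>
      rw [Finset.cons_eq_insert, Finset.lcm_insert, Finset.lcm_insert, ih]
      simpa [normalize_eq] using lcm_mul_left (α := ℕ) c (f a) (s.lcm f)

lemma aux_prod_fact (k : ℕ) : ∀ r : ℕ, k ! * ∏ i ∈ range r, (k + 1 + i) = (k + r)! := by
  intro r
  induction r with
  | zero => simp
  | succ r ih =>
      rw [Finset.prod_range_succ, ← mul_assoc, ih,
        show k + (r + 1) = (k + r) + 1 by omega, Nat.factorial_succ]
      ring

/-- the partial fraction identity over ℚ. -/
lemma aux_partial (m : ℕ) : ∀ x : ℚ, 0 < x →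
    ∑ i ∈ range (m + 1), (-1 : ℚ) ^ i * (m.choose i) / (x + i)
      = (m ! : ℚ) / ∏ i ∈ range (m + 1), (x + i) := by
  induction m with
  | zero => intro x hx; simp
  | succ m ih =>
      intro x hx
      have hProdpos : ∀ (y : ℚ), 0 < y → ∀ r : ℕ, (0:ℚ) < ∏ i ∈ range r, (y + i) := by
        intro y hy r
        apply Finset.prod_pos
        intro i _
        positivity
      have hP : (0:ℚ) < ∏ i ∈ range (m + 1), (x + i) := hProdpos x hx _
      have hP' : (0:ℚ) < ∏ i ∈ range (m + 1), (x + 1 + i) := hProdpos (x+1) (by linarith) _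
      have hQ1 : ∏ i ∈ range (m + 1 + 1), (x + i)
          = (∏ i ∈ range (m + 1), (x + i)) * (x + ((m:ℚ)+1)) := by
        rw [Finset.prod_range_succ]
        push_cast
        ring
      have hQ2 : ∏ i ∈ range (m + 1 + 1), (x + i)
          = x * ∏ i ∈ range (m + 1), (x + 1 + i) := by
        rw [Finset.prod_range_succ']
        have hc : ∀ i ∈ range (m+1), x + ((i+1:ℕ):ℚ) = (x+1) + i := by
          intro i _; push_cast; ring
        rw [Finset.prod_congr rfl hc]
        push_cast
        ring
      -- expand the sum
      rw [Finset.sum_range_succ']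
      have hterm : ∀ i ∈ range (m + 1),
          (-1 : ℚ) ^ (i+1) * (((m+1).choose (i+1) : ℕ) : ℚ) / (x + ((i+1 : ℕ) : ℚ))
            = (-((-1 : ℚ) ^ i * (m.choose i) / ((x+1) + i)))
              + (-((-1 : ℚ) ^ i * (m.choose (i+1)) / (x + ((i+1 : ℕ) : ℚ)))) := by
        intro i _
        have h1 : (x:ℚ) + 1 + i ≠ 0 := by positivity
        have h2 : (x:ℚ) + ((i:ℚ)+1) ≠ 0 := by positivity
        rw [Nat.choose_succ_succ]
        push_cast
        field_simp
        ring
      rw [Finset.sum_congr rfl hterm, Finset.sum_add_distrib]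
      have h1 : ∑ i ∈ range (m + 1), (-((-1 : ℚ) ^ i * (m.choose i) / ((x+1) + i)))
          = - ((m ! : ℚ) / ∏ i ∈ range (m + 1), (x + 1 + i)) := by
        rw [← ih (x+1) (by linarith), ← Finset.sum_neg_distrib]
      have h2 : (∑ i ∈ range (m + 1), (-((-1 : ℚ) ^ i * (m.choose (i+1)) / (x + ((i+1:ℕ):ℚ)))))
            + (-1:ℚ)^(0:ℕ) * (((m+1).choose 0 : ℕ) : ℚ) / (x + ((0:ℕ):ℚ))
          = (m ! : ℚ) / ∏ i ∈ range (m + 1), (x + i) := by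
        have hz : ∑ i ∈ range (m + 1), (-((-1 : ℚ) ^ i * (m.choose (i+1)) / (x + ((i+1:ℕ):ℚ))))
            = ∑ i ∈ range m, (-1:ℚ) ^ (i+1) * ((m.choose (i+1) : ℕ) : ℚ) / (x + ((i+1:ℕ):ℚ)) := by
          rw [Finset.sum_range_succ]
          simp only [Nat.choose_succ_self, Nat.cast_zero, mul_zero, zero_div, neg_zero, add_zero]
          apply Finset.sum_congr rfl
          intro i _
          ring
        rw [hz, ← ih x hx, Finset.sum_range_succ']
        norm_num
      rw [h1, add_assoc, h2, hQ1]
      have hfact : (((m+1)! : ℕ) : ℚ) = ((m:ℚ)+1) * (m ! : ℚ) := by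
        rw [Nat.factorial_succ]
        push_cast
        ring
      rw [hfact]
      have hQ : (∏ i ∈ range (m+1), (x+(i:ℚ))) * (x + ((m:ℚ)+1))
          = x * ∏ i ∈ range (m+1), (x+1+(i:ℚ)) := by
        rw [← hQ1, hQ2]
      field_simp
      linear_combination (-1 : ℚ) * hQ

lemma aux_key (n k : ℕ) (hk : k ≤ n) :
    (n + 1) * n.choose k ∣ (Finset.Icc 1 (n + 1)).lcm id := by
  set L := (Finset.Icc 1 (n + 1)).lcm id with hL
  set m := n - k with hm
  have hmem : ∀ i ∈ range (m + 1), (k + 1 + i) ∣ L := by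
    intro i hi
    have h : k + 1 + i ∈ Finset.Icc 1 (n + 1) := by
      simp only [Finset.mem_Icc]
      simp only [Finset.mem_range] at hi
      omega
    exact Finset.dvd_lcm h
  have hchpos : 0 < n.choose k := Nat.choose_pos hk
  -- the rational partial fraction identity, specialized
  have hsum : ∑ i ∈ range (m + 1), (-1 : ℚ) ^ i * (m.choose i) / (((k:ℚ) + 1) + i)
      = 1 / (((n:ℚ) + 1) * (n.choose k : ℚ)) := by
    rw [aux_partial m ((k:ℚ) + 1) (by positivity)]
    have hprod : (k ! : ℚ) * ∏ i ∈ range (m + 1), (((k:ℚ) + 1) + i) = ((n+1)! : ℚ) := by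
      have h := aux_prod_fact k (m + 1)
      have hkm : k + (m + 1) = n + 1 := by omega
      rw [hkm] at h
      calc (k ! : ℚ) * ∏ i ∈ range (m + 1), (((k:ℚ) + 1) + i)
          = ((k ! * ∏ i ∈ range (m + 1), (k + 1 + i) : ℕ) : ℚ) := by push_cast; ring
        _ = ((n+1)! : ℚ) := by rw [h]
    have hch : ((n+1) * n.choose k * (k ! * m !) : ℕ) = (n+1)! := by
      have h := Nat.choose_mul_factorial_mul_factorial hk
      rw [Nat.factorial_succ, ← h, hm]
      ring
    have hPne : (∏ i ∈ range (m + 1), (((k:ℚ) + 1) + i)) ≠ 0 := by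
      apply _root_.ne_of_gt
      apply Finset.prod_pos
      intro i _
      positivity
    rw [div_eq_div_iff hPne (by positivity)]
    have hcq : ((n:ℚ) + 1) * (n.choose k : ℚ) * ((k ! : ℚ) * (m ! : ℚ)) = ((n+1)! : ℚ) := by
      exact_mod_cast hch
    have hk0 : (k ! : ℚ) ≠ 0 := by positivity
    apply mul_left_cancel₀ hk0
    linear_combination hcq - hprod
  -- the integer witness
  set z : ℤ := ∑ i ∈ range (m + 1),
      (-1 : ℤ) ^ i * (m.choose i : ℤ) * ((L / (k + 1 + i) : ℕ) : ℤ) with hz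
  have hzq : (z : ℚ) = (L : ℚ) / (((n:ℚ) + 1) * (n.choose k : ℚ)) := by
    have hcast : (z : ℚ) = ∑ i ∈ range (m + 1),
        (-1 : ℚ) ^ i * (m.choose i : ℚ) * ((L / (k + 1 + i) : ℕ) : ℚ) := by
      rw [hz]
      push_cast
      rfl
    rw [hcast]
    have hstep : ∀ i ∈ range (m + 1),
        (-1 : ℚ) ^ i * (m.choose i : ℚ) * ((L / (k + 1 + i) : ℕ) : ℚ)
          = (L : ℚ) * ((-1 : ℚ) ^ i * (m.choose i : ℚ) / (((k:ℚ) + 1) + i)) := by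
      intro i hi
      have hd : ((L / (k + 1 + i) : ℕ) : ℚ) = (L : ℚ) / ((k + 1 + i : ℕ) : ℚ) := by
        rw [Nat.cast_div (hmem i hi)]
        positivity
      rw [hd]
      push_cast
      ring
    rw [Finset.sum_congr rfl hstep, ← Finset.mul_sum, hsum]
    ring
  have hAne : (((n:ℚ) + 1) * (n.choose k : ℚ)) ≠ 0 := by positivity
  have hLq : (L : ℚ) = (((n + 1) * n.choose k : ℕ) : ℚ) * (z : ℚ) := by
    rw [hzq]
    push_cast
    field_simp
  have hLz : (L : ℤ) = ((n + 1) * n.choose k : ℕ) * z := by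
    exact_mod_cast hLq
  have : ((( n + 1) * n.choose k : ℕ) : ℤ) ∣ (L : ℤ) := Dvd.intro z (by linarith [hLz])
  exact_mod_cast this

theorem stmt_4 (n : ℕ) :
    Finset.lcm (Finset.range (n + 1)) (fun k => Nat.choose n k)
      = Finset.lcm (Finset.Icc 1 (n + 1)) id / (n + 1) := by
  have hne : (Finset.range (n + 1)).Nonempty := ⟨0, by simp⟩
  have key : (n + 1) * (Finset.range (n + 1)).lcm (fun k => n.choose k)
      = (Finset.Icc 1 (n + 1)).lcm id := by
    rw [← aux_lcm_mul_left hne]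
    apply Nat.dvd_antisymm
    · apply Finset.lcm_dvd
      intro k hk
      simp only [Finset.mem_range] at hk
      exact aux_key n k (by omega)
    · apply Finset.lcm_dvd
      intro j hj
      simp only [Finset.mem_Icc] at hj
      have hj1 : j - 1 ∈ Finset.range (n + 1) := by
        simp only [Finset.mem_range]; omega
      have hdvd : j ∣ (n + 1) * n.choose (j - 1) := by
        have h := Nat.add_one_mul_choose_eq n (j - 1)
        rw [show j - 1 + 1 = j by omega] at h
        exact ⟨(n + 1).choose j, by rw [h, mul_comm]⟩
      exact dvd_trans hdvd (Finset.dvd_lcm hj1)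
  rw [← key, Nat.mul_div_cancel_left _ (Nat.succ_pos n)]
end

section
/- Let n ≥ 0 and let p be a prime. Write n in base p as n = c_N p^N + ... + c_1 p + c_0 with c_N ≠ 0. If n = p^(N+1) - 1 then max over 0 ≤ k ≤ n of the p-adic valuation of C(n,k) equals 0; otherwise it equals N - min{i : c_i ≠ p-1}, and this maximum is attained at k = p^N - 1. -/
private lemma aux_geom (p : ℕ) (hp : 1 ≤ p) (i : ℕ) :
    ∑ j ∈ Finset.range i, (p - 1) * p ^ j = p ^ i - 1 := by
  induction i with
  | zero => simp
  | succ i ih =>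
    rw [Finset.sum_range_succ, ih]
    have h1 : 1 ≤ p ^ i := Nat.one_le_pow _ _ (by omega)
    have h2 : (p - 1) * p ^ i = p * p ^ i - p ^ i := by
      rw [Nat.sub_mul, one_mul]
    have h3 : p ^ (i + 1) = p * p ^ i := by rw [pow_succ]; ring
    have h4 : p ^ i ≤ p * p ^ i := Nat.le_mul_of_pos_left _ (by omega)
    omega

private lemma aux_sum_lt (p : ℕ) (hp : 1 < p) (c : ℕ → ℕ) (hdig : ∀ i, c i < p) (i : ℕ) :
    ∑ j ∈ Finset.range i, c j * p ^ j < p ^ i := by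
  have h1 : ∑ j ∈ Finset.range i, c j * p ^ j ≤ ∑ j ∈ Finset.range i, (p - 1) * p ^ j := by
    apply Finset.sum_le_sum
    intro j _
    exact Nat.mul_le_mul_right _ (by have := hdig j; omega)
  have h2 := aux_geom p (by omega) i
  have h3 : 1 ≤ p ^ i := Nat.one_le_pow _ _ (by omega)
  omega

private lemma aux_eq_iff (p : ℕ) (hp : 1 < p) (c : ℕ → ℕ) (hdig : ∀ i, c i < p) (i : ℕ) :
    (∑ j ∈ Finset.range i, c j * p ^ j = p ^ i - 1) ↔ ∀ j < i, c j = p - 1 := by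
  constructor
  · intro h
    by_contra hcon
    push_neg at hcon
    obtain ⟨j, hj, hcj⟩ := hcon
    have hlt : ∑ j ∈ Finset.range i, c j * p ^ j < ∑ j ∈ Finset.range i, (p - 1) * p ^ j := by
      apply Finset.sum_lt_sum
      · intro j _
        exact Nat.mul_le_mul_right _ (by have := hdig j; omega)
      · refine ⟨j, Finset.mem_range.mpr hj, ?_⟩
        exact (Nat.mul_lt_mul_right (Nat.pow_pos (by omega))).mpr
          (by have := hdig j; omega)
    rw [aux_geom p (by omega) i] at hlt
    omega
  · intro h
    rw [← aux_geom p (by omega) i]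
    apply Finset.sum_congr rfl
    intro j hj
    rw [h j (Finset.mem_range.mp hj)]

private lemma aux_dvd_iff (m n : ℕ) (hm : 0 < m) : m ∣ n + 1 ↔ n % m = m - 1 := by
  constructor
  · rintro ⟨q, hq⟩
    have hq1 : 1 ≤ q := by
      rcases Nat.eq_zero_or_pos q with h | h
      · subst h; rw [Nat.mul_zero] at hq; omega
      · exact h
    have hmq : m * q = m * (q - 1) + m := by
      conv_lhs => rw [← Nat.sub_add_cancel hq1]
      rw [Nat.mul_succ]
    have hn : n = m * (q - 1) + (m - 1) := by omega
    rw [hn, Nat.mul_add_mod, Nat.mod_eq_of_lt (by omega)]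
  · intro h
    refine ⟨n / m + 1, ?_⟩
    have := Nat.div_add_mod n m
    rw [Nat.mul_add, Nat.mul_one]
    omega

private lemma aux_nocarry {a b m : ℕ} (ha : a < m) (hb : b < m) (hmod : (a + b) % m = m - 1) :
    a + b < m := by
  by_contra h
  push_neg at h
  have h2 : a + b - m < m := by omega
  rw [Nat.mod_eq_sub_mod h, Nat.mod_eq_of_lt h2] at hmod
  omega

theorem stmt_5 (p : ℕ) (hp : p.Prime) (n N : ℕ) (c : ℕ → ℕ)
    (hdig : ∀ i, c i < p)
    (hrep : n = ∑ i ∈ Finset.range (N + 1), c i * p ^ i)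
    (hcN : c N ≠ 0) :
    padicValNat p (Nat.choose n (p ^ N - 1))
        = (if n = p ^ (N + 1) - 1 then 0 else N - sInf {i | c i ≠ p - 1}) ∧
    ∀ k ≤ n, padicValNat p (Nat.choose n k)
        ≤ padicValNat p (Nat.choose n (p ^ N - 1)) := by
  haveI : Fact p.Prime := ⟨hp⟩
  have hp1 : 1 < p := hp.one_lt
  -- basic bounds
  have hnlt : n < p ^ (N + 1) := by
    rw [hrep]; exact aux_sum_lt p hp1 c hdig (N + 1)
  have hpN1 : 1 ≤ p ^ N := Nat.one_le_pow _ _ (by omega)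
  have hpNn : p ^ N ≤ n := by
    have h1 : p ^ N ≤ c N * p ^ N :=
      Nat.le_mul_of_pos_left _ (Nat.pos_of_ne_zero hcN)
    have h2 : c N * p ^ N ≤ ∑ i ∈ Finset.range (N + 1), c i * p ^ i :=
      Finset.single_le_sum (f := fun i => c i * p ^ i) (fun i _ => Nat.zero_le _)
        (Finset.mem_range.mpr (Nat.lt_succ_self N))
    omega
  have hk0 : p ^ N - 1 ≤ n := by omega
  have hn0 : n ≠ 0 := by omega
  have hlog : Nat.log p n < N + 2 := Nat.log_lt_of_lt_pow hn0 (by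
    calc n < p ^ (N + 1) := hnlt
      _ ≤ p ^ (N + 2) := Nat.pow_le_pow_right (by omega) (by omega))
  -- digits mod lemma
  have hmod : ∀ i ≤ N + 1, n % p ^ i = ∑ j ∈ Finset.range i, c j * p ^ j := by
    intro i hi
    have hsplit : n = (∑ j ∈ Finset.range i, c j * p ^ j)
        + ∑ j ∈ Finset.Ico i (N + 1), c j * p ^ j := by
      rw [hrep]
      simp only [Finset.range_eq_Ico]
      exact (Finset.sum_Ico_consecutive _ (Nat.zero_le i) hi).symm
    have hdvd : p ^ i ∣ ∑ j ∈ Finset.Ico i (N + 1), c j * p ^ j := by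
      apply Finset.dvd_sum
      intro j hj
      exact Dvd.dvd.mul_left (pow_dvd_pow p (Finset.mem_Ico.mp hj).1) _
    obtain ⟨t, ht⟩ := hdvd
    rw [hsplit, ht, Nat.add_mul_mod_self_left,
      Nat.mod_eq_of_lt (aux_sum_lt p hp1 c hdig i)]
  -- divisibility of n+1 by p^i characterization
  have hdvd_iff : ∀ i ≤ N + 1, (p ^ i ∣ n + 1 ↔ ∀ j < i, c j = p - 1) := by
    intro i hi
    rw [aux_dvd_iff _ _ (Nat.pow_pos (by omega)), hmod i hi,
      aux_eq_iff p hp1 c hdig i]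
  -- carry analysis at i = N+1: never a carry
  have hcarry_top : ∀ k ≤ n, ¬ p ^ (N + 1) ≤ k % p ^ (N + 1) + (n - k) % p ^ (N + 1) := by
    intro k hk
    rw [Nat.mod_eq_of_lt (by omega), Nat.mod_eq_of_lt (by omega)]
    omega
  -- k0 = p^N - 1 facts
  have hk0mod : ∀ i, 1 ≤ i → i ≤ N → (p ^ N - 1) % p ^ i = p ^ i - 1 := by
    intro i _ hi
    rw [← aux_dvd_iff _ _ (Nat.pow_pos (by omega))]
    rw [Nat.sub_add_cancel hpN1]
    exact pow_dvd_pow p hi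
  have hnk0mod : ∀ i, i ≤ N → (n - (p ^ N - 1)) % p ^ i = (n + 1) % p ^ i := by
    intro i hi
    obtain ⟨t, ht⟩ := pow_dvd_pow p hi
    have : n + 1 = (n - (p ^ N - 1)) + p ^ i * t := by rw [← ht]; omega
    rw [this, Nat.add_mul_mod_self_left]
  -- carry condition for k0 at 1 ≤ i ≤ N
  have hcarry_k0 : ∀ i, 1 ≤ i → i ≤ N →
      ((p ^ i ≤ (p ^ N - 1) % p ^ i + (n - (p ^ N - 1)) % p ^ i) ↔ ¬ p ^ i ∣ n + 1) := by
    intro i h1 h2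
    rw [hk0mod i h1 h2, hnk0mod i h2]
    have hpi : 1 ≤ p ^ i := Nat.one_le_pow _ _ (by omega)
    have hdm : p ^ i ∣ n + 1 ↔ (n + 1) % p ^ i = 0 := Nat.dvd_iff_mod_eq_zero
    have hml : (n + 1) % p ^ i < p ^ i := Nat.mod_lt _ (by omega)
    omega
  -- value of the valuation at k0
  have hval := padicValNat_choose (p := p) hk0 hlog
  by_cases hall : ∀ j ≤ N, c j = p - 1
  · -- n = p^(N+1) - 1 case
    have hneq : n = p ^ (N + 1) - 1 := by
      rw [hrep, ← aux_geom p (by omega) (N + 1)]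
      apply Finset.sum_congr rfl
      intro j hj
      rw [hall j (by have := Finset.mem_range.mp hj; omega)]
    have hdvdall : ∀ i ≤ N + 1, p ^ i ∣ n + 1 := by
      intro i hi
      rw [hdvd_iff i hi]
      intro j hj
      exact hall j (by omega)
    -- no carries for any k
    have hnone : ∀ k ≤ n, padicValNat p (Nat.choose n k) = 0 := by
      intro k hk
      rw [padicValNat_choose (p := p) hk hlog]
      convert Finset.card_empty
      rw [Finset.filter_eq_empty_iff]
      intro i hi
      obtain ⟨h1, h2⟩ := Finset.mem_Ico.mp hi
      rcases Nat.lt_or_ge i (N + 1) with hiN | hiN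
      · have hmodn : n % p ^ i = p ^ i - 1 := by
          rw [← aux_dvd_iff _ _ (Nat.pow_pos (by omega))]
          exact hdvdall i (by omega)
        intro hcar
        have hka : k % p ^ i < p ^ i := Nat.mod_lt _ (Nat.pow_pos (by omega))
        have hkb : (n - k) % p ^ i < p ^ i := Nat.mod_lt _ (Nat.pow_pos (by omega))
        have hsum : (k % p ^ i + (n - k) % p ^ i) % p ^ i = p ^ i - 1 := by
          rw [← Nat.add_mod, Nat.add_sub_cancel' hk, hmodn]
        have := aux_nocarry hka hkb hsum
        omega
      · have : i = N + 1 := by omega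
        subst this
        exact hcarry_top k hk
    constructor
    · rw [hnone _ hk0, if_pos hneq]
    · intro k hk
      rw [hnone _ hk, hnone _ hk0]
  · -- nontrivial case
    push_neg at hall
    have hSne : {i | c i ≠ p - 1}.Nonempty := by
      obtain ⟨j, _, hj⟩ := hall
      exact ⟨j, hj⟩
    set m := sInf {i | c i ≠ p - 1} with hm
    have hcm : c m ≠ p - 1 := Nat.sInf_mem hSne
    have hmin : ∀ j < m, c j = p - 1 := by
      intro j hj
      by_contra hc
      have hj2 : m ≤ j := Nat.sInf_le (show j ∈ {i | c i ≠ p - 1} from hc)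
      omega
    have hmN : m ≤ N := by
      obtain ⟨j, hjN, hj⟩ := hall
      have : m ≤ j := Nat.sInf_le (show j ∈ {i | c i ≠ p - 1} from hj)
      omega
    -- divisibility char: for i ≤ N+1, p^i ∣ n+1 ↔ i ≤ m
    have hdvd_m : ∀ i ≤ N + 1, (p ^ i ∣ n + 1 ↔ i ≤ m) := by
      intro i hi
      rw [hdvd_iff i hi]
      constructor
      · intro h
        by_contra hc
        exact hcm (h m (by omega))
      · intro h j hj
        exact hmin j (by omega)
    -- n ≠ p^(N+1) - 1
    have hneq : n ≠ p ^ (N + 1) - 1 := by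
      intro h
      have hd : p ^ (m + 1) ∣ n + 1 := by
        have h1 : 1 ≤ p ^ (N + 1) := Nat.one_le_pow _ _ (by omega)
        rw [h, Nat.sub_add_cancel h1]
        exact pow_dvd_pow p (by omega)
      rw [hdvd_m (m + 1) (by omega)] at hd
      omega
    -- compute the filter set for k0
    have hset : (Finset.Ico 1 (N + 2)).filter
        (fun i => p ^ i ≤ (p ^ N - 1) % p ^ i + (n - (p ^ N - 1)) % p ^ i)
        = Finset.Ico (m + 1) (N + 1) := by
      ext i
      simp only [Finset.mem_filter, Finset.mem_Ico]
      constructor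
      · rintro ⟨⟨h1, h2⟩, hcar⟩
        have hiN : i ≤ N := by
          by_contra hc
          have : i = N + 1 := by omega
          subst this
          exact hcarry_top _ hk0 hcar
        rw [hcarry_k0 i h1 hiN] at hcar
        rw [hdvd_m i (by omega)] at hcar
        omega
      · rintro ⟨h1, h2⟩
        refine ⟨⟨by omega, by omega⟩, ?_⟩
        rw [hcarry_k0 i (by omega) (by omega), hdvd_m i (by omega)]
        omega
    have hvalk0 : padicValNat p (Nat.choose n (p ^ N - 1)) = N - m := by
      rw [hval, hset, Nat.card_Ico]; omega
    constructor
    · rw [hvalk0, if_neg hneq]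
    · intro k hk
      rw [hvalk0, padicValNat_choose (p := p) hk hlog]
      calc ((Finset.Ico 1 (N + 2)).filter
            (fun i => p ^ i ≤ k % p ^ i + (n - k) % p ^ i)).card
          ≤ (Finset.Ico (m + 1) (N + 1)).card := by
            apply Finset.card_le_card
            intro i hi
            obtain ⟨hmem, hcar⟩ := Finset.mem_filter.mp hi
            obtain ⟨h1, h2⟩ := Finset.mem_Ico.mp hmem
            have hiN : i ≤ N := by
              by_contra hc
              have : i = N + 1 := by omega
              subst this
              exact hcarry_top k hk hcar
            -- show m + 1 ≤ i
            have him : m + 1 ≤ i := by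
              by_contra hc
              have hile : i ≤ m := by omega
              have hdvd : p ^ i ∣ n + 1 := (hdvd_m i (by omega)).mpr hile
              have hmodn : n % p ^ i = p ^ i - 1 := by
                rw [← aux_dvd_iff _ _ (Nat.pow_pos (by omega))]
                exact hdvd
              have hka : k % p ^ i < p ^ i := Nat.mod_lt _ (Nat.pow_pos (by omega))
              have hkb : (n - k) % p ^ i < p ^ i := Nat.mod_lt _ (Nat.pow_pos (by omega))
              have hsum : (k % p ^ i + (n - k) % p ^ i) % p ^ i = p ^ i - 1 := by
                rw [← Nat.add_mod, Nat.add_sub_cancel' hk, hmodn]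
              have := aux_nocarry hka hkb hsum
              omega
            exact Finset.mem_Ico.mpr ⟨him, by omega⟩
        _ = N - m := by rw [Nat.card_Ico]; omega
end

section
/- Let (u_k) be an arithmetic progression of integers with common difference r ≥ 1 and first term u_0 ≥ 1 with gcd(u_0, r) = 1. Then for every natural number n, lcm(u_0, u_1, ..., u_n) is a multiple of (u_0 u_1 ⋯ u_n) / n!. -/
open Finset

/-- Counting lemma: the number of k in [0,n] with m ∣ u₀ + k*r is at most n/m + 1,
when gcd(m,r)=1 and m ≥ 1. -/
lemma count_sol_aux (m u₀ r n : ℕ) (hm : 1 ≤ m) (hcop : Nat.Coprime m r) :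
    ((Finset.range (n+1)).filter (fun k => m ∣ u₀ + k * r)).card ≤ n / m + 1 := by
  have h : ((Finset.range (n+1)).filter (fun k => m ∣ u₀ + k * r)).card
      ≤ (Finset.range (n / m + 1)).card := by
    apply Finset.card_le_card_of_injOn (fun k => k / m)
    · intro k hk
      simp only [Finset.mem_coe, mem_filter, mem_range] at hk
      simp only [Finset.mem_coe, mem_range]
      have : k / m ≤ n / m := Nat.div_le_div_right (by omega)
      omega
    · have key : ∀ k₁ k₂ : ℕ, k₁ < n + 1 → m ∣ u₀ + k₁ * r → k₂ < n + 1 →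
          m ∣ u₀ + k₂ * r → k₁ / m = k₂ / m → k₁ ≤ k₂ → k₁ = k₂ := by
        intro k₁ k₂ hk₁ hm₁ hk₂ hm₂ hq hle
        have hd : m ∣ (k₂ - k₁) * r := by
          have he : (u₀ + k₂ * r) - (u₀ + k₁ * r) = (k₂ - k₁) * r := by
            rw [Nat.sub_mul]; omega
          rw [← he]
          exact Nat.dvd_sub hm₂ hm₁
        have hd2 : m ∣ k₂ - k₁ := hcop.dvd_of_dvd_mul_right hd
        have e1 : k₁ = m * (k₁ / m) + k₁ % m := (Nat.div_add_mod k₁ m).symm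
        rw [hq] at e1
        have e2 : k₂ = m * (k₂ / m) + k₂ % m := (Nat.div_add_mod k₂ m).symm
        have hlt1 : k₁ % m < m := Nat.mod_lt _ (by omega)
        have hlt2 : k₂ % m < m := Nat.mod_lt _ (by omega)
        have hsub : k₂ - k₁ < m := by omega
        have := Nat.eq_zero_of_dvd_of_lt hd2 hsub
        omega
      intro k₁ h₁ k₂ h₂ hq
      simp only [Finset.coe_filter, Set.mem_setOf_eq, mem_range] at h₁ h₂
      rcases le_total k₁ k₂ with hle | hle
      · exact key k₁ k₂ h₁.1 h₁.2 h₂.1 h₂.2 hq hle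
      · exact (key k₂ k₁ h₂.1 h₂.2 h₁.1 h₁.2 hq.symm hle).symm
  simpa using h

/-- The p-adic valuation of N equals the number of j in [1,B) with p^j ∣ N,
provided B is large enough. -/
lemma fact_card_aux (p : ℕ) (hp : p.Prime) (N B : ℕ) (hN : N ≠ 0)
    (hB : N.factorization p < B) :
    N.factorization p = ((Finset.Ico 1 B).filter (fun j => p ^ j ∣ N)).card := by
  have h : (Finset.Ico 1 B).filter (fun j => p ^ j ∣ N)
      = Finset.Ico 1 (N.factorization p + 1) := by
    ext j
    simp only [mem_filter, mem_Ico, hp.pow_dvd_iff_le_factorization hN]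
    omega
  rw [h, Nat.card_Ico]
  omega

theorem stmt_7 (u₀ r : ℕ) (hr : 1 ≤ r) (hu : 1 ≤ u₀) (hgcd : Nat.gcd u₀ r = 1)
    (n : ℕ) :
    (∏ k ∈ Finset.range (n + 1), (u₀ + k * r))
      ∣ Nat.factorial n * Finset.lcm (Finset.range (n + 1)) (fun k => u₀ + k * r) := by
  set f : ℕ → ℕ := fun k => u₀ + k * r with hf
  set s : Finset ℕ := Finset.range (n + 1) with hs
  have hfpos : ∀ k, 0 < f k := fun k => by simp only [hf]; omega
  have hfne : ∀ k ∈ s, f k ≠ 0 := fun k _ => (hfpos k).ne'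
  set L : ℕ := s.lcm f with hL
  have hLne : L ≠ 0 := by
    rw [hL, Ne, Finset.lcm_eq_zero_iff]
    rintro ⟨k, _, hk⟩
    exact (hfpos k).ne' hk
  have hfdvdL : ∀ k ∈ s, f k ∣ L := fun k hk => Finset.dvd_lcm hk
  have hPne : (∏ k ∈ s, f k) ≠ 0 := Finset.prod_ne_zero_iff.mpr hfne
  have hRne : n.factorial * L ≠ 0 := mul_ne_zero (Nat.factorial_pos n).ne' hLne
  rw [← Nat.factorization_le_iff_dvd hPne hRne]
  intro p
  by_cases hp : p.Prime
  swap
  · simp [Nat.factorization_eq_zero_of_not_prime _ hp]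
  rw [Nat.factorization_mul (Nat.factorial_pos n).ne' hLne, Finsupp.add_apply,
    Nat.factorization_prod hfne, Finset.sum_apply']
  by_cases hpr : p ∣ r
  · -- p divides r, so p divides no term
    have hz : ∀ k ∈ s, (f k).factorization p = 0 := by
      intro k _
      apply Nat.factorization_eq_zero_of_not_dvd
      intro hd
      have hkr : p ∣ k * r := Dvd.dvd.mul_left hpr k
      have hpu : p ∣ u₀ := by
        have := Nat.dvd_sub hd hkr
        simpa [hf] using this
      have : p ∣ Nat.gcd u₀ r := Nat.dvd_gcd hpu hpr
      rw [hgcd] at this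
      exact hp.one_lt.ne' (Nat.dvd_one.mp this)
    rw [Finset.sum_eq_zero hz]
    exact Nat.zero_le _
  · -- Main case: p does not divide r
    have hcop : Nat.Coprime p r := (Nat.Prime.coprime_iff_not_dvd hp).mpr hpr
    set B : ℕ := L.factorization p + 1 with hB
    -- Step 1: write each valuation as a count
    have step1 : ∀ k ∈ s, (f k).factorization p
        = ((Finset.Ico 1 B).filter (fun j => p ^ j ∣ f k)).card := by
      intro k hk
      apply fact_card_aux p hp _ _ (hfne k hk)
      have : (f k).factorization ≤ L.factorization :=
        (Nat.factorization_le_iff_dvd (hfne k hk) hLne).mpr (hfdvdL k hk)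
      have := this p
      omega
    rw [Finset.sum_congr rfl step1]
    -- Step 2: swap the sums
    have step2 : ∑ k ∈ s, ((Finset.Ico 1 B).filter (fun j => p ^ j ∣ f k)).card
        = ∑ j ∈ Finset.Ico 1 B, (s.filter (fun k => p ^ j ∣ f k)).card := by
      simp only [Finset.card_filter]
      exact Finset.sum_comm
    rw [step2]
    -- Step 3: bound each inner count
    have step3 : ∀ j ∈ Finset.Ico 1 B, (s.filter (fun k => p ^ j ∣ f k)).card
        ≤ n / p ^ j + (if p ^ j ∣ L then 1 else 0) := by
      intro j hj
      rcases (s.filter (fun k => p ^ j ∣ f k)).eq_empty_or_nonempty with he | hne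
      · simp [he]
      · obtain ⟨k, hk⟩ := hne
        simp only [mem_filter] at hk
        have hdL : p ^ j ∣ L := hk.2.trans (hfdvdL k hk.1)
        rw [if_pos hdL]
        exact count_sol_aux (p ^ j) u₀ r n (Nat.one_le_iff_ne_zero.mpr
          (pow_ne_zero j hp.pos.ne')) (Nat.Coprime.pow_left j hcop)
    calc ∑ j ∈ Finset.Ico 1 B, (s.filter (fun k => p ^ j ∣ f k)).card
        ≤ ∑ j ∈ Finset.Ico 1 B, (n / p ^ j + (if p ^ j ∣ L then 1 else 0)) :=
          Finset.sum_le_sum step3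
      _ = (∑ j ∈ Finset.Ico 1 B, n / p ^ j)
          + ∑ j ∈ Finset.Ico 1 B, (if p ^ j ∣ L then 1 else 0) :=
          Finset.sum_add_distrib
      _ ≤ (n.factorial).factorization p + L.factorization p := by
          gcongr
          · -- Legendre
            set b : ℕ := max B (Nat.log p n + 1) with hb
            have hfact : (n.factorial).factorization p = ∑ i ∈ Finset.Ico 1 b, n / p ^ i := by
              rw [Nat.factorization_def _ hp]
              haveI := Fact.mk hp
              exact padicValNat_factorial (by omega)
            rw [hfact]
            exact Finset.sum_le_sum_of_subset (Finset.Ico_subset_Ico le_rfl (by omega))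
          · rw [← Finset.card_filter]
            rw [fact_card_aux p hp L B hLne (by omega)]
end

section
/- Let (u_k) be an arithmetic progression of integers with common difference r ≥ 1 and first term u_0 ≥ 1 with gcd(u_0, r) = 1. Then for every natural number n, lcm(u_0, u_1, ..., u_n) ≥ u_0 (1+r)^n. -/
open Finset Nat

/-- In an AP with difference coprime to `p^e`, the number of terms among `k+1`
consecutive ones divisible by `p^e` is at most `k / p^e + 1`. -/
private lemma farhi_card_ap {p r a k e : ℕ} (hp : p.Prime) (hpr : ¬ p ∣ r) :
    #{j ∈ range (k + 1) | p ^ e ∣ a + j * r} ≤ k / p ^ e + 1 := by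
  set S := {j ∈ range (k + 1) | p ^ e ∣ a + j * r} with hSdef
  rcases S.eq_empty_or_nonempty with h | h
  · simp [h]
  have hpe : 0 < p ^ e := pow_pos hp.pos e
  have hj0S : S.min' h ∈ S := S.min'_mem h
  set j0 := S.min' h with hj0
  have hsub : S ⊆ (range (k / p ^ e + 1)).image (fun t => j0 + p ^ e * t) := by
    intro j hj
    have hj0le : j0 ≤ j := S.min'_le j hj
    simp only [hSdef, mem_filter, mem_range] at hj hj0S
    have hd : p ^ e ∣ (j - j0) * r := by
      have h1 := Nat.dvd_sub hj.2 hj0S.2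
      have heq : (a + j * r) - (a + j0 * r) = j * r - j0 * r := by omega
      rw [heq, ← Nat.sub_mul] at h1
      exact h1
    have hcop : Nat.Coprime (p ^ e) r :=
      ((Nat.Prime.coprime_iff_not_dvd hp).mpr hpr).pow_left e
    obtain ⟨t, ht⟩ := hcop.dvd_of_dvd_mul_right hd
    simp only [mem_image, mem_range]
    refine ⟨t, Nat.lt_succ_of_le ((Nat.le_div_iff_mul_le hpe).2 ?_), by omega⟩
    rw [mul_comm]
    omega
  calc S.card ≤ _ := Finset.card_le_card hsub
    _ ≤ (range (k / p ^ e + 1)).card := Finset.card_image_le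
    _ = k / p ^ e + 1 := by simp

/-- Farhi's divisibility lemma: the product of `k+1` consecutive terms of the AP
divides `k !` times the lcm. -/
private lemma farhi_dvd (u₀ r : ℕ) (hr : 1 ≤ r) (hu : 1 ≤ u₀) (hgcd : Nat.gcd u₀ r = 1)
    (m k n : ℕ) (hmk : m + k ≤ n) :
    (∏ j ∈ range (k + 1), (u₀ + (m + j) * r)) ∣
      k ! * Finset.lcm (range (n + 1)) (fun i => u₀ + i * r) := by
  set L := Finset.lcm (range (n + 1)) (fun i => u₀ + i * r) with hL
  have hpos : ∀ i : ℕ, 0 < u₀ + i * r := fun i => by omega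
  have hL0 : L ≠ 0 := by
    intro h
    rw [hL, Finset.lcm_eq_zero_iff] at h
    obtain ⟨i, -, hi⟩ := h
    omega
  have hA0 : (∏ j ∈ range (k + 1), (u₀ + (m + j) * r)) ≠ 0 :=
    Finset.prod_ne_zero_iff.mpr fun j _ => (hpos _).ne'
  have hB0 : k ! * L ≠ 0 := mul_ne_zero (factorial_ne_zero k) hL0
  rw [← Nat.factorization_le_iff_dvd hA0 hB0]
  rw [Finsupp.le_def]
  intro p
  by_cases hp : p.Prime
  swap
  · simp [Nat.factorization_eq_zero_of_not_prime _ hp]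
  rw [Nat.factorization_prod (fun j _ => (hpos (m + j)).ne'), Nat.factorization_mul
    (factorial_ne_zero k) hL0]
  simp only [Finset.sum_apply', Finsupp.add_apply]
  by_cases hpr : p ∣ r
  · -- p divides r, so p divides no term
    have hz : ∀ j, (u₀ + (m + j) * r).factorization p = 0 := by
      intro j
      apply Nat.factorization_eq_zero_of_not_dvd
      intro hdvd
      have hpu : p ∣ u₀ := by
        have h2 : p ∣ (m + j) * r := hpr.mul_left _
        have := Nat.dvd_sub hdvd h2
        simpa using this
      have : p ∣ 1 := hgcd ▸ Nat.dvd_gcd hpu hpr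
      exact hp.ne_one (Nat.dvd_one.mp this)
    simp [hz]
  · -- the main case
    set T := u₀ + (m + k) * r with hT
    have hkT : k ≤ T := by
      have : m + k ≤ (m + k) * r := Nat.le_mul_of_pos_right _ hr
      omega
    have hstep : ∀ j ∈ range (k + 1),
        (u₀ + (m + j) * r).factorization p
          = #{e ∈ Icc 1 T | p ^ e ∣ u₀ + (m + j) * r} := by
      intro j hj
      simp only [mem_range] at hj
      have hle : u₀ + (m + j) * r ≤ p ^ T := by
        have h1 : u₀ + (m + j) * r ≤ T := by
          have : (m + j) * r ≤ (m + k) * r := Nat.mul_le_mul_right r (by omega)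
          omega
        calc u₀ + (m + j) * r ≤ T := h1
          _ ≤ 2 ^ T := le_of_lt (Nat.lt_two_pow_self)
          _ ≤ p ^ T := Nat.pow_le_pow_left hp.two_le T
      rw [Nat.factorization_eq_card_pow_dvd _ hp,
        Nat.Ico_filter_pow_dvd_eq hp (hpos _).ne' hle]
    rw [Finset.sum_congr rfl hstep]
    -- swap the double counting
    have hswap : (∑ j ∈ range (k + 1), #{e ∈ Icc 1 T | p ^ e ∣ u₀ + (m + j) * r})
        = ∑ e ∈ Icc 1 T, #{j ∈ range (k + 1) | p ^ e ∣ u₀ + (m + j) * r} := by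
      simp only [Finset.card_filter]
      exact Finset.sum_comm
    rw [hswap]
    set N : ℕ → ℕ := fun e => #{j ∈ range (k + 1) | p ^ e ∣ u₀ + (m + j) * r} with hN
    have hbound : ∀ e ∈ Icc 1 T, N e ≤ k / p ^ e + (if N e ≠ 0 then 1 else 0) := by
      intro e _
      by_cases h0 : N e = 0
      · simp [h0]
      · simp only [h0, if_true, ne_eq, not_false_eq_true, if_pos]
        have hfilt : {j ∈ range (k + 1) | p ^ e ∣ u₀ + (m + j) * r}
            = {j ∈ range (k + 1) | p ^ e ∣ (u₀ + m * r) + j * r} := by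
          apply Finset.filter_congr
          intro j _
          rw [show u₀ + (m + j) * r = (u₀ + m * r) + j * r from by ring]
        simp only [hN]
        rw [hfilt]
        exact farhi_card_ap hp hpr
    calc (∑ e ∈ Icc 1 T, N e)
        ≤ ∑ e ∈ Icc 1 T, (k / p ^ e + (if N e ≠ 0 then 1 else 0)) :=
          Finset.sum_le_sum hbound
      _ = (∑ e ∈ Icc 1 T, k / p ^ e) + #{e ∈ Icc 1 T | N e ≠ 0} := by
          rw [Finset.sum_add_distrib, Finset.card_filter]
      _ ≤ (k !).factorization p + L.factorization p := by
          apply Nat.add_le_add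
          · -- Legendre
            have hlog : Nat.log p k < T + 1 := lt_of_le_of_lt (Nat.log_le_self p k)
              (by omega)
            have hdvd : p ^ (∑ e ∈ Ico 1 (T + 1), k / p ^ e) ∣ k ! :=
              (Nat.Prime.pow_dvd_factorial_iff hp hlog).mpr le_rfl
            have := (Nat.Prime.pow_dvd_iff_le_factorization hp
              (factorial_ne_zero k)).mp hdvd
            calc (∑ e ∈ Icc 1 T, k / p ^ e)
                = ∑ e ∈ Ico 1 (T + 1), k / p ^ e := by
                  rw [← Finset.Ico_add_one_right_eq_Icc]
              _ ≤ (k !).factorization p := this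
          · -- e's with a witness are at most v_p(L)
            have hsub : {e ∈ Icc 1 T | N e ≠ 0} ⊆ Icc 1 (L.factorization p) := by
              intro e he
              simp only [mem_filter, mem_Icc] at he
              obtain ⟨⟨he1, _⟩, hne⟩ := he
              obtain ⟨j, hjmem⟩ := Finset.card_pos.mp (Nat.pos_of_ne_zero hne)
              simp only [mem_filter, mem_range] at hjmem
              have hdvdL : (u₀ + (m + j) * r) ∣ L := by
                apply Finset.dvd_lcm
                simp only [mem_range]
                omega
              have hpe : p ^ e ∣ L := hjmem.2.trans hdvdL
              have := (Nat.Prime.pow_dvd_iff_le_factorization hp hL0).mp hpe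
              simp [mem_Icc, he1, this]
            calc #{e ∈ Icc 1 T | N e ≠ 0} ≤ (Icc 1 (L.factorization p)).card :=
                Finset.card_le_card hsub
              _ = L.factorization p := by simp

/-- The Hong–Feng choice of a window: for each `n` there is a window of `k+1`
terms ending at `u_n` whose product is at least `k ! * u₀ * (1+r)^n`. -/
private lemma farhi_choice (u₀ r : ℕ) (hr : 1 ≤ r) (hu : 1 ≤ u₀) (n : ℕ) :
    ∃ m k, m + k = n ∧
      k ! * (u₀ * (1 + r) ^ n) ≤ ∏ j ∈ range (k + 1), (u₀ + (m + j) * r) := by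
  induction n with
  | zero => exact ⟨0, 0, rfl, by simp⟩
  | succ n ih =>
    obtain ⟨m, k, hmk, h⟩ := ih
    by_cases hc : k + 1 ≤ u₀ + m * r
    · refine ⟨m, k + 1, by omega, ?_⟩
      rw [Finset.prod_range_succ]
      have h2 : (k + 1) * (1 + r) ≤ u₀ + (m + (k + 1)) * r := by nlinarith
      calc (k + 1)! * (u₀ * (1 + r) ^ (n + 1))
          = (k ! * (u₀ * (1 + r) ^ n)) * ((k + 1) * (1 + r)) := by
            rw [factorial_succ]; ring
        _ ≤ (∏ j ∈ range (k + 1), (u₀ + (m + j) * r)) * (u₀ + (m + (k + 1)) * r) :=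
            Nat.mul_le_mul h h2
    · push_neg at hc
      refine ⟨m + 1, k, by omega, ?_⟩
      -- rewrite the two products around a common core
      have hold : (∏ j ∈ range (k + 1), (u₀ + (m + j) * r))
          = (u₀ + m * r) * ∏ j ∈ range k, (u₀ + (m + 1 + j) * r) := by
        rw [Finset.prod_range_succ']
        simp only [Nat.add_zero]
        rw [mul_comm]
        congr 1
        apply Finset.prod_congr rfl
        intro j _
        ring_nf
      have hnew : (∏ j ∈ range (k + 1), (u₀ + (m + 1 + j) * r))
          = (∏ j ∈ range k, (u₀ + (m + 1 + j) * r)) * (u₀ + (m + 1 + k) * r) := by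
        rw [Finset.prod_range_succ]
      have h2 : (1 + r) * (u₀ + m * r) ≤ u₀ + (m + 1 + k) * r := by nlinarith
      have hupos : 0 < u₀ + m * r := by omega
      apply Nat.le_of_mul_le_mul_right _ hupos
      calc k ! * (u₀ * (1 + r) ^ (n + 1)) * (u₀ + m * r)
          = (k ! * (u₀ * (1 + r) ^ n)) * ((1 + r) * (u₀ + m * r)) := by ring
        _ ≤ ((u₀ + m * r) * ∏ j ∈ range k, (u₀ + (m + 1 + j) * r))
              * (u₀ + (m + 1 + k) * r) := by
            rw [← hold]; exact Nat.mul_le_mul h h2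
        _ = (∏ j ∈ range (k + 1), (u₀ + (m + 1 + j) * r)) * (u₀ + m * r) := by
            rw [hnew]; ring

theorem stmt_8 (u₀ r : ℕ) (hr : 1 ≤ r) (hu : 1 ≤ u₀) (hgcd : Nat.gcd u₀ r = 1)
    (n : ℕ) :
    u₀ * (1 + r) ^ n ≤ Finset.lcm (Finset.range (n + 1)) (fun k => u₀ + k * r) := by
  obtain ⟨m, k, hmk, hA⟩ := farhi_choice u₀ r hr hu n
  have hdvd := farhi_dvd u₀ r hr hu hgcd m k n (le_of_eq hmk)
  set L := Finset.lcm (Finset.range (n + 1)) (fun i => u₀ + i * r) with hL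
  have hL0 : L ≠ 0 := by
    intro h
    rw [hL, Finset.lcm_eq_zero_iff] at h
    obtain ⟨i, -, hi⟩ := h
    omega
  have hP : (∏ j ∈ range (k + 1), (u₀ + (m + j) * r)) ≤ k ! * L :=
    Nat.le_of_dvd (Nat.pos_of_ne_zero (mul_ne_zero (factorial_ne_zero k) hL0)) hdvd
  exact Nat.le_of_mul_le_mul_left (hA.trans hP) (factorial_pos k)
end

section
/- For all positive integers c, m, n with m ≤ n, lcm(m²+c, (m+1)²+c, ..., n²+c) ≥ m · C(n, m). -/
open Finset

lemma aux_shift_dvd {R : Type*} [CommRing R] (x M : R) :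
    ∀ (N m : ℕ), (∀ k, m ≤ k → k ≤ m + N → (x + (k : R)) ∣ M) →
      (∏ j ∈ Finset.range (N + 1), (x + ((m + j : ℕ) : R))) ∣ M * (N.factorial : R) := by
  intro N
  induction N with
  | zero =>
    intro m h
    simpa using h m le_rfl (by omega)
  | succ N ih =>
    intro m h
    have h1 : (∏ j ∈ Finset.range (N + 1), (x + ((m + j : ℕ) : R))) ∣ M * (N.factorial : R) :=
      ih m (fun k hk hk' => h k hk (by omega))
    have h2 : (∏ j ∈ Finset.range (N + 1), (x + ((m + 1 + j : ℕ) : R))) ∣ M * (N.factorial : R) :=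
      ih (m + 1) (fun k hk hk' => h k (by omega) (by omega))
    have e1 : (∏ j ∈ Finset.range (N + 2), (x + ((m + j : ℕ) : R)))
        = (∏ j ∈ Finset.range (N + 1), (x + ((m + j : ℕ) : R))) * (x + ((m + (N + 1) : ℕ) : R)) :=
      Finset.prod_range_succ _ _
    have e2 : (∏ j ∈ Finset.range (N + 2), (x + ((m + j : ℕ) : R)))
        = (∏ j ∈ Finset.range (N + 1), (x + ((m + 1 + j : ℕ) : R))) * (x + (m : R)) := by
      rw [Finset.prod_range_succ']
      congr 1 <;>
        first
          | rfl
          | exact Finset.prod_congr rfl fun j _ => by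
              rw [show m + (j + 1) = m + 1 + j from by omega]
          | simp
    have key : M * ((N + 1).factorial : R)
        = (M * (N.factorial : R)) * (x + ((m + (N + 1) : ℕ) : R))
          - (M * (N.factorial : R)) * (x + (m : R)) := by
      rw [Nat.factorial_succ]
      push_cast
      ring
    rw [key]
    exact dvd_sub (e1 ▸ mul_dvd_mul h1 dvd_rfl) (e2 ▸ mul_dvd_mul h2 dvd_rfl)

theorem stmt_9 (c m n : ℕ) (hc : 0 < c) (hm : 0 < m) (hmn : m ≤ n) :
    m * Nat.choose n m ≤ Finset.lcm (Finset.Icc m n) (fun k => k ^ 2 + c) := by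
  set L := Finset.lcm (Finset.Icc m n) (fun k => k ^ 2 + c) with hL
  set N := n - m with hN
  have hn : n = m + N := by omega
  have hLpos : 0 < L := by
    rcases Nat.eq_zero_or_pos L with h0 | h
    · exfalso
      rw [hL, Finset.lcm_eq_zero_iff] at h0
      obtain ⟨k, _, hk⟩ := h0
      omega
    · exact h
  set d : ℤ := -(c : ℤ) with hd
  set x : ℤ√d := Zsqrtd.sqrtd with hx
  have hdvd : ∀ k, m ≤ k → k ≤ m + N → (x + (k : ℤ√d)) ∣ ((L : ℕ) : ℤ√d) := by
    intro k hk hk'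
    have h1 : (k ^ 2 + c) ∣ L := by
      rw [hL]
      exact Finset.dvd_lcm (by simp [Finset.mem_Icc]; omega)
    have h2 : (((k ^ 2 + c : ℕ)) : ℤ√d) ∣ ((L : ℕ) : ℤ√d) := Nat.cast_dvd_cast h1
    refine dvd_trans ⟨(k : ℤ√d) - x, ?_⟩ h2
    have hxx : x * x = (d : ℤ√d) := Zsqrtd.dmuld
    rw [show (x + (k : ℤ√d)) * ((k : ℤ√d) - x) = (k : ℤ√d) * (k : ℤ√d) - x * x by ring, hxx]
    push_cast [hd]
    ring
  have hP := aux_shift_dvd x ((L : ℕ) : ℤ√d) N m hdvd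
  obtain ⟨q, hq⟩ := hP
  have hnorm : (∏ j ∈ Finset.range (N + 1), (((m + j : ℕ) : ℤ) ^ 2 + (c : ℤ)))
      ∣ ((L : ℤ) * (N.factorial : ℤ)) ^ 2 := by
    have h1 : Zsqrtd.norm (((L : ℕ) : ℤ√d) * ((N.factorial : ℕ) : ℤ√d))
        = Zsqrtd.norm (∏ j ∈ Finset.range (N + 1), (x + ((m + j : ℕ) : ℤ√d))) * Zsqrtd.norm q := by
      rw [hq, Zsqrtd.norm_mul]
    have h2 : Zsqrtd.norm (∏ j ∈ Finset.range (N + 1), (x + ((m + j : ℕ) : ℤ√d)))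
        = ∏ j ∈ Finset.range (N + 1), (((m + j : ℕ) : ℤ) ^ 2 + (c : ℤ)) := by
      rw [show Zsqrtd.norm (∏ j ∈ Finset.range (N + 1), (x + ((m + j : ℕ) : ℤ√d)))
          = Zsqrtd.normMonoidHom (∏ j ∈ Finset.range (N + 1), (x + ((m + j : ℕ) : ℤ√d))) from rfl,
        map_prod]
      refine Finset.prod_congr rfl fun j _ => ?_
      show Zsqrtd.norm (x + ((m + j : ℕ) : ℤ√d)) = _
      rw [Zsqrtd.norm_def]
      simp [hx, hd]
      try ring
    refine ⟨Zsqrtd.norm q, ?_⟩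
    rw [← h2, ← h1]
    rw [Zsqrtd.norm_mul, Zsqrtd.norm_natCast, Zsqrtd.norm_natCast]
    push_cast
    ring
  have hnatdvd : (∏ j ∈ Finset.range (N + 1), ((m + j) ^ 2 + c)) ∣ (L * N.factorial) ^ 2 := by
    have hcast : ((∏ j ∈ Finset.range (N + 1), ((m + j) ^ 2 + c) : ℕ) : ℤ)
        ∣ (((L * N.factorial) ^ 2 : ℕ) : ℤ) := by
      push_cast
      exact hnorm
    exact_mod_cast hcast
  have hle1 : (∏ j ∈ Finset.range (N + 1), ((m + j) ^ 2 + c)) ≤ (L * N.factorial) ^ 2 :=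
    Nat.le_of_dvd (by positivity) hnatdvd
  have hle2 : (∏ j ∈ Finset.range (N + 1), (m + j)) ^ 2
      ≤ ∏ j ∈ Finset.range (N + 1), ((m + j) ^ 2 + c) := by
    rw [← Finset.prod_pow]
    exact Finset.prod_le_prod (fun _ _ => Nat.zero_le _) (fun j _ => Nat.le_add_right _ _)
  have hprodid : (∏ j ∈ Finset.range (N + 1), (m + j)) = m * Nat.choose n m * N.factorial := by
    have hcancel : (m - 1).factorial * (∏ j ∈ Finset.range (N + 1), (m + j))
        = (m - 1).factorial * (m * Nat.choose n m * N.factorial) := by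
      have hIco : (∏ j ∈ Finset.range (N + 1), (m + j)) = ∏ i ∈ Finset.Ico m (n + 1), i := by
        rw [Finset.prod_Ico_eq_prod_range]
        refine Finset.prod_congr (by congr 1; omega) fun j _ => rfl
      have hconsec : (∏ i ∈ Finset.Ico 1 m, i) * (∏ i ∈ Finset.Ico m (n + 1), i)
          = ∏ i ∈ Finset.Ico 1 (n + 1), i :=
        Finset.prod_Ico_consecutive _ hm (by omega)
      have hf1 : (∏ i ∈ Finset.Ico 1 m, i) = (m - 1).factorial := by
        rw [show m = (m - 1) + 1 by omega]
        simp [Finset.prod_Ico_id_eq_factorial]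
      have hf2 : (∏ i ∈ Finset.Ico 1 (n + 1), i) = n.factorial :=
        Finset.prod_Ico_id_eq_factorial n
      rw [hIco]
      have hlhs : (m - 1).factorial * ∏ i ∈ Finset.Ico m (n + 1), i = n.factorial := by
        rw [← hf1, hconsec, hf2]
      rw [hlhs]
      have hmfac : m.factorial = m * (m - 1).factorial := by
        conv_lhs => rw [show m = (m - 1) + 1 by omega]
        rw [Nat.factorial_succ]
        congr 2
        omega
      calc n.factorial = Nat.choose n m * m.factorial * (n - m).factorial :=
            (Nat.choose_mul_factorial_mul_factorial hmn).symm
        _ = (m - 1).factorial * (m * Nat.choose n m * N.factorial) := by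
            rw [hmfac, hN]; ring
    exact Nat.eq_of_mul_eq_mul_left (Nat.factorial_pos _) hcancel
  have hfinal : (m * Nat.choose n m * N.factorial) ^ 2 ≤ (L * N.factorial) ^ 2 := by
    rw [← hprodid]
    exact le_trans hle2 hle1
  have hfinal2 : m * Nat.choose n m * N.factorial ≤ L * N.factorial :=
    (Nat.pow_le_pow_iff_left (by norm_num)).mp hfinal
  exact Nat.le_of_mul_le_mul_right hfinal2 (Nat.factorial_pos _)
end

section
/- For all positive integers c, m, n with m ≤ ⌈n/2⌉, lcm(m²+c, (m+1)²+c, ..., n²+c) ≥ 2^n. -/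
open Finset Complex Nat

lemma pf_sum : ∀ (N : ℕ) (x : ℂ), (∀ j : ℕ, j ≤ N → x + j ≠ 0) →
    ∑ j ∈ range (N+1), (-1:ℂ)^j * (N.choose j) / (x + j)
      = (N ! : ℂ) / ∏ j ∈ range (N+1), (x + j) := by
  intro N
  induction N with
  | zero => intro x hx; simp
  | succ N IH =>
    intro x hx
    have hx0 : ∀ j : ℕ, j ≤ N → x + j ≠ 0 := fun j hj => hx j (by omega)
    have hx1 : ∀ j : ℕ, j ≤ N → (x+1) + j ≠ 0 := by
      intro j hj
      have := hx (j+1) (by omega)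
      push_cast at this ⊢
      convert this using 1
      ring
    have hxx : x ≠ 0 := by simpa using hx 0 (by omega)
    have hxl : x + (N+1:ℕ) ≠ 0 := hx (N+1) le_rfl
    -- sum manipulation
    have hsum : ∑ j ∈ range (N+2), (-1:ℂ)^j * ((N+1).choose j) / (x + j)
        = (∑ j ∈ range (N+1), (-1:ℂ)^j * (N.choose j) / (x + j))
          - ∑ j ∈ range (N+1), (-1:ℂ)^j * (N.choose j) / ((x+1) + j) := by
      rw [Finset.sum_range_succ' (fun j => (-1:ℂ)^j * ((N+1).choose j) / (x + j)) (N+1)]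
      have e1 : ∀ i ∈ range (N+1), (-1:ℂ)^(i+1) * ((N+1).choose (i+1)) / (x + (i+1:ℕ))
          = -((-1:ℂ)^i * (N.choose i) / ((x+1) + i))
            + -((-1:ℂ)^(i) * (N.choose (i+1)) / (x + ((i+1:ℕ):ℂ))) := by
        intro i _
        rw [Nat.choose_succ_succ]
        push_cast
        rw [show ((x+1)+(i:ℂ)) = x + ((i:ℂ)+1) by ring]
        ring
      rw [Finset.sum_congr rfl e1, Finset.sum_add_distrib]
      have e2 : ∑ i ∈ range (N+1), -((-1:ℂ)^(i) * (N.choose (i+1)) / (x + ((i+1:ℕ):ℂ)))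
          = (∑ j ∈ range (N+1), (-1:ℂ)^j * (N.choose j) / (x + j)) - 1/x := by
        rw [Finset.sum_range_succ' (fun j => (-1:ℂ)^j * (N.choose j) / (x + j)) N]
        rw [Finset.sum_range_succ]
        simp only [Nat.choose_succ_self, Nat.cast_zero, Nat.cast_ofNat]
        push_cast
        have h4 : ∀ i ∈ range N, -((-1:ℂ)^i * (N.choose (i+1)) / (x + ((i:ℂ)+1)))
            = (-1:ℂ)^(i+1) * (N.choose (i+1)) / (x + ((i:ℂ)+1)) := fun i _ => by ring
        rw [Finset.sum_congr rfl h4]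
        simp only [Nat.choose_zero_right, Nat.cast_one]
        ring
      have e3 : ∑ i ∈ range (N+1), -((-1:ℂ)^i * (N.choose i) / ((x+1) + i))
          = -∑ j ∈ range (N+1), (-1:ℂ)^j * (N.choose j) / ((x+1) + j) := by
        rw [← Finset.sum_neg_distrib]
      rw [e2, e3]
      have f0 : (-1:ℂ)^0 * ((N+1).choose 0) / (x + (0:ℕ)) = 1/x := by
        simp
      rw [f0]
      ring
    rw [hsum, IH x hx0, IH (x+1) hx1]
    -- products
    have hA : (∏ j ∈ range (N+1), (x + j)) ≠ 0 :=
      Finset.prod_ne_zero_iff.mpr (fun j hj => hx0 j (Nat.lt_succ_iff.mp (mem_range.mp hj)))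
    have hB : (∏ j ∈ range (N+1), ((x+1) + j)) ≠ 0 :=
      Finset.prod_ne_zero_iff.mpr (fun j hj => hx1 j (Nat.lt_succ_iff.mp (mem_range.mp hj)))
    have hPA : ∏ j ∈ range (N+2), (x + j) = (∏ j ∈ range (N+1), (x + j)) * (x + (N+1:ℕ)) := by
      rw [Finset.prod_range_succ]
    have hPB : ∏ j ∈ range (N+2), (x + j) = x * ∏ j ∈ range (N+1), ((x+1) + j) := by
      rw [Finset.prod_range_succ' (fun j => x + j) (N+1)]
      have : ∀ i ∈ range (N+1), (x + ((i+1:ℕ):ℂ)) = ((x+1) + i) := by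
        intro i _; push_cast; ring
      rw [Finset.prod_congr rfl this]
      push_cast
      ring
    have hxB : x * (∏ j ∈ range (N+1), ((x+1) + j))
        = (∏ j ∈ range (N+1), (x + j)) * (x + (N+1:ℕ)) := by rw [← hPB, hPA]
    rw [div_sub_div _ _ hA hB, hPA, div_eq_div_iff (mul_ne_zero hA hB) (mul_ne_zero hA hxl)]
    rw [Nat.factorial_succ]
    push_cast at hxB ⊢
    linear_combination ((N ! : ℂ) * (∏ j ∈ range (N+1), (x + (j:ℂ)))) * hxB

lemma lcm_sq (c m n : ℕ) (hc : 0 < c) (hmn : m ≤ n) :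
    ∏ k ∈ Icc m n, (k^2+c) ≤ (Finset.lcm (Icc m n) (fun k => k^2+c) * (n-m)!)^2 := by
  set N := n - m with hN
  set L := Finset.lcm (Icc m n) (fun k => k^2+c) with hL
  have hLpos : 0 < L := by
    rcases Nat.eq_zero_or_pos L with h | h
    · exfalso
      rw [hL] at h
      rw [Finset.lcm_eq_zero_iff] at h
      obtain ⟨k, _, hk⟩ := h
      omega
    · exact h
  have hd : ∀ j : ℕ, j ≤ N → ((m+j)^2+c) ∣ L := by
    intro j hj
    exact Finset.dvd_lcm (by simp only [mem_Icc]; omega)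
  set u : ℕ → ℕ := fun j => L / ((m+j)^2+c) with hu'
  have hu : ∀ j : ℕ, j ≤ N → u j * ((m+j)^2+c) = L := by
    intro j hj
    exact Nat.div_mul_cancel (hd j hj)
  set s : ℝ := Real.sqrt c with hs'
  have hs : s^2 = (c:ℝ) := Real.sq_sqrt (by positivity)
  have hspos : 0 < s := Real.sqrt_pos.mpr (by exact_mod_cast hc)
  set z : ℂ := (s : ℂ) * I with hz'
  have hz2 : z^2 = -(c:ℝ) := by
    rw [hz', mul_pow, I_sq]
    push_cast [← hs]
    ring
  set x : ℂ := (m:ℂ) - z with hx'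
  have him : ∀ j : ℕ, (x + j).im = -s := by
    intro j
    simp [hx', hz']
  have hre : ∀ j : ℕ, (x + j).re = (m:ℝ) + j := by
    intro j
    simp [hx', hz']
  have hxj : ∀ j : ℕ, j ≤ N → x + j ≠ 0 := by
    intro j _ h
    have := him j
    rw [h] at this
    simp at this
    linarith
  have key := pf_sum N x hxj
  set Q : ℂ := ∏ j ∈ range (N+1), (x + j) with hQ'
  have hQ : Q ≠ 0 := Finset.prod_ne_zero_iff.mpr
    (fun j hj => hxj j (Nat.lt_succ_iff.mp (mem_range.mp hj)))
  set T₁ : ℤ := ∑ j ∈ range (N+1), (-1:ℤ)^j * (N.choose j : ℤ) * (m+j) * (u j : ℤ) with hT₁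
  set T₂ : ℤ := ∑ j ∈ range (N+1), (-1:ℤ)^j * (N.choose j : ℤ) * (u j : ℤ) with hT₂
  -- main complex identity
  have hterm : ∀ j : ℕ, j ≤ N → (-1:ℂ)^j * (N.choose j) / (x + j) * (L:ℂ)
      = (-1:ℂ)^j * (N.choose j) * (u j : ℂ) * (((m:ℂ)+j) + z) := by
    intro j hj
    rw [div_mul_eq_mul_div, div_eq_iff (hxj j hj)]
    have hLc : (L:ℂ) = (u j : ℂ) * (((m+j)^2 : ℕ) + (c:ℕ)) := by
      rw [← hu j hj]; push_cast; ring
    rw [hLc]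
    have : (((m:ℂ)+j) + z) * (x + j) = ((m:ℂ)+j)^2 + (c:ℝ) := by
      rw [hx']
      have : ((m:ℂ) - z + j) = (((m:ℂ)+j) - z) := by ring
      rw [this]
      rw [show (((m:ℂ)+j) + z) * (((m:ℂ)+j) - z) = ((m:ℂ)+j)^2 - z^2 by ring, hz2]
      ring
    push_cast
    push_cast at this
    linear_combination (-((-1:ℂ)^j * (N.choose j : ℂ) * (u j : ℂ))) * this
  have main : ((T₁:ℂ) + (T₂:ℂ) * z) * Q = (L:ℂ) * (N ! : ℂ) := by
    have h1 : (L:ℂ) * ((N ! : ℂ) / Q) * Q = (L:ℂ) * (N ! :ℂ) := by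
      field_simp
    rw [← h1, ← key]
    congr 1
    rw [mul_comm (L:ℂ), Finset.sum_mul]
    have h2 : ∀ j ∈ range (N+1), (-1:ℂ)^j * (N.choose j) / (x + j) * (L:ℂ)
        = ((-1:ℂ)^j * (N.choose j) * ((m:ℂ)+j) * (u j : ℂ)) + ((-1:ℂ)^j * (N.choose j) * (u j : ℂ)) * z := by
      intro j hj
      rw [hterm j (Nat.lt_succ_iff.mp (mem_range.mp hj))]
      ring
    rw [Finset.sum_congr rfl h2, Finset.sum_add_distrib, ← Finset.sum_mul]
    rw [hT₁, hT₂]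
    push_cast
    ring
  -- take normSq
  have hnsQ : normSq Q = ∏ j ∈ range (N+1), (((m+j)^2 + c : ℕ) : ℝ) := by
    rw [hQ', map_prod]
    apply Finset.prod_congr rfl
    intro j _
    rw [Complex.normSq_apply, him j, hre j]
    push_cast
    rw [← hs]
    ring
  have hnsT : normSq ((T₁:ℂ) + (T₂:ℂ) * z) = ((T₁^2 + T₂^2 * c : ℤ) : ℝ) := by
    rw [Complex.normSq_apply]
    simp [hz']
    push_cast
    rw [← hs]
    ring
  have hnsL : normSq ((L:ℂ) * (N ! : ℂ)) = ((L * N ! : ℕ)^2 : ℝ) := by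
    rw [map_mul]
    simp [Complex.normSq_natCast]
    push_cast
    ring
  have hreal : ((T₁^2 + T₂^2 * c : ℤ) : ℝ) * ∏ j ∈ range (N+1), (((m+j)^2 + c : ℕ) : ℝ)
      = ((L * N ! : ℕ)^2 : ℝ) := by
    rw [← hnsT, ← hnsQ, ← hnsL, ← map_mul, main]
  -- the integer is ≥ 1
  have hPpos : (0:ℝ) < ∏ j ∈ range (N+1), (((m+j)^2 + c : ℕ) : ℝ) := by
    apply Finset.prod_pos
    intro j _
    positivity
  have hq1 : (1:ℝ) ≤ ((T₁^2 + T₂^2 * c : ℤ) : ℝ) := by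
    have hne : (T₁^2 + T₂^2 * c : ℤ) ≠ 0 := by
      intro h0
      rw [h0] at hreal
      simp at hreal
      have hL0 : (0:ℝ) < (L:ℝ) := by exact_mod_cast hLpos
      have hN0 : (0:ℝ) < ((N ! : ℕ):ℝ) := by exact_mod_cast Nat.factorial_pos N
      nlinarith [mul_pos hL0 hN0]
    have hnn : (0:ℤ) ≤ T₁^2 + T₂^2 * c := by positivity
    have : (1:ℤ) ≤ T₁^2 + T₂^2 * c := by omega
    exact_mod_cast this
  have hfin : (∏ j ∈ range (N+1), ((m+j)^2 + c) : ℕ) ≤ (L * N !)^2 := by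
    have h5 : ((∏ j ∈ range (N+1), ((m+j)^2+c) : ℕ) : ℝ) = ∏ j ∈ range (N+1), (((m+j)^2+c : ℕ) : ℝ) :=
      Nat.cast_prod _ _
    have : ((∏ j ∈ range (N+1), ((m+j)^2 + c) : ℕ) : ℝ) ≤ ((L * N ! : ℕ)^2 : ℝ) := by
      rw [h5, ← hreal]
      nlinarith [hPpos, hq1]
    exact_mod_cast this
  -- reindex
  have hre2 : ∏ k ∈ Icc m n, (k^2+c) = ∏ j ∈ range (N+1), ((m+j)^2 + c) := by
    rw [← Finset.Ico_add_one_right_eq_Icc, Finset.prod_Ico_eq_prod_range]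
    have : n + 1 - m = N + 1 := by omega
    rw [this]
  rw [hre2]
  exact hfin

lemma prodD : ∀ n : ℕ, 5 ≤ n → 4^n * ((n - (n+1)/2)!)^2 ≤ ∏ k ∈ Icc ((n+1)/2) n, (k^2+1) := by
  intro n
  induction n using Nat.strong_induction_on with
  | _ n IH =>
    intro hn
    by_cases h7 : n < 7
    · interval_cases n
      · decide
      · decide
    · have h2 : 5 ≤ n - 2 := by omega
      have IH2 := IH (n-2) (by omega) h2
      set p := n - 2 with hp
      set m := (p+1)/2 with hm
      have hnp : n = p + 2 := by omega
      have hmn : (p+2+1)/2 = m + 1 := by omega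
      have hNn : p+2 - (m+1) = (p - m) + 1 := by omega
      have hmp : m ≤ p := by omega
      have hcases : p = 2*m ∨ p = 2*m - 1 := by omega
      have hm3 : 3 ≤ m := by omega
      rw [hnp, hmn, hNn]
      -- split product
      have h1 : ∏ k ∈ Icc m (p+2), (k^2+1) = (m^2+1) * ∏ k ∈ Icc (m+1) (p+2), (k^2+1) := by
        rw [Finset.Icc_add_one_left_eq_Ioc]
        exact (Finset.mul_prod_Ioc_eq_prod_Icc (by omega)).symm
      have h2' : ∏ k ∈ Icc m (p+2), (k^2+1)
          = (∏ k ∈ Icc m p, (k^2+1)) * (((p+1)^2+1) * ((p+2)^2+1)) := by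
        rw [show p+2 = (p+1)+1 from rfl, Finset.prod_Icc_succ_top (by omega : m ≤ (p+1)+1),
          Finset.prod_Icc_succ_top (by omega : m ≤ p+1)]
        ring
      have hsplit : (m^2+1) * ∏ k ∈ Icc (m+1) (p+2), (k^2+1)
          = (∏ k ∈ Icc m p, (k^2+1)) * (((p+1)^2+1) * ((p+2)^2+1)) := h1.symm.trans h2'
      -- step inequality
      have hstep : 16 * ((p - m) + 1)^2 * (m^2+1) ≤ ((p+1)^2+1) * ((p+2)^2+1) := by
        rcases hcases with h | h
        · have hd : p - m = m := by omega
          rw [hd, h]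
          nlinarith [hm3]
        · have hpm : p - m = m - 1 := by omega
          have hm1 : m - 1 + 1 = m := by omega
          rw [hpm, hm1, h]
          have h2m : 2*m - 1 + 1 = 2*m := by omega
          have h2m2 : 2*m - 1 + 2 = 2*m + 1 := by omega
          rw [h2m, h2m2]
          nlinarith [hm3]
      have hfact : (((p - m) + 1)!)^2 = ((p-m)+1)^2 * ((p - m)!)^2 := by
        rw [Nat.factorial_succ]
        ring
      have hchain : (m^2+1) * (4^(p+2) * (((p-m)+1)!)^2) ≤ (m^2+1) * ∏ k ∈ Icc (m+1) (p+2), (k^2+1) := by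
        calc (m^2+1) * (4^(p+2) * (((p-m)+1)!)^2)
            = (4^p * ((p-m)!)^2) * (16 * ((p-m)+1)^2 * (m^2+1)) := by rw [hfact]; ring
          _ ≤ (∏ k ∈ Icc m p, (k^2+1)) * (((p+1)^2+1) * ((p+2)^2+1)) := Nat.mul_le_mul IH2 hstep
          _ = (m^2+1) * ∏ k ∈ Icc (m+1) (p+2), (k^2+1) := hsplit.symm
      exact Nat.le_of_mul_le_mul_left hchain (by positivity)

lemma final_step (L F P n : ℕ) (hF : 0 < F) (h1 : P ≤ (L * F)^2) (h2 : 4^n * F^2 ≤ P) :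
    2^n ≤ L := by
  have e : (2^n * F)^2 = 4^n * F^2 := by
    rw [mul_pow, ← pow_mul, mul_comm n 2, pow_mul]
    norm_num
  have h3 : (2^n * F)^2 ≤ (L * F)^2 := by
    rw [e]; exact le_trans h2 h1
  have h4 : 2^n * F ≤ L * F :=
    (Nat.pow_le_pow_iff_left (by norm_num : 2 ≠ 0)).mp h3
  exact Nat.le_of_mul_le_mul_right h4 hF

theorem stmt_10 (c m n : ℕ) (hc : 0 < c) (hm : 0 < m) (hn : 0 < n)
    (hmn : m ≤ (n + 1) / 2) :
    2 ^ n ≤ Finset.lcm (Finset.Icc m n) (fun k => k ^ 2 + c) := by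
  have hmain : 2^n ≤ Finset.lcm (Finset.Icc ((n+1)/2) n) (fun k => k ^ 2 + c) := by
    rcases Nat.lt_or_ge n 5 with h5 | h5
    · -- small n
      interval_cases n
      · -- n = 1
        show 2^1 ≤ Finset.lcm (Finset.Icc 1 1) (fun k => k ^ 2 + c)
        rw [Finset.Icc_self, Finset.lcm_singleton]
        simp only [normalize_eq]
        omega
      · -- n = 2 : m₀ = 1
        rcases Nat.lt_or_ge c 2 with hc2 | hc2
        · have : c = 1 := by omega
          subst this
          decide
        · apply final_step _ ((2 - (2+1)/2)!) (∏ k ∈ Icc ((2+1)/2) 2, (k^2+c)) 2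
            (Nat.factorial_pos _) (lcm_sq c _ 2 hc (by omega))
          have he : ∏ k ∈ Icc ((2+1)/2) 2, (k^2+c) = (1+c)*(4+c) := by
            show ∏ k ∈ Icc 1 2, (k^2+c) = (1+c)*(4+c)
            rw [show Finset.Icc 1 2 = {1, 2} from rfl]
            rw [Finset.prod_insert (by decide), Finset.prod_singleton]
            norm_num
          rw [he]
          show 4^2 * (1!)^2 ≤ (1+c)*(4+c)
          simp only [Nat.factorial_one]
          nlinarith [hc2]
      · -- n = 3 : m₀ = 2
        rcases Nat.lt_or_ge c 2 with hc2 | hc2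
        · have : c = 1 := by omega
          subst this
          decide
        · apply final_step _ ((3 - (3+1)/2)!) (∏ k ∈ Icc ((3+1)/2) 3, (k^2+c)) 3
            (Nat.factorial_pos _) (lcm_sq c _ 3 hc (by omega))
          have he : ∏ k ∈ Icc ((3+1)/2) 3, (k^2+c) = (4+c)*(9+c) := by
            show ∏ k ∈ Icc 2 3, (k^2+c) = (4+c)*(9+c)
            rw [show Finset.Icc 2 3 = {2, 3} from rfl]
            rw [Finset.prod_insert (by decide), Finset.prod_singleton]
            norm_num
          rw [he]
          show 4^3 * (1!)^2 ≤ (4+c)*(9+c)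
          simp only [Nat.factorial_one]
          nlinarith [hc2]
      · -- n = 4 : m₀ = 2
        rcases Nat.lt_or_ge c 2 with hc2 | hc2
        · have : c = 1 := by omega
          subst this
          decide
        · apply final_step _ ((4 - (4+1)/2)!) (∏ k ∈ Icc ((4+1)/2) 4, (k^2+c)) 4
            (Nat.factorial_pos _) (lcm_sq c _ 4 hc (by omega))
          have he : ∏ k ∈ Icc ((4+1)/2) 4, (k^2+c) = (4+c)*((9+c)*(16+c)) := by
            show ∏ k ∈ Icc 2 4, (k^2+c) = (4+c)*((9+c)*(16+c))
            rw [show Finset.Icc 2 4 = {2, 3, 4} from rfl]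
            rw [Finset.prod_insert (by decide), Finset.prod_insert (by decide),
              Finset.prod_singleton]
            norm_num
          rw [he]
          show 4^4 * (2!)^2 ≤ (4+c)*((9+c)*(16+c))
          show 4^4 * (2*1*1)^2 ≤ (4+c)*((9+c)*(16+c))
          have h6 : 6*(11*18) ≤ (4+c)*((9+c)*(16+c)) :=
            Nat.mul_le_mul (by omega) (Nat.mul_le_mul (by omega) (by omega))
          omega
    · -- n ≥ 5
      apply final_step _ ((n - (n+1)/2)!) (∏ k ∈ Icc ((n+1)/2) n, (k^2+c)) n
        (Nat.factorial_pos _) (lcm_sq c ((n+1)/2) n hc (by omega))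
      calc 4^n * ((n - (n+1)/2)!)^2 ≤ ∏ k ∈ Icc ((n+1)/2) n, (k^2+1) := prodD n h5
        _ ≤ ∏ k ∈ Icc ((n+1)/2) n, (k^2+c) := by
            apply Finset.prod_le_prod'
            intro i _
            omega
  -- lift from (n+1)/2 to m
  have hsub : Finset.Icc ((n+1)/2) n ⊆ Finset.Icc m n := Finset.Icc_subset_Icc hmn le_rfl
  have hdvd : Finset.lcm (Finset.Icc ((n+1)/2) n) (fun k => k ^ 2 + c)
      ∣ Finset.lcm (Finset.Icc m n) (fun k => k ^ 2 + c) :=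
    Finset.lcm_dvd (fun b hb => Finset.dvd_lcm (hsub hb))
  have hpos : 0 < Finset.lcm (Finset.Icc m n) (fun k => k ^ 2 + c) := by
    rcases Nat.eq_zero_or_pos (Finset.lcm (Finset.Icc m n) (fun k => k ^ 2 + c)) with h | h
    · exfalso
      rw [Finset.lcm_eq_zero_iff] at h
      obtain ⟨k, -, hk⟩ := h
      have h0 : 0 < k^2 + c := by positivity
      exact h0.ne' hk
    · exact h
  exact le_trans hmain (Nat.le_of_dvd hpos hdvd)
end

section
/- Let c, m, n be positive integers with m ≤ n. Then c · (n-m)! · (∏_{k=1}^{n-m} (k² + 4c)) · lcm(m²+c, ..., n²+c) is divisible by ∏_{k=m}^{n} (k²+c). -/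
open Finset

private lemma card_dvd_filter_le (L P : ℕ) :
    #((Finset.Icc 1 L).filter (fun d => P ∣ d)) ≤ L / P := by
  have h : Finset.Icc 1 L = Finset.Ioc 0 L := by
    ext x; simp [Finset.mem_Icc, Finset.mem_Ioc]; omega
  rw [h]
  exact le_of_eq (Nat.Ioc_filter_dvd_card_eq_div L P)

private lemma count_le {S T : Finset ℕ} (hS : S.Nonempty)
    (hT : ∀ x ∈ S, ∀ y ∈ S, x < y → y - x ∈ T) : S.card ≤ 1 + T.card := by
  classical
  have hrS : S.min' hS ∈ S := S.min'_mem hS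
  have h1 : (S.erase (S.min' hS)).card ≤ T.card := by
    apply Finset.card_le_card_of_injOn (fun y => y - S.min' hS)
    · intro y hy
      have hyS := Finset.mem_of_mem_erase hy
      have : S.min' hS < y :=
        lt_of_le_of_ne (S.min'_le y hyS) (Ne.symm (Finset.ne_of_mem_erase hy))
      exact hT _ hrS y hyS this
    · intro a ha b hb hab
      have ha' := S.min'_le a (Finset.mem_of_mem_erase ha)
      have hb' := S.min'_le b (Finset.mem_of_mem_erase hb)
      simp only at hab
      omega
  have := Finset.card_erase_of_mem hrS
  omega

private lemma val_eq_card {p x A : ℕ} (pp : p.Prime) (hx : x ≠ 0) (hb : x ≤ p ^ A) :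
    x.factorization p = #((Finset.Icc 1 A).filter (fun i => p ^ i ∣ x)) := by
  rw [Nat.factorization_eq_card_pow_dvd x pp, Nat.Ico_filter_pow_dvd_eq pp hx hb]

private lemma legendre_bound {p : ℕ} (pp : p.Prime) (A L : ℕ) :
    ∑ α ∈ Finset.Icc 1 A, L / p ^ α ≤ (Nat.factorial L).factorization p := by
  haveI : Fact p.Prime := ⟨pp⟩
  rw [Nat.factorization_def _ pp,
    padicValNat_factorial (b := max (A + 1) (Nat.log p L + 1)) (by omega)]
  apply Finset.sum_le_sum_of_subset
  intro i hi
  simp only [Finset.mem_Icc, Finset.mem_Ico] at *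
  omega

-- product of difference and sum
private lemma diff_mul_sum_dvd {p c α x y : ℕ} (hx : p ^ α ∣ x ^ 2 + c)
    (hy : p ^ α ∣ y ^ 2 + c) (hxy : x < y) : p ^ α ∣ (y + x) * (y - x) := by
  have h := Nat.dvd_sub hy hx
  have hle : x ^ 2 ≤ y ^ 2 := Nat.pow_le_pow_left hxy.le 2
  have heq : y ^ 2 + c - (x ^ 2 + c) = y ^ 2 - x ^ 2 := by omega
  rw [heq, Nat.sq_sub_sq] at h
  exact h

-- the key identity, giving divisibility of (y-x)^2 + 4c from dividing y+x
private lemma ident_dvd {p c α x y : ℕ} (hx : p ^ α ∣ x ^ 2 + c)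
    (hxy : x < y) (hs : p ^ α ∣ 2 * (y + x)) (hs2 : p ^ α ∣ (y + x) ^ 2) :
    p ^ α ∣ (y - x) ^ 2 + 4 * c := by
  have hd : ((y - x : ℕ) : ℤ) = (y : ℤ) - x := by
    have := hxy.le; push_cast [Nat.cast_sub this]; ring
  have key : ((p : ℤ)) ^ α ∣ ((y - x) ^ 2 + 4 * c : ℕ) := by
    push_cast [hd]
    have hident : ((y : ℤ) - x) ^ 2 + 4 * c =
        4 * ((x : ℤ) ^ 2 + c) + (2 * ((y : ℤ) + x)) * ((y : ℤ) - x) - ((y : ℤ) + x) ^ 2 := by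
      ring
    rw [hident]
    have h1 : ((p : ℤ)) ^ α ∣ 4 * ((x : ℤ) ^ 2 + c) := by
      have : ((p : ℤ)) ^ α ∣ ((x : ℤ) ^ 2 + c) := by exact_mod_cast Int.natCast_dvd_natCast.2 hx
      exact Dvd.dvd.mul_left this 4
    have h2 : ((p : ℤ)) ^ α ∣ (2 * ((y : ℤ) + x)) * ((y : ℤ) - x) := by
      have : ((p : ℤ)) ^ α ∣ 2 * ((y : ℤ) + x) := by exact_mod_cast Int.natCast_dvd_natCast.2 hs
      exact this.mul_right _
    have h3 : ((p : ℤ)) ^ α ∣ ((y : ℤ) + x) ^ 2 := by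
      exact_mod_cast Int.natCast_dvd_natCast.2 hs2
    exact dvd_sub (dvd_add h1 h2) h3
  exact_mod_cast key

private lemma dich_odd {p c α x y : ℕ} (pp : p.Prime) (hp2 : p ≠ 2) (hpc : ¬p ∣ c)
    (hα : 1 ≤ α) (hx : p ^ α ∣ x ^ 2 + c) (hy : p ^ α ∣ y ^ 2 + c) (hxy : x < y) :
    p ^ α ∣ y - x ∨ p ^ α ∣ (y - x) ^ 2 + 4 * c := by
  have hds := diff_mul_sum_dvd hx hy hxy
  by_cases hpd : p ∣ y - x
  · left
    -- then p does not divide y + x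
    have hps : ¬p ∣ y + x := by
      intro hps
      have h2x : p ∣ 2 * x := by
        have : 2 * x = (y + x) - (y - x) := by omega
        rw [this]; exact Nat.dvd_sub hps hpd
      have hpx : p ∣ x := by
        rcases (Nat.Prime.dvd_mul pp).1 h2x with h | h
        · exact absurd (((Nat.prime_dvd_prime_iff_eq pp Nat.prime_two).1 h)) hp2
        · exact h
      have : p ∣ c := by
        have hpx2 : p ∣ x ^ 2 := dvd_pow hpx (by norm_num)
        have hpxc : p ∣ x ^ 2 + c := dvd_trans (dvd_pow_self p (by omega : α ≠ 0)) hx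
        have : c = (x ^ 2 + c) - x ^ 2 := by omega
        rw [this]; exact Nat.dvd_sub hpxc hpx2
      exact hpc this
    have hcop : Nat.Coprime (p ^ α) (y + x) :=
      Nat.Coprime.pow_left _ ((Nat.Prime.coprime_iff_not_dvd pp).2 hps)
    exact hcop.dvd_of_dvd_mul_left hds
  · right
    have hcop : Nat.Coprime (p ^ α) (y - x) :=
      Nat.Coprime.pow_left _ ((Nat.Prime.coprime_iff_not_dvd pp).2 hpd)
    have hs : p ^ α ∣ y + x := hcop.dvd_of_dvd_mul_right hds
    exact ident_dvd hx hxy (hs.mul_left 2) (dvd_pow hs (by norm_num))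

private lemma dich_two {c α x y : ℕ} (hc : ¬2 ∣ c)
    (hα : 1 ≤ α) (hx : 2 ^ α ∣ x ^ 2 + c) (hy : 2 ^ α ∣ y ^ 2 + c) (hxy : x < y) :
    (2 ≤ α ∧ 2 ^ (α - 1) ∣ y - x) ∨ 2 ^ α ∣ (y - x) ^ 2 + 4 * c := by
  -- x and y are odd
  have hox : ¬ 2 ∣ x := by
    intro h2x
    have h1 : 2 ∣ x ^ 2 + c := dvd_trans (dvd_pow_self 2 (by omega : α ≠ 0)) hx
    have h2 : 2 ∣ x ^ 2 := dvd_pow h2x (by norm_num)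
    have : 2 ∣ c := by
      have : c = (x ^ 2 + c) - x ^ 2 := by omega
      rw [this]; exact Nat.dvd_sub h1 h2
    exact hc this
  have hoy : ¬ 2 ∣ y := by
    intro h2y
    have h1 : 2 ∣ y ^ 2 + c := dvd_trans (dvd_pow_self 2 (by omega : α ≠ 0)) hy
    have h2 : 2 ∣ y ^ 2 := dvd_pow h2y (by norm_num)
    have : 2 ∣ c := by
      have : c = (y ^ 2 + c) - y ^ 2 := by omega
      rw [this]; exact Nat.dvd_sub h1 h2
    exact hc this
  have hdeven : 2 ∣ y - x := by omega
  rcases Nat.eq_or_lt_of_le hα with h1 | hα2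
  · -- α = 1 : right disjunct, trivially
    right
    rw [← h1]
    obtain ⟨e, he⟩ := hdeven
    have : (y - x) ^ 2 + 4 * c = 2 * (2 * e ^ 2 + 2 * c) := by rw [he]; ring
    rw [this]
    simp [pow_one]
  · -- α ≥ 2
    have hα2' : 2 ≤ α := hα2
    have hds := diff_mul_sum_dvd hx hy hxy
    by_cases h4 : 4 ∣ y - x
    · -- v₂(y+x) = 1, so 2^(α-1) ∣ y - x
      left
      refine ⟨hα2', ?_⟩
      obtain ⟨s₁, hs₁⟩ : 2 ∣ y + x := by omega
      have hs₁odd : ¬ 2 ∣ s₁ := by omega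
      have : (2:ℕ) ^ α = 2 * 2 ^ (α - 1) := by
        conv_lhs => rw [show α = 1 + (α - 1) by omega]
        rw [pow_add, pow_one]
      rw [this, hs₁] at hds
      have hds' : 2 ^ (α - 1) ∣ s₁ * (y - x) := by
        have h2 : 2 * (2 ^ (α - 1)) ∣ 2 * (s₁ * (y - x)) := by
          calc 2 * 2 ^ (α-1) ∣ 2 * s₁ * (y - x) := hds
          _ = 2 * (s₁ * (y - x)) := by ring
        exact (mul_dvd_mul_iff_left (by norm_num : (2:ℕ) ≠ 0)).1 h2
      have hcop : Nat.Coprime (2 ^ (α - 1)) s₁ :=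
        Nat.Coprime.pow_left _ ((Nat.Prime.coprime_iff_not_dvd Nat.prime_two).2 hs₁odd)
      exact hcop.dvd_of_dvd_mul_left hds'
    · -- y - x = 2 * odd ; then 2^(α-1) ∣ y + x
      right
      obtain ⟨e, he⟩ := hdeven
      have heodd : ¬ 2 ∣ e := by omega
      have h2a : (2:ℕ) ^ α = 2 * 2 ^ (α - 1) := by
        conv_lhs => rw [show α = 1 + (α - 1) by omega]
        rw [pow_add, pow_one]
      have hds' : 2 ^ (α - 1) ∣ (y + x) * e := by
        have h2 : 2 * (2 ^ (α - 1)) ∣ 2 * ((y + x) * e) := by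
          calc 2 * 2 ^ (α-1) ∣ (y + x) * (y - x) := h2a ▸ hds
          _ = 2 * ((y + x) * e) := by rw [he]; ring
        exact (mul_dvd_mul_iff_left (by norm_num : (2:ℕ) ≠ 0)).1 h2
      have hcop : Nat.Coprime (2 ^ (α - 1)) e :=
        Nat.Coprime.pow_left _ ((Nat.Prime.coprime_iff_not_dvd Nat.prime_two).2 heodd)
      have hs : 2 ^ (α - 1) ∣ y + x := hcop.dvd_of_dvd_mul_right hds'
      apply ident_dvd hx hxy
      · rw [h2a]
        exact mul_dvd_mul_left 2 hs
      · -- 2^α ∣ (y+x)^2 since 2(α-1) ≥ α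
        obtain ⟨t, ht⟩ := hs
        have : (y + x) ^ 2 = 2 ^ α * (2 ^ (α - 2) * t ^ 2) := by
          rw [ht]
          rw [show (2:ℕ) ^ (α-1) * t = 2^(α-1) * t from rfl]
          have : ((2:ℕ) ^ (α - 1) * t) ^ 2 = 2 ^ (2 * (α - 1)) * t ^ 2 := by
            rw [mul_pow, ← pow_mul, Nat.mul_comm (α-1) 2]
          rw [this, show 2 * (α - 1) = α + (α - 2) by omega, pow_add]
          ring
        rw [this]
        exact Dvd.intro _ rfl

private lemma main_ineq {p : ℕ} (pp : p.Prime) :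
    ∀ c, 0 < c → ∀ m n : ℕ, 0 < m → m ≤ n →
      ∑ k ∈ Finset.Icc m n, (k ^ 2 + c).factorization p
        ≤ c.factorization p + (Nat.factorial (n - m)).factorization p
          + (∑ d ∈ Finset.Icc 1 (n - m), (d ^ 2 + 4 * c).factorization p)
          + (Finset.Icc m n).sup (fun k => (k ^ 2 + c).factorization p) := by
  intro c
  induction c using Nat.strong_induction_on with
  | _ c ih =>
  intro hc m n hm hmn
  by_cases hp2c : p ^ 2 ∣ c
  · -- Case A : descent c = p^2 * c'
    obtain ⟨c', rfl⟩ := hp2c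
    have hc' : 0 < c' := by
      rcases Nat.eq_zero_or_pos c' with h | h
      · subst h; simp at hc
      · exact h
    have hclt : c' < p ^ 2 * c' := by
      have h2 := pp.two_le
      calc c' < 4 * c' := by omega
        _ ≤ p ^ 2 * c' := Nat.mul_le_mul_right c' (by nlinarith)
    set m' := (m - 1) / p + 1 with hm'def
    set n' := n / p with hn'def
    have hppos := pp.pos
    have hmle : ∀ k' : ℕ, m ≤ p * k' ↔ m' ≤ k' := by
      intro k'
      constructor
      · intro h
        have h1 : (m - 1) / p < k' := by
          rw [Nat.div_lt_iff_lt_mul hppos]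
          have := Nat.mul_comm p k'
          omega
        omega
      · intro h
        have h1 : (m - 1) / p < k' := by omega
        rw [Nat.div_lt_iff_lt_mul hppos] at h1
        have := Nat.mul_comm p k'
        omega
    have hnle : ∀ k' : ℕ, p * k' ≤ n ↔ k' ≤ n' := by
      intro k'
      rw [hn'def, Nat.le_div_iff_mul_le hppos]
      constructor <;> intro h <;> [skip; skip] <;>
        · have := Nat.mul_comm p k'
          omega
    have hvalzero : ∀ k : ℕ, ¬ p ∣ k → ((k ^ 2 + p ^ 2 * c').factorization p) = 0 := by
      intro k hk
      apply Nat.factorization_eq_zero_of_not_dvd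
      intro hdvd
      have hppc : p ∣ p ^ 2 * c' :=
        dvd_mul_of_dvd_left (dvd_pow_self p two_ne_zero) _
      have hk2 : p ∣ k ^ 2 := by
        have he : k ^ 2 = (k ^ 2 + p ^ 2 * c') - p ^ 2 * c' := by omega
        rw [he]; exact Nat.dvd_sub hdvd hppc
      exact hk (pp.dvd_of_dvd_pow hk2)
    have hval2 : ∀ k' : ℕ, ((p * k') ^ 2 + p ^ 2 * c').factorization p
        = 2 + (k' ^ 2 + c').factorization p := by
      intro k'
      have he : (p * k') ^ 2 + p ^ 2 * c' = p ^ 2 * (k' ^ 2 + c') := by ring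
      rw [he, Nat.factorization_mul (by positivity) (by positivity)]
      simp [pp.factorization_pow]
    have hsum : ∑ k ∈ Finset.Icc m n, (k ^ 2 + p ^ 2 * c').factorization p
        = ∑ k ∈ (Finset.Icc m n).filter (fun k => p ∣ k),
            (k ^ 2 + p ^ 2 * c').factorization p := by
      symm
      apply Finset.sum_filter_of_ne
      intro x _ hfx
      by_contra h
      exact hfx (hvalzero x h)
    have himg : (Finset.Icc m n).filter (fun k => p ∣ k)
        = (Finset.Icc m' n').image (fun k' => p * k') := by
      ext k
      simp only [Finset.mem_filter, Finset.mem_Icc, Finset.mem_image]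
      constructor
      · rintro ⟨⟨h1, h2⟩, k', rfl⟩
        exact ⟨k', ⟨(hmle k').1 h1, (hnle k').1 h2⟩, rfl⟩
      · rintro ⟨k', ⟨h1, h2⟩, rfl⟩
        exact ⟨⟨(hmle k').2 h1, (hnle k').2 h2⟩, Dvd.intro k' rfl⟩
    have hinj : ∀ x ∈ Finset.Icc m' n', ∀ y ∈ Finset.Icc m' n',
        p * x = p * y → x = y := fun x _ y _ h => Nat.eq_of_mul_eq_mul_left hppos h
    rw [hsum, himg, Finset.sum_image hinj]
    by_cases hmn' : m' ≤ n'
    · -- nonempty descent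
      have hicc : (Finset.Icc m' n').Nonempty := Finset.nonempty_Icc.2 hmn'
      rw [Finset.sum_congr rfl (fun k' _ => hval2 k'), Finset.sum_add_distrib,
        Finset.sum_const, Nat.card_Icc]
      have IH := ih c' hclt hc' m' n' (by rw [hm'def]; exact Nat.succ_pos _) hmn'
      -- bound pieces
      have hL' : n' - m' ≤ (n - m) / p := by
        rw [Nat.le_div_iff_mul_le hppos]
        have h1 : m ≤ p * m' := (hmle m').2 le_rfl
        have h2 : p * n' ≤ n := (hnle n').2 le_rfl
        have h3 : p * (n' - m') = p * n' - p * m' := Nat.mul_sub p n' m'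
        have := Nat.mul_comm p (n' - m')
        omega
      have hLL : n' - m' ≤ n - m := le_trans hL' (Nat.div_le_self _ _)
      have hfact : (Nat.factorial (n' - m')).factorization p
          ≤ (Nat.factorial (n - m)).factorization p := by
        have hdvd := Nat.factorial_dvd_factorial hLL
        exact Finsupp.le_def.1 ((Nat.factorization_le_iff_dvd
          (Nat.factorial_ne_zero _) (Nat.factorial_ne_zero _)).2 hdvd) p
      have hsup : 2 + (Finset.Icc m' n').sup (fun k' => (k' ^ 2 + c').factorization p)
          ≤ (Finset.Icc m n).sup (fun k => (k ^ 2 + p ^ 2 * c').factorization p) := by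
        obtain ⟨k₀, hk₀, hsup'⟩ := Finset.exists_mem_eq_sup _ hicc
          (fun k' => (k' ^ 2 + c').factorization p)
        rw [hsup']
        have hk₀m := Finset.mem_Icc.1 hk₀
        have hmem : p * k₀ ∈ Finset.Icc m n :=
          Finset.mem_Icc.2 ⟨(hmle k₀).2 hk₀m.1, (hnle k₀).2 hk₀m.2⟩
        calc 2 + (k₀ ^ 2 + c').factorization p
            = ((p * k₀) ^ 2 + p ^ 2 * c').factorization p := (hval2 k₀).symm
          _ ≤ _ := Finset.le_sup (f := fun k => (k ^ 2 + p ^ 2 * c').factorization p) hmem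
      have hbud : 2 * ((n - m) / p)
            + ∑ d' ∈ Finset.Icc 1 ((n - m) / p), (d' ^ 2 + 4 * c').factorization p
          ≤ ∑ d ∈ Finset.Icc 1 (n - m), (d ^ 2 + 4 * (p ^ 2 * c')).factorization p := by
        have himg2 : (Finset.Icc 1 ((n - m) / p)).image (fun d' => p * d')
            ⊆ Finset.Icc 1 (n - m) := by
          intro d hd
          simp only [Finset.mem_image, Finset.mem_Icc] at hd ⊢
          obtain ⟨d', ⟨h1, h2⟩, rfl⟩ := hd
          constructor
          · have : 0 < p * d' := Nat.mul_pos hppos (by omega)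
            omega
          · calc p * d' ≤ p * ((n - m) / p) := Nat.mul_le_mul_left p h2
              _ ≤ n - m := Nat.mul_div_le (n - m) p
        have hval3 : ∀ d' : ℕ, ((p * d') ^ 2 + 4 * (p ^ 2 * c')).factorization p
            = 2 + (d' ^ 2 + 4 * c').factorization p := by
          intro d'
          have he : (p * d') ^ 2 + 4 * (p ^ 2 * c') = p ^ 2 * (d' ^ 2 + 4 * c') := by ring
          rw [he, Nat.factorization_mul (by positivity) (by positivity)]
          simp [pp.factorization_pow]
        calc 2 * ((n - m) / p)
              + ∑ d' ∈ Finset.Icc 1 ((n - m) / p), (d' ^ 2 + 4 * c').factorization p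
            = ∑ d' ∈ Finset.Icc 1 ((n - m) / p),
                ((p * d') ^ 2 + 4 * (p ^ 2 * c')).factorization p := by
              rw [Finset.sum_congr rfl (fun d' _ => hval3 d'), Finset.sum_add_distrib,
                Finset.sum_const, Nat.card_Icc, smul_eq_mul]
              omega
          _ = ∑ d ∈ (Finset.Icc 1 ((n - m) / p)).image (fun d' => p * d'),
                (d ^ 2 + 4 * (p ^ 2 * c')).factorization p := by
              rw [Finset.sum_image (fun x _ y _ h => Nat.eq_of_mul_eq_mul_left hppos h)]
          _ ≤ ∑ d ∈ Finset.Icc 1 (n - m), (d ^ 2 + 4 * (p ^ 2 * c')).factorization p := by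
              exact Finset.sum_le_sum_of_subset himg2
      have hbud' : ∑ d' ∈ Finset.Icc 1 (n' - m'), (d' ^ 2 + 4 * c').factorization p
          ≤ ∑ d' ∈ Finset.Icc 1 ((n - m) / p), (d' ^ 2 + 4 * c').factorization p := by
        apply Finset.sum_le_sum_of_subset
        intro d hd
        simp only [Finset.mem_Icc] at hd ⊢
        omega
      have hvc : (p ^ 2 * c').factorization p = 2 + c'.factorization p := by
        rw [Nat.factorization_mul (by positivity) (by omega), pp.factorization_pow]
        simp
      have hcard : 2 * (n' + 1 - m') ≤ 2 * ((n - m) / p) + 2 := by omega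
      rw [hvc]
      have hsmul : (n' + 1 - m') • 2 = 2 * (n' + 1 - m') := by
        rw [smul_eq_mul, Nat.mul_comm]
      rw [hsmul]
      omega
    · -- empty descent
      have : Finset.Icc m' n' = ∅ := Finset.Icc_eq_empty (by omega)
      rw [this]
      simp
  · by_cases hpc : p ∣ c
    · -- Case B : p ∣ c, p^2 ∤ c
      have hval : ∀ k : ℕ, (k ^ 2 + c).factorization p = if p ∣ k then 1 else 0 := by
        intro k
        by_cases hk : p ∣ k
        · simp only [hk, if_true]
          have hne : k ^ 2 + c ≠ 0 := by positivity
          have h1 : 1 ≤ (k ^ 2 + c).factorization p := by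
            rw [← pp.pow_dvd_iff_le_factorization hne]
            simpa using dvd_add (dvd_pow hk two_ne_zero) hpc
          have h2 : ¬ 2 ≤ (k ^ 2 + c).factorization p := by
            rw [← pp.pow_dvd_iff_le_factorization hne]
            intro hh
            have hk2 : p ^ 2 ∣ k ^ 2 := pow_dvd_pow_of_dvd hk 2
            have : p ^ 2 ∣ c := by
              have he : c = (k ^ 2 + c) - k ^ 2 := by omega
              rw [he]; exact Nat.dvd_sub hh hk2
            exact hp2c this
          omega
        · simp only [hk, if_false]
          apply Nat.factorization_eq_zero_of_not_dvd
          intro hdvd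
          apply hk
          apply pp.dvd_of_dvd_pow (n := 2)
          have he : k ^ 2 = (k ^ 2 + c) - c := by omega
          rw [he]; exact Nat.dvd_sub hdvd hpc
      rw [Finset.sum_congr rfl (fun k _ => hval k), ← Finset.card_filter]
      set S := (Finset.Icc m n).filter (fun k => p ∣ k) with hSdef
      by_cases hS : S.Nonempty
      · have h1 : S.card ≤ 1 + ((Finset.Icc 1 (n - m)).filter (fun d => p ∣ d)).card := by
          apply count_le hS
          intro x hx y hy hlt
          simp only [hSdef, Finset.mem_filter, Finset.mem_Icc] at hx hy ⊢
          exact ⟨⟨by omega, by omega⟩, Nat.dvd_sub hy.2 hx.2⟩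
        have h2 := card_dvd_filter_le (n - m) p
        have h3 : (n - m) / p ≤ (Nat.factorial (n - m)).factorization p := by
          have := legendre_bound pp 1 (n - m)
          simpa using this
        have h4 : 1 ≤ (Finset.Icc m n).sup (fun k => (k ^ 2 + c).factorization p) := by
          obtain ⟨k₀, hk₀⟩ := hS
          have hk₀' := Finset.mem_filter.1 hk₀
          have : (k₀ ^ 2 + c).factorization p = 1 := by
            rw [hval k₀, if_pos hk₀'.2]
          calc (1:ℕ) = (k₀ ^ 2 + c).factorization p := this.symm
            _ ≤ _ := Finset.le_sup (f := fun k => (k ^ 2 + c).factorization p) hk₀'.1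
        omega
      · rw [Finset.not_nonempty_iff_eq_empty.1 hS]
        simp
    · -- Case C : p ∤ c
      set L := n - m with hLdef
      set A := n ^ 2 + 5 * c with hAdef
      have hpA : ∀ x : ℕ, x ≤ n ^ 2 + 4 * c → x ≤ p ^ A := by
        intro x hx
        have h1 : n ^ 2 + 4 * c < 2 ^ (n ^ 2 + 4 * c) := Nat.lt_two_pow_self
        have h2 : (2:ℕ) ^ (n ^ 2 + 4 * c) ≤ 2 ^ A := Nat.pow_le_pow_right (by norm_num) (by omega)
        have h3 : (2:ℕ) ^ A ≤ p ^ A := Nat.pow_le_pow_left pp.two_le A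
        omega
      have hkbound : ∀ k ∈ Finset.Icc m n, k ^ 2 + c ≤ n ^ 2 + 4 * c := by
        intro k hk
        have := (Finset.mem_Icc.1 hk).2
        have : k ^ 2 ≤ n ^ 2 := Nat.pow_le_pow_left this 2
        omega
      have hdbound : ∀ d ∈ Finset.Icc 1 L, d ^ 2 + 4 * c ≤ n ^ 2 + 4 * c := by
        intro d hd
        have h1 := (Finset.mem_Icc.1 hd).2
        have h2 : d ≤ n := by omega
        have : d ^ 2 ≤ n ^ 2 := Nat.pow_le_pow_left h2 2
        omega
      have hswap1 : ∑ k ∈ Finset.Icc m n, (k ^ 2 + c).factorization p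
          = ∑ α ∈ Finset.Icc 1 A, #((Finset.Icc m n).filter (fun k => p ^ α ∣ k ^ 2 + c)) := by
        rw [Finset.sum_congr rfl
          (fun k hk => val_eq_card pp (by positivity) (hpA _ (hkbound k hk)))]
        simp_rw [Finset.card_filter]
        exact Finset.sum_comm
      have hswap2 : ∑ d ∈ Finset.Icc 1 L, (d ^ 2 + 4 * c).factorization p
          = ∑ α ∈ Finset.Icc 1 A, #((Finset.Icc 1 L).filter (fun d => p ^ α ∣ d ^ 2 + 4 * c)) := by
        rw [Finset.sum_congr rfl
          (fun d hd => val_eq_card pp (by positivity) (hpA _ (hdbound d hd)))]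
        simp_rw [Finset.card_filter]
        exact Finset.sum_comm
      have hind : ∑ α ∈ Finset.Icc 1 A,
            (if 1 ≤ #((Finset.Icc m n).filter (fun k => p ^ α ∣ k ^ 2 + c)) then 1 else 0)
          ≤ (Finset.Icc m n).sup (fun k => (k ^ 2 + c).factorization p) := by
        rw [← Finset.card_filter]
        have hsubset : (Finset.Icc 1 A).filter
              (fun α => 1 ≤ #((Finset.Icc m n).filter (fun k => p ^ α ∣ k ^ 2 + c)))
            ⊆ Finset.Icc 1 ((Finset.Icc m n).sup (fun k => (k ^ 2 + c).factorization p)) := by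
          intro α hα
          have hα' := Finset.mem_filter.1 hα
          obtain ⟨k, hk⟩ := Finset.card_pos.1 hα'.2
          have hk' := Finset.mem_filter.1 hk
          have hαv : α ≤ (k ^ 2 + c).factorization p := by
            rw [← pp.pow_dvd_iff_le_factorization (by positivity)]
            exact hk'.2
          have := Finset.le_sup (f := fun k => (k ^ 2 + c).factorization p) hk'.1
          simp only [Finset.mem_Icc] at hα' ⊢
          exact ⟨hα'.1.1, le_trans hαv this⟩
        calc _ ≤ #(Finset.Icc 1 ((Finset.Icc m n).sup
                (fun k => (k ^ 2 + c).factorization p))) := Finset.card_le_card hsubset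
          _ = _ := by rw [Nat.card_Icc]; omega
      -- bucket function
      set bucket : ℕ → ℕ := fun α =>
        if p = 2 then (if 2 ≤ α then L / 2 ^ (α - 1) else 0) else L / p ^ α with hbdef
      have hbucket : ∑ α ∈ Finset.Icc 1 A, bucket α
          ≤ (Nat.factorial L).factorization p := by
        by_cases hp2 : p = 2
        · subst hp2
          have hb2 : ∀ α, bucket α = if 2 ≤ α then L / 2 ^ (α - 1) else 0 := by
            intro α; rw [hbdef]; simp
          rw [Finset.sum_congr rfl (fun α _ => hb2 α), ← Finset.sum_filter]
          have hicc : (Finset.Icc 1 A).filter (fun α => 2 ≤ α) = Finset.Icc 2 A := by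
            ext x; simp only [Finset.mem_filter, Finset.mem_Icc]; omega
          rw [hicc]
          have himg3 : Finset.Icc 2 A = (Finset.Icc 1 (A - 1)).image (fun j => j + 1) := by
            ext x
            simp only [Finset.mem_Icc, Finset.mem_image]
            constructor
            · intro h; exact ⟨x - 1, by omega, by omega⟩
            · rintro ⟨j, hj, rfl⟩; omega
          rw [himg3, Finset.sum_image (fun x _ y _ h => by omega)]
          have hre : ∀ j, L / 2 ^ (j + 1 - 1) = L / 2 ^ j := by intro j; norm_num
          rw [Finset.sum_congr rfl (fun j _ => hre j)]
          exact legendre_bound pp (A - 1) L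
        · have hb2 : ∀ α, bucket α = L / p ^ α := by
            intro α; rw [hbdef]; simp [hp2]
          rw [Finset.sum_congr rfl (fun α _ => hb2 α)]
          exact legendre_bound pp A L
      have hper : ∀ α ∈ Finset.Icc 1 A,
          #((Finset.Icc m n).filter (fun k => p ^ α ∣ k ^ 2 + c))
            ≤ (if 1 ≤ #((Finset.Icc m n).filter (fun k => p ^ α ∣ k ^ 2 + c)) then 1 else 0)
              + bucket α
              + #((Finset.Icc 1 L).filter (fun d => p ^ α ∣ d ^ 2 + 4 * c)) := by
        intro α hα
        have hα1 : 1 ≤ α := (Finset.mem_Icc.1 hα).1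
        set S := (Finset.Icc m n).filter (fun k => p ^ α ∣ k ^ 2 + c) with hSdef
        by_cases hSne : S.Nonempty
        · classical
          set T₁ := (Finset.Icc 1 L).filter
            (fun d => if p = 2 then (2 ≤ α ∧ 2 ^ (α - 1) ∣ d) else p ^ α ∣ d) with hT1def
          set T₂ := (Finset.Icc 1 L).filter (fun d => p ^ α ∣ d ^ 2 + 4 * c) with hT2def
          have hcount : S.card ≤ 1 + (T₁ ∪ T₂).card := by
            apply count_le hSne
            intro x hx y hy hlt
            simp only [hSdef, Finset.mem_filter, Finset.mem_Icc] at hx hy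
            have hmemIcc : y - x ∈ Finset.Icc 1 L := Finset.mem_Icc.2 ⟨by omega, by omega⟩
            by_cases hp2 : p = 2
            · subst hp2
              rcases dich_two hpc hα1 hx.2 hy.2 hlt with h | h
              · exact Finset.mem_union_left _
                  (Finset.mem_filter.2 ⟨hmemIcc, by rw [if_pos rfl]; exact h⟩)
              · exact Finset.mem_union_right _ (Finset.mem_filter.2 ⟨hmemIcc, h⟩)
            · rcases dich_odd pp hp2 hpc hα1 hx.2 hy.2 hlt with h | h
              · exact Finset.mem_union_left _
                  (Finset.mem_filter.2 ⟨hmemIcc, by rw [if_neg hp2]; exact h⟩)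
              · exact Finset.mem_union_right _ (Finset.mem_filter.2 ⟨hmemIcc, h⟩)
          have hT1card : T₁.card ≤ bucket α := by
            by_cases hp2 : p = 2
            · subst hp2
              by_cases h2α : 2 ≤ α
              · have hsub : T₁ ⊆ (Finset.Icc 1 L).filter (fun d => 2 ^ (α - 1) ∣ d) := by
                  intro d hd
                  have hd' := Finset.mem_filter.1 hd
                  apply Finset.mem_filter.2
                  refine ⟨hd'.1, ?_⟩
                  have h2 := hd'.2
                  rw [if_pos rfl] at h2
                  exact h2.2
                have hc1 : T₁.card ≤ L / 2 ^ (α - 1) :=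
                  le_trans (Finset.card_le_card hsub) (card_dvd_filter_le L (2 ^ (α - 1)))
                have hbeq : bucket α = L / 2 ^ (α - 1) := by
                  rw [hbdef]; simp [h2α]
                omega
              · have hT1e : T₁ = ∅ := by
                  apply Finset.filter_false_of_mem
                  intro d _
                  rw [if_pos rfl]
                  intro hcontr
                  omega
                simp [hT1e]
            · have hT1eq : T₁ = (Finset.Icc 1 L).filter (fun d => p ^ α ∣ d) := by
                rw [hT1def]
                apply Finset.filter_congr
                intro d _
                simp [hp2]
              have hc1 : T₁.card ≤ L / p ^ α := by
                rw [hT1eq]; exact card_dvd_filter_le L (p ^ α)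
              have hbeq : bucket α = L / p ^ α := by
                rw [hbdef]; simp [hp2]
              omega
          have hcard_union := Finset.card_union_le T₁ T₂
          have hind1 : (if 1 ≤ S.card then 1 else 0) = 1 := by
            rw [if_pos (show 1 ≤ S.card from Finset.card_pos.2 hSne)]
          omega
        · have : S.card = 0 := by
            rw [Finset.not_nonempty_iff_eq_empty.1 hSne]; rfl
          omega
      calc ∑ k ∈ Finset.Icc m n, (k ^ 2 + c).factorization p
          = ∑ α ∈ Finset.Icc 1 A, #((Finset.Icc m n).filter (fun k => p ^ α ∣ k ^ 2 + c)) :=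
            hswap1
        _ ≤ ∑ α ∈ Finset.Icc 1 A,
              ((if 1 ≤ #((Finset.Icc m n).filter (fun k => p ^ α ∣ k ^ 2 + c)) then 1 else 0)
                + bucket α
                + #((Finset.Icc 1 L).filter (fun d => p ^ α ∣ d ^ 2 + 4 * c))) :=
            Finset.sum_le_sum hper
        _ = (∑ α ∈ Finset.Icc 1 A,
              (if 1 ≤ #((Finset.Icc m n).filter (fun k => p ^ α ∣ k ^ 2 + c)) then 1 else 0))
            + (∑ α ∈ Finset.Icc 1 A, bucket α)
            + (∑ α ∈ Finset.Icc 1 A,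
              #((Finset.Icc 1 L).filter (fun d => p ^ α ∣ d ^ 2 + 4 * c))) := by
            rw [Finset.sum_add_distrib, Finset.sum_add_distrib]
        _ ≤ (Finset.Icc m n).sup (fun k => (k ^ 2 + c).factorization p)
            + (Nat.factorial L).factorization p
            + ∑ d ∈ Finset.Icc 1 L, (d ^ 2 + 4 * c).factorization p := by
            rw [hswap2]
            omega
        _ ≤ _ := by omega

theorem stmt_12 (c m n : ℕ) (hc : 0 < c) (hm : 0 < m) (hmn : m ≤ n) :
    (∏ k ∈ Finset.Icc m n, (k ^ 2 + c))
      ∣ c * Nat.factorial (n - m) * (∏ k ∈ Finset.Icc 1 (n - m), (k ^ 2 + 4 * c))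
          * Finset.lcm (Finset.Icc m n) (fun k => k ^ 2 + c) := by
  classical
  have hfne : ∀ k : ℕ, k ^ 2 + c ≠ 0 := fun k => by positivity
  have hPne : (∏ k ∈ Finset.Icc m n, (k ^ 2 + c)) ≠ 0 :=
    Finset.prod_ne_zero_iff.2 (fun k _ => hfne k)
  have hlcmne : Finset.lcm (Finset.Icc m n) (fun k => k ^ 2 + c) ≠ 0 := by
    intro h
    rw [Finset.lcm_eq_zero_iff] at h
    obtain ⟨k, -, hk⟩ := h
    exact hfne k hk
  have hDne : (∏ k ∈ Finset.Icc 1 (n - m), (k ^ 2 + 4 * c)) ≠ 0 :=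
    Finset.prod_ne_zero_iff.2 (fun k _ => by positivity)
  have hcl : c * Nat.factorial (n - m) ≠ 0 :=
    mul_ne_zero (by omega) (Nat.factorial_ne_zero _)
  have hcld : c * Nat.factorial (n - m) * (∏ k ∈ Finset.Icc 1 (n - m), (k ^ 2 + 4 * c)) ≠ 0 :=
    mul_ne_zero hcl hDne
  have hRne : c * Nat.factorial (n - m) * (∏ k ∈ Finset.Icc 1 (n - m), (k ^ 2 + 4 * c))
      * Finset.lcm (Finset.Icc m n) (fun k => k ^ 2 + c) ≠ 0 :=
    mul_ne_zero hcld hlcmne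
  rw [← Nat.factorization_le_iff_dvd hPne hRne, Finsupp.le_def]
  intro p
  by_cases pp : p.Prime
  · have hPfac : (∏ k ∈ Finset.Icc m n, (k ^ 2 + c)).factorization p
        = ∑ k ∈ Finset.Icc m n, (k ^ 2 + c).factorization p := by
      rw [Nat.factorization_prod (fun k _ => hfne k)]
      simp [Finsupp.finset_sum_apply]
    have hRfac : (c * Nat.factorial (n - m) * (∏ k ∈ Finset.Icc 1 (n - m), (k ^ 2 + 4 * c))
        * Finset.lcm (Finset.Icc m n) (fun k => k ^ 2 + c)).factorization p
        = c.factorization p + (Nat.factorial (n - m)).factorization p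
          + (∑ d ∈ Finset.Icc 1 (n - m), (d ^ 2 + 4 * c).factorization p)
          + (Finset.lcm (Finset.Icc m n) (fun k => k ^ 2 + c)).factorization p := by
      rw [Nat.factorization_mul hcld hlcmne, Nat.factorization_mul hcl hDne,
        Nat.factorization_mul (by omega) (Nat.factorial_ne_zero _),
        Nat.factorization_prod (fun k _ => by positivity)]
      simp [Finsupp.finset_sum_apply]
    have hsuple : (Finset.Icc m n).sup (fun k => (k ^ 2 + c).factorization p)
        ≤ (Finset.lcm (Finset.Icc m n) (fun k => k ^ 2 + c)).factorization p := by
      obtain ⟨k₀, hk₀, heq⟩ := Finset.exists_mem_eq_sup (Finset.Icc m n)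
        (Finset.nonempty_Icc.2 hmn) (fun k => (k ^ 2 + c).factorization p)
      rw [heq]
      have hdvd : k₀ ^ 2 + c ∣ Finset.lcm (Finset.Icc m n) (fun k => k ^ 2 + c) :=
        Finset.dvd_lcm hk₀
      exact Finsupp.le_def.1
        ((Nat.factorization_le_iff_dvd (hfne k₀) hlcmne).2 hdvd) p
    have hmain := main_ineq pp c hc m n hm hmn
    rw [hPfac, hRfac]
    omega
  · simp [Nat.factorization_eq_zero_of_not_prime _ pp]
end

section
/- Let N, a, b be integers with (a,b) ≠ (0,0) and c a positive integer. Then N is divisible by (a + b√(-c)) in the ring ℤ[√(-c)] if and only if N is divisible in ℤ by (a² + c·b²)/gcd(a,b). -/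
theorem stmt_14 (c : ℕ) (hc : 0 < c) (N a b : ℤ) (hab : (a, b) ≠ (0, 0)) :
    ((⟨a, b⟩ : Zsqrtd (-(c : ℤ))) ∣ (N : Zsqrtd (-(c : ℤ))))
      ↔ ((a ^ 2 + (c : ℤ) * b ^ 2) / (Int.gcd a b : ℤ)) ∣ N := by
  have hgnat : Int.gcd a b ≠ 0 := by
    simp only [ne_eq, Int.gcd_eq_zero_iff]
    rintro ⟨ha, hb⟩
    exact hab (by simp [ha, hb])
  have hg0 : (Int.gcd a b : ℤ) ≠ 0 := by exact_mod_cast hgnat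
  set g : ℤ := (Int.gcd a b : ℤ) with hg
  obtain ⟨a', ha'⟩ : g ∣ a := Int.gcd_dvd_left a b
  obtain ⟨b', hb'⟩ : g ∣ b := Int.gcd_dvd_right a b
  have ha'' : a / g = a' := by rw [ha', Int.mul_ediv_cancel_left _ hg0]
  have hb'' : b / g = b' := by rw [hb', Int.mul_ediv_cancel_left _ hg0]
  have hcop : IsCoprime a' b' := by
    rw [Int.isCoprime_iff_gcd_eq_one, ← ha'', ← hb'']
    exact Int.gcd_div_gcd_div_gcd (Nat.pos_of_ne_zero hgnat)
  have hdiv : (a ^ 2 + (c : ℤ) * b ^ 2) / g = g * (a' ^ 2 + (c : ℤ) * b' ^ 2) := by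
    have h : a ^ 2 + (c : ℤ) * b ^ 2 = g * (g * (a' ^ 2 + (c : ℤ) * b' ^ 2)) := by
      rw [ha', hb']; ring
    rw [h, Int.mul_ediv_cancel_left _ hg0]
  rw [hdiv]
  constructor
  · rintro ⟨z, hz⟩
    have hre := congrArg Zsqrtd.re hz
    have him := congrArg Zsqrtd.im hz
    simp only [Zsqrtd.re_intCast, Zsqrtd.im_intCast, Zsqrtd.re_mul, Zsqrtd.im_mul] at hre him
    -- hre : N = a * z.re + -(c) * b * z.im
    -- him : 0 = a * z.im + b * z.re
    have him' : a' * z.im + b' * z.re = 0 := by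
      have : g * (a' * z.im + b' * z.re) = 0 := by
        rw [ha', hb'] at him; linarith [him]
      rcases mul_eq_zero.mp this with h | h
      · exact absurd h hg0
      · exact h
    obtain ⟨u, v, huv⟩ := hcop
    refine ⟨u * z.re - v * z.im, ?_⟩
    have key : a' * z.re - (c : ℤ) * b' * z.im
        = (a' ^ 2 + (c : ℤ) * b' ^ 2) * (u * z.re - v * z.im) := by
      linear_combination (a' * v - (c : ℤ) * b' * u) * him'
        - (a' * z.re - (c : ℤ) * b' * z.im) * huv
    have hN : N = g * (a' * z.re - (c : ℤ) * b' * z.im) := by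
      rw [ha', hb'] at hre; linarith [hre]
    rw [hN, key]; ring
  · rintro ⟨k, hk⟩
    refine ⟨⟨k * a', -(k * b')⟩, ?_⟩
    ext
    · simp only [Zsqrtd.re_intCast, Zsqrtd.re_mul]
      rw [hk, ha', hb']; ring
    · simp only [Zsqrtd.im_intCast, Zsqrtd.im_mul]
      rw [ha', hb']; ring
end

section
/- Let A be a commutative integral domain, n a positive integer, and u_0, ..., u_n, a, b elements of A. Suppose each u_i divides a, and for each i the product ∏_{j≠i} (u_i - u_j) divides b. Then u_0 u_1 ⋯ u_n divides a·b. -/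
theorem stmt_15 {A : Type*} [CommRing A] [IsDomain A] (n : ℕ) (hn : 0 < n)
    (u : ℕ → A) (a b : A)
    (h1 : ∀ i ∈ Finset.range (n + 1), u i ∣ a)
    (h2 : ∀ i ∈ Finset.range (n + 1),
        (∏ j ∈ (Finset.range (n + 1)).erase i, (u i - u j)) ∣ b) :
    (∏ i ∈ Finset.range (n + 1), u i) ∣ a * b := by
  classical
  set s := Finset.range (n + 1) with hs
  by_cases hinj : Set.InjOn u (s : Set ℕ)
  · -- injective case
    -- choose witnesses
    have h1' : ∀ i, ∃ v, i ∈ s → a = u i * v := by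
      intro i
      by_cases h : i ∈ s
      · obtain ⟨v, hv⟩ := h1 i h; exact ⟨v, fun _ => hv⟩
      · exact ⟨0, fun h' => absurd h' h⟩
    have h2' : ∀ i, ∃ v, i ∈ s → b = (∏ j ∈ s.erase i, (u i - u j)) * v := by
      intro i
      by_cases h : i ∈ s
      · obtain ⟨v, hv⟩ := h2 i h; exact ⟨v, fun _ => hv⟩
      · exact ⟨0, fun h' => absurd h' h⟩
    choose a' ha' using h1'
    choose c hc using h2'
    set K := FractionRing A
    set φ : A →+* K := algebraMap A K with hφdef
    have hφ : Function.Injective φ := IsFractionRing.injective A K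
    set v : ℕ → K := fun i => φ (u i) with hv
    have hvinj : Set.InjOn v (s : Set ℕ) := fun x hx y hy hxy => hinj hx hy (hφ hxy)
    have hsne : s.Nonempty := ⟨0, by simp [hs]⟩
    have key : (∑ i ∈ s, Lagrange.basis s v i) = 1 := Lagrange.sum_basis hvinj hsne
    have key0 : (∑ i ∈ s, Polynomial.eval (0 : K) (Lagrange.basis s v i)) = 1 := by
      rw [← Polynomial.eval_finset_sum, key, Polynomial.eval_one]
    have heval : ∀ i ∈ s, Polynomial.eval (0 : K) (Lagrange.basis s v i)
        = ∏ j ∈ s.erase i, ((v i - v j)⁻¹ * (-(v j))) := by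
      intro i hi
      rw [Lagrange.basis, Polynomial.eval_prod]
      refine Finset.prod_congr rfl fun j hj => ?_
      simp [Lagrange.basisDivisor]
    -- nonvanishing of denominators
    have hDne : ∀ i ∈ s, (∏ j ∈ s.erase i, (u i - u j)) ≠ 0 := by
      intro i hi
      refine Finset.prod_ne_zero_iff.mpr fun j hj => ?_
      have hji := Finset.mem_of_mem_erase hj
      have hne : i ≠ j := (Finset.ne_of_mem_erase hj).symm
      exact sub_ne_zero_of_ne fun h => hne (hinj hi hji h)
    -- each term equals φ of product stuff
    have hterm : ∀ i ∈ s, φ a * φ b * Polynomial.eval (0 : K) (Lagrange.basis s v i)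
        = φ ((∏ k ∈ s, u k) * ((-1) ^ n * (a' i * c i))) := by
      intro i hi
      rw [heval i hi, Finset.prod_mul_distrib]
      have hcard : (s.erase i).card = n := by
        rw [Finset.card_erase_of_mem hi]; simp [hs]
      have hDinv : φ b * ∏ j ∈ s.erase i, (v i - v j)⁻¹ = φ (c i) := by
        rw [hc i hi]
        rw [map_mul]
        have : φ (∏ j ∈ s.erase i, (u i - u j)) = ∏ j ∈ s.erase i, (v i - v j) := by
          rw [map_prod]; exact Finset.prod_congr rfl fun j _ => by simp [hv]
        rw [this, Finset.prod_inv_distrib]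
        have hne : (∏ j ∈ s.erase i, (v i - v j)) ≠ 0 := by
          rw [← this]
          simpa using fun h => hDne i hi (hφ (by simpa using h))
        rw [mul_right_comm, mul_inv_cancel₀ hne, one_mul]
      have hneg : (∏ j ∈ s.erase i, (-(v j))) = (-1) ^ n * ∏ j ∈ s.erase i, v j := by
        rw [show (∏ j ∈ s.erase i, (-(v j))) = ∏ j ∈ s.erase i, ((-1) * v j) from Finset.prod_congr rfl fun j _ => neg_eq_neg_one_mul (v j),
          Finset.prod_mul_distrib, Finset.prod_const, hcard]
      have haprod : φ a * ∏ j ∈ s.erase i, v j = φ (a' i) * ∏ j ∈ s, v j := by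
        rw [ha' i hi]
        rw [map_mul]
        rw [← Finset.mul_prod_erase s v hi]
        simp [hv]; ring
      calc φ a * φ b * ((∏ j ∈ s.erase i, (v i - v j)⁻¹) * ∏ j ∈ s.erase i, (-(v j)))
          = (φ a * ∏ j ∈ s.erase i, (-(v j))) * (φ b * ∏ j ∈ s.erase i, (v i - v j)⁻¹) := by
            ring
        _ = (φ a * ((-1)^n * ∏ j ∈ s.erase i, v j)) * φ (c i) := by rw [hDinv, hneg]
        _ = (-1)^n * (φ a * ∏ j ∈ s.erase i, v j) * φ (c i) := by ring
        _ = (-1)^n * (φ (a' i) * ∏ j ∈ s, v j) * φ (c i) := by rw [haprod]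
        _ = φ ((∏ k ∈ s, u k) * ((-1) ^ n * (a' i * c i))) := by
            rw [map_mul, map_mul, map_mul, map_prod, map_pow, map_neg, map_one]
            ring
    have main : φ (a * b) = φ ((∏ k ∈ s, u k) * ((-1) ^ n * ∑ i ∈ s, a' i * c i)) := by
      have : φ (a * b) = ∑ i ∈ s, φ a * φ b * Polynomial.eval (0 : K) (Lagrange.basis s v i) := by
        rw [← Finset.mul_sum, key0, map_mul, mul_one]
      rw [this, Finset.sum_congr rfl hterm]
      rw [← map_sum]
      congr 1
      simp only [Finset.mul_sum]
    have := hφ main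
    exact ⟨(-1) ^ n * ∑ i ∈ s, a' i * c i, this⟩
  · -- non-injective: b = 0
    rw [Set.InjOn] at hinj
    push_neg at hinj
    obtain ⟨i, hi, j, hj, hij, hne⟩ := hinj
    have hjmem : j ∈ s.erase i := Finset.mem_erase.mpr ⟨fun h => hne h.symm, hj⟩
    have hzero : (∏ k ∈ s.erase i, (u i - u k)) = 0 :=
      Finset.prod_eq_zero hjmem (by rw [hij]; ring)
    have hb : b = 0 := by
      have := h2 i hi
      rw [hzero] at this
      exact zero_dvd_iff.mp this
    simp [hb]
end

section
/- Let (u_n)_{n≥1} be a sequence of positive integers and define a_n = ∏_{d | n} u_d. Then the sequence (a_n) is a strong divisibility sequence (i.e., gcd(a_n, a_m) = a_{gcd(n,m)} for all n, m ≥ 1) if and only if gcd(u_n, u_m) = 1 for all n, m ≥ 1 such that n does not divide m and m does not divide n. -/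
theorem stmt_16 (u : ℕ → ℕ) (hu : ∀ n, 1 ≤ n → 0 < u n)
    (a : ℕ → ℕ) (ha : ∀ n, a n = ∏ d ∈ n.divisors, u d) :
    (∀ n m, 1 ≤ n → 1 ≤ m → Nat.gcd (a n) (a m) = a (Nat.gcd n m))
      ↔ (∀ n m, 1 ≤ n → 1 ≤ m → ¬ n ∣ m → ¬ m ∣ n → Nat.gcd (u n) (u m) = 1) := by
  have hinter : ∀ n m : ℕ, 1 ≤ n → 1 ≤ m →
      (Nat.gcd n m).divisors = n.divisors ∩ m.divisors := by
    intro n m hn hm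
    have hn0 : n ≠ 0 := by omega
    have hm0 : m ≠ 0 := by omega
    ext d
    simp only [Finset.mem_inter, Nat.mem_divisors, Nat.dvd_gcd_iff,
      Nat.gcd_eq_zero_iff, hn0, hm0, ne_eq]
    tauto
  have hdecomp : ∀ n m : ℕ, 1 ≤ n → 1 ≤ m →
      a n = a (Nat.gcd n m) * ∏ d ∈ n.divisors \ m.divisors, u d := by
    intro n m hn hm
    rw [ha, ha, hinter n m hn hm]
    exact (Finset.prod_inter_mul_prod_diff n.divisors m.divisors u).symm
  have hapos : ∀ n : ℕ, 0 < a n := by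
    intro n
    rw [ha]
    exact Finset.prod_pos fun d hd => hu d (Nat.pos_of_mem_divisors hd)
  have hgcd : ∀ n m : ℕ, 1 ≤ n → 1 ≤ m →
      Nat.gcd (a n) (a m) = a (Nat.gcd n m) *
        Nat.gcd (∏ d ∈ n.divisors \ m.divisors, u d)
          (∏ d ∈ m.divisors \ n.divisors, u d) := by
    intro n m hn hm
    conv_lhs => rw [hdecomp n m hn hm, hdecomp m n hm hn, Nat.gcd_comm m n]
    exact Nat.gcd_mul_left _ _ _
  constructor
  · intro H n m hn hm hnm hmn
    have h := hgcd n m hn hm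
    rw [H n m hn hm] at h
    have h1 : Nat.gcd (∏ d ∈ n.divisors \ m.divisors, u d)
        (∏ d ∈ m.divisors \ n.divisors, u d) = 1 := by
      have := hapos (Nat.gcd n m)
      nlinarith [h]
    have hnmem : n ∈ n.divisors \ m.divisors := by
      simp [Nat.mem_divisors, hnm]
      omega
    have hmmem : m ∈ m.divisors \ n.divisors := by
      simp [Nat.mem_divisors, hmn]
      omega
    have h2 : u n ∣ ∏ d ∈ n.divisors \ m.divisors, u d :=
      Finset.dvd_prod_of_mem u hnmem
    have h3 : u m ∣ ∏ d ∈ m.divisors \ n.divisors, u d :=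
      Finset.dvd_prod_of_mem u hmmem
    exact Nat.eq_one_of_dvd_one (h1 ▸ Nat.dvd_gcd ((Nat.gcd_dvd_left _ _).trans h2)
      ((Nat.gcd_dvd_right _ _).trans h3))
  · intro H n m hn hm
    rw [hgcd n m hn hm]
    have h1 : Nat.Coprime (∏ d ∈ n.divisors \ m.divisors, u d)
        (∏ d ∈ m.divisors \ n.divisors, u d) := by
      apply Nat.Coprime.prod_left
      intro d hd
      apply Nat.Coprime.prod_right
      intro e he
      simp only [Finset.mem_sdiff, Nat.mem_divisors] at hd he
      have hd1 : 1 ≤ d := Nat.pos_of_dvd_of_pos hd.1.1 (by omega)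
      have he1 : 1 ≤ e := Nat.pos_of_dvd_of_pos he.1.1 (by omega)
      apply H d e hd1 he1
      · intro hde
        exact hd.2 ⟨hde.trans he.1.1, by omega⟩
      · intro hed
        exact he.2 ⟨hed.trans hd.1.1, by omega⟩
    rw [h1, mul_one]
end

section
/- Let (a_n)_{n≥1} be a sequence of positive integers and define c_1 = a_1 and c_n = lcm(a_1,...,a_n)/lcm(a_1,...,a_{n-1}) for n ≥ 2. Then (a_n) is a strong divisibility sequence if and only if a_n = ∏_{d | n} c_d for all n ≥ 1. -/
private def Mx (f : ℕ → ℕ) (n : ℕ) : ℕ := (Finset.Icc 1 n).sup f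

private def gam (f : ℕ → ℕ) (n : ℕ) : ℕ := Mx f n - Mx f (n - 1)

private lemma Icc_eq (n : ℕ) (hn : 1 ≤ n) :
    Finset.Icc 1 n = insert n (Finset.Icc 1 (n - 1)) := by
  ext k; simp only [Finset.mem_Icc, Finset.mem_insert]; omega

private lemma Mx_succ (f : ℕ → ℕ) (n : ℕ) (hn : 1 ≤ n) :
    Mx f n = max (f n) (Mx f (n - 1)) := by
  rw [Mx, Icc_eq n hn, Finset.sup_insert]; rfl

private lemma le_Mx (f : ℕ → ℕ) (k n : ℕ) (hk : 1 ≤ k) (hkn : k ≤ n) :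
    f k ≤ Mx f n :=
  Finset.le_sup (Finset.mem_Icc.mpr ⟨hk, hkn⟩)

private lemma gam_pos (f : ℕ → ℕ) (n : ℕ) (hn : 1 ≤ n) (h : gam f n ≠ 0) :
    Mx f (n - 1) < f n ∧ Mx f n = f n := by
  have h1 : gam f n = Mx f n - Mx f (n - 1) := rfl
  have h2 := Mx_succ f n hn
  omega

private lemma lemA (f : ℕ → ℕ)
    (H : ∀ n m, 1 ≤ n → 1 ≤ m → min (f n) (f m) = f (Nat.gcd n m)) :
    ∀ n, 1 ≤ n → f n = ∑ d ∈ n.divisors, gam f d := by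
  have hmono : ∀ d n, 1 ≤ d → 1 ≤ n → d ∣ n → f d ≤ f n := by
    intro d n hd hn hdvd
    have h := H d n hd hn
    rw [Nat.gcd_eq_left hdvd] at h
    have := min_le_right (f d) (f n); omega
  intro n
  induction n using Nat.strong_induction_on with
  | _ n IH =>
    intro hn
    rcases eq_or_lt_of_le hn with h1 | h2
    · rw [← h1]
      have e0 : Mx f 0 = 0 := by
        rw [Mx]; simp
      have e1 : Mx f 1 = f 1 := by
        rw [Mx]; simp
      have : gam f 1 = f 1 := by
        rw [gam, e0, e1]; omega
      simp [Nat.divisors_one, this]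
    · obtain ⟨g, hgmem, hgmax⟩ := Finset.exists_max_image n.properDivisors f
        ⟨1, Nat.one_mem_properDivisors_iff_one_lt.mpr h2⟩
      obtain ⟨hgdvd, hglt⟩ := Nat.mem_properDivisors.mp hgmem
      have hg1 : 1 ≤ g := Nat.pos_of_dvd_of_pos hgdvd (by omega)
      have key : ∀ d ∈ n.properDivisors, gam f d ≠ 0 → d ∣ g := by
        intro d hd hγ
        obtain ⟨hdn, hdlt⟩ := Nat.mem_properDivisors.mp hd
        have hd1 : 1 ≤ d := Nat.pos_of_dvd_of_pos hdn (by omega)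
        by_contra hndvd
        have hg'd : Nat.gcd d g ∣ d := Nat.gcd_dvd_left d g
        have hg'1 : 1 ≤ Nat.gcd d g := Nat.pos_of_dvd_of_pos (Nat.gcd_dvd_right d g) hg1
        have hg'lt : Nat.gcd d g < d := by
          rcases lt_or_eq_of_le (Nat.le_of_dvd hd1 hg'd) with h | h
          · exact h
          · exact absurd (h ▸ Nat.gcd_dvd_right d g) hndvd
        have hA := (gam_pos f d hd1 hγ).1
        have hB : f (Nat.gcd d g) ≤ Mx f (d - 1) := le_Mx f _ _ hg'1 (by omega)
        have hC : f d ≤ f g := hgmax d hd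
        have hD := H d g hd1 hg1
        omega
      have hsub : g.divisors ⊆ n.properDivisors := by
        intro d hd
        obtain ⟨hdg, _⟩ := Nat.mem_divisors.mp hd
        exact Nat.mem_properDivisors.mpr
          ⟨hdg.trans hgdvd, lt_of_le_of_lt (Nat.le_of_dvd hg1 hdg) hglt⟩
      have hsum : ∑ d ∈ n.properDivisors, gam f d = ∑ d ∈ g.divisors, gam f d := by
        refine (Finset.sum_subset hsub ?_).symm
        intro d hd hnd
        by_contra hγ
        exact hnd (Nat.mem_divisors.mpr ⟨key d hd hγ, by omega⟩)
      have hfg : f g = ∑ d ∈ g.divisors, gam f d := IH g hglt hg1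
      have hfg_le_fn : f g ≤ f n := hmono g n hg1 (by omega) hgdvd
      have hfg_le_M : f g ≤ Mx f (n - 1) := le_Mx f g (n - 1) hg1 (by omega)
      have hminle : min (f n) (Mx f (n - 1)) ≤ f g := by
        obtain ⟨k, hk, hks⟩ := Finset.exists_mem_eq_sup (Finset.Icc 1 (n - 1))
          ⟨1, Finset.mem_Icc.mpr ⟨le_refl 1, by omega⟩⟩ f
        rw [Finset.mem_Icc] at hk
        have hgcdmem : Nat.gcd n k ∈ n.properDivisors := by
          refine Nat.mem_properDivisors.mpr ⟨Nat.gcd_dvd_left n k, ?_⟩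
          have := Nat.gcd_le_right (m := n) (n := k) (by omega)
          omega
        have h5 := H n k (by omega) hk.1
        have h6 := hgmax _ hgcdmem
        have h7 : Mx f (n - 1) = f k := hks
        omega
      rw [← Nat.insert_self_properDivisors (show n ≠ 0 by omega),
        Finset.sum_insert Nat.self_notMem_properDivisors]
      have hgamn : gam f n = Mx f n - Mx f (n - 1) := rfl
      have hM := Mx_succ f n (by omega)
      have hsumeq : ∑ d ∈ n.properDivisors, gam f d = f g := by rw [hsum, ← hfg]
      omega

private lemma lemK (f : ℕ → ℕ)
    (Hf : ∀ n, 1 ≤ n → f n = ∑ d ∈ n.divisors, gam f d) :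
    ∀ e d, 1 ≤ d → d < e → gam f d ≠ 0 → gam f e ≠ 0 → d ∣ e := by
  intro e
  induction e using Nat.strong_induction_on with
  | _ e IH =>
    intro d hd1 hde hγd hγe
    by_contra hnd
    have he1 : 1 ≤ e := by omega
    have hpe := gam_pos f e he1 hγe
    have hsum : ∑ x ∈ e.properDivisors, gam f x = Mx f (e - 1) := by
      have h1 : f e = gam f e + ∑ x ∈ e.properDivisors, gam f x := by
        conv_lhs => rw [Hf e he1]
        rw [← Nat.insert_self_properDivisors (show e ≠ 0 by omega),
          Finset.sum_insert Nat.self_notMem_properDivisors]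
      have h2 : gam f e = Mx f e - Mx f (e - 1) := rfl
      omega
    have hgd : Nat.gcd d e ∣ d := Nat.gcd_dvd_left d e
    have hg1 : 0 < Nat.gcd d e := Nat.pos_of_dvd_of_pos hgd hd1
    have hglt : Nat.gcd d e < d := by
      rcases lt_or_eq_of_le (Nat.le_of_dvd hd1 hgd) with h | h
      · exact h
      · exact absurd (h ▸ Nat.gcd_dvd_right d e) hnd
    have hfd : f (Nat.gcd d e) + gam f d ≤ f d := by
      have h2 : insert d (Nat.gcd d e).divisors ⊆ d.divisors := by
        intro x hx
        rcases Finset.mem_insert.mp hx with h | h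
        · rw [h]; exact Nat.mem_divisors.mpr ⟨dvd_rfl, by omega⟩
        · obtain ⟨hxg, _⟩ := Nat.mem_divisors.mp h
          exact Nat.mem_divisors.mpr ⟨hxg.trans hgd, by omega⟩
      have h3 : d ∉ (Nat.gcd d e).divisors := by
        intro h
        have := Nat.le_of_dvd hg1 (Nat.mem_divisors.mp h).1
        omega
      calc f (Nat.gcd d e) + gam f d
          = ∑ x ∈ insert d (Nat.gcd d e).divisors, gam f x := by
            rw [Finset.sum_insert h3, Hf (Nat.gcd d e) hg1]; ring
        _ ≤ ∑ x ∈ d.divisors, gam f x := Finset.sum_le_sum_of_subset h2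
        _ = f d := (Hf d hd1).symm
    have hfdM : f d ≤ Mx f (e - 1) := le_Mx f d (e - 1) hd1 (by omega)
    by_cases hall : ∀ x ∈ e.properDivisors, gam f x ≠ 0 → x ∣ d
    · have hsub : (Nat.gcd d e).divisors ⊆ e.properDivisors := by
        intro x hx
        obtain ⟨hxg, _⟩ := Nat.mem_divisors.mp hx
        refine Nat.mem_properDivisors.mpr ⟨hxg.trans (Nat.gcd_dvd_right d e), ?_⟩
        have := Nat.le_of_dvd hg1 hxg
        omega
      have heq : ∑ x ∈ e.properDivisors, gam f x = ∑ x ∈ (Nat.gcd d e).divisors, gam f x := by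
        refine (Finset.sum_subset hsub ?_).symm
        intro x hx hnx
        by_contra hγx
        have hxd := hall x hx hγx
        have hxe := (Nat.mem_properDivisors.mp hx).1
        exact hnx (Nat.mem_divisors.mpr ⟨Nat.dvd_gcd hxd hxe, by omega⟩)
      have hfg := Hf (Nat.gcd d e) hg1
      omega
    · push_neg at hall
      obtain ⟨x, hx, hγx, hxd⟩ := hall
      obtain ⟨hxe, hxlt⟩ := Nat.mem_properDivisors.mp hx
      have hx1 : 1 ≤ x := Nat.pos_of_dvd_of_pos hxe (by omega)
      rcases lt_trichotomy x d with h | h | h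
      · exact hxd (IH d hde x hx1 h hγx hγd)
      · exact hxd (h ▸ dvd_rfl)
      · exact hnd ((IH x hxlt d hd1 h hγd hγx).trans hxe)

private lemma lemB (f : ℕ → ℕ)
    (Hf : ∀ n, 1 ≤ n → f n = ∑ d ∈ n.divisors, gam f d) :
    ∀ n m, 1 ≤ n → 1 ≤ m → min (f n) (f m) = f (Nat.gcd n m) := by
  have easy : ∀ n m : ℕ, 1 ≤ n → 1 ≤ m → m ∣ n → f m ≤ f n := by
    intro n m hn hm hdvd
    rw [Hf n hn, Hf m hm]
    exact Finset.sum_le_sum_of_subset (Nat.divisors_subset_of_dvd (by omega) hdvd)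
  intro n m hn hm
  have hg1 : 0 < Nat.gcd n m := Nat.gcd_pos_of_pos_left m hn
  have h1 : f (Nat.gcd n m) ≤ f n := easy n _ hn hg1 (Nat.gcd_dvd_left n m)
  have h2 : f (Nat.gcd n m) ≤ f m := easy m _ hm hg1 (Nat.gcd_dvd_right n m)
  have h3 : min (f n) (f m) ≤ f (Nat.gcd n m) := by
    by_contra hcon
    push_neg at hcon
    have hex : ∀ k : ℕ, 1 ≤ k → Nat.gcd n m ∣ k → f (Nat.gcd n m) < f k →
        ∃ x, (x ∣ k ∧ ¬x ∣ Nat.gcd n m) ∧ gam f x ≠ 0 := by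
      intro k hk hgk hlt
      by_contra hno
      push_neg at hno
      have heq : ∑ x ∈ k.divisors, gam f x = ∑ x ∈ (Nat.gcd n m).divisors, gam f x := by
        refine (Finset.sum_subset (Nat.divisors_subset_of_dvd (by omega) hgk) ?_).symm
        intro x hx hnx
        have hxk := (Nat.mem_divisors.mp hx).1
        refine hno x ⟨hxk, ?_⟩
        intro hxg
        exact hnx (Nat.mem_divisors.mpr ⟨hxg, by omega⟩)
      rw [← Hf k hk, ← Hf (Nat.gcd n m) hg1] at heq
      omega
    obtain ⟨x, ⟨hxn, hxg⟩, hγx⟩ := hex n hn (Nat.gcd_dvd_left n m)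
      (lt_of_lt_of_le hcon (min_le_left _ _))
    obtain ⟨y, ⟨hym, hyg⟩, hγy⟩ := hex m hm (Nat.gcd_dvd_right n m)
      (lt_of_lt_of_le hcon (min_le_right _ _))
    have hx1 : 1 ≤ x := Nat.pos_of_dvd_of_pos hxn (by omega)
    have hy1 : 1 ≤ y := Nat.pos_of_dvd_of_pos hym (by omega)
    have hxm : ¬x ∣ m := fun h => hxg (Nat.dvd_gcd hxn h)
    have hyn : ¬y ∣ n := fun h => hyg (Nat.dvd_gcd h hym)
    rcases lt_trichotomy x y with h | h | h
    · exact hxm ((lemK f Hf y x hx1 h hγx hγy).trans hym)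
    · exact hxm (h ▸ hym)
    · exact hyn ((lemK f Hf x y hy1 h hγy hγx).trans hxn)
  omega

private lemma lcm_ne_zero' (a : ℕ → ℕ) (s : Finset ℕ) (h : ∀ i ∈ s, a i ≠ 0) :
    s.lcm a ≠ 0 := by
  rw [Ne, Finset.lcm_eq_zero_iff]
  rintro ⟨i, hi, h0⟩
  exact h i hi h0

private lemma factorization_lcm' (a : ℕ → ℕ) (p : ℕ) :
    ∀ s : Finset ℕ, (∀ i ∈ s, a i ≠ 0) →
      (s.lcm a).factorization p = s.sup fun i => (a i).factorization p := by
  intro s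
  induction s using Finset.induction with
  | empty => simp
  | @insert x s hxs ih =>
    intro h
    have hx : a x ≠ 0 := h x (Finset.mem_insert_self x s)
    have hs : ∀ i ∈ s, a i ≠ 0 := fun i hi => h i (Finset.mem_insert_of_mem hi)
    rw [Finset.lcm_insert, Finset.sup_insert,
      show lcm (a x) (s.lcm a) = Nat.lcm (a x) (s.lcm a) from rfl,
      Nat.factorization_lcm hx (lcm_ne_zero' a s hs), Finsupp.sup_apply, ih hs]

theorem stmt_17 (a : ℕ → ℕ) (ha : ∀ n, 1 ≤ n → 0 < a n)
    (c : ℕ → ℕ)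
    (hc : ∀ n, 1 ≤ n →
      c n = Finset.lcm (Finset.Icc 1 n) a / Finset.lcm (Finset.Icc 1 (n - 1)) a) :
    (∀ n m, 1 ≤ n → 1 ≤ m → Nat.gcd (a n) (a m) = a (Nat.gcd n m))
      ↔ (∀ n, 1 ≤ n → a n = ∏ d ∈ n.divisors, c d) := by
  have haz : ∀ i, 1 ≤ i → a i ≠ 0 := fun i hi => (ha i hi).ne'
  have hLz : ∀ n : ℕ, Finset.lcm (Finset.Icc 1 n) a ≠ 0 := fun n =>
    lcm_ne_zero' a _ (fun i hi => haz i (Finset.mem_Icc.mp hi).1)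
  have hdvd : ∀ n : ℕ, 1 ≤ n →
      Finset.lcm (Finset.Icc 1 (n - 1)) a ∣ Finset.lcm (Finset.Icc 1 n) a := fun n _ =>
    Finset.lcm_mono (Finset.Icc_subset_Icc_right (by omega))
  have hcz : ∀ n, 1 ≤ n → c n ≠ 0 := by
    intro n hn h0
    have h1 := Nat.div_mul_cancel (hdvd n hn)
    rw [hc n hn] at h0
    rw [h0, zero_mul] at h1
    exact hLz n h1.symm
  have hMx : ∀ (p : ℕ) (n : ℕ),
      (Finset.lcm (Finset.Icc 1 n) a).factorization p
        = Mx (fun i => (a i).factorization p) n := by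
    intro p n
    exact factorization_lcm' a p _ (fun i hi => haz i (Finset.mem_Icc.mp hi).1)
  have hgam : ∀ (p : ℕ) (n : ℕ), 1 ≤ n →
      (c n).factorization p = gam (fun i => (a i).factorization p) n := by
    intro p n hn
    rw [hc n hn, Nat.factorization_div (hdvd n hn), Finsupp.tsub_apply, hMx, hMx]
    rfl
  have happ : ∀ (s : Finset ℕ) (F : ℕ → ℕ →₀ ℕ) (p : ℕ),
      (∑ i ∈ s, F i) p = ∑ i ∈ s, F i p := by
    intro s F p
    rw [Finsupp.coe_finset_sum, Finset.sum_apply]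
  constructor
  · intro hsd n hn
    have hprodz : ∏ d ∈ n.divisors, c d ≠ 0 :=
      Finset.prod_ne_zero_iff.mpr fun d hd => hcz d (Nat.pos_of_mem_divisors hd)
    refine Nat.factorization_inj (haz n hn) hprodz ?_
    ext p
    rw [Nat.factorization_prod fun d hd => hcz d (Nat.pos_of_mem_divisors hd), happ]
    have H : ∀ x y, 1 ≤ x → 1 ≤ y →
        min ((a x).factorization p) ((a y).factorization p)
          = (a (Nat.gcd x y)).factorization p := by
      intro x y hx hy
      rw [← hsd x y hx hy, Nat.factorization_gcd (haz x hx) (haz y hy),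
        Finsupp.inf_apply]
    calc (a n).factorization p
        = ∑ d ∈ n.divisors, gam (fun i => (a i).factorization p) d :=
          lemA _ H n hn
      _ = ∑ d ∈ n.divisors, (c d).factorization p :=
          Finset.sum_congr rfl fun d hd =>
            (hgam p d (Nat.pos_of_mem_divisors hd)).symm
  · intro hp n m hn hm
    have Hf : ∀ p : ℕ, ∀ k, 1 ≤ k →
        (a k).factorization p
          = ∑ d ∈ k.divisors, gam (fun i => (a i).factorization p) d := by
      intro p k hk
      rw [hp k hk, Nat.factorization_prod fun d hd => hcz d (Nat.pos_of_mem_divisors hd),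
        happ]
      exact Finset.sum_congr rfl fun d hd => hgam p d (Nat.pos_of_mem_divisors hd)
    have hgcd1 : 1 ≤ Nat.gcd n m := Nat.gcd_pos_of_pos_left m hn
    have hgz : Nat.gcd (a n) (a m) ≠ 0 :=
      (Nat.gcd_pos_of_pos_left (a m) (ha n hn)).ne'
    refine Nat.factorization_inj hgz (haz _ hgcd1) ?_
    ext p
    rw [Nat.factorization_gcd (haz n hn) (haz m hm), Finsupp.inf_apply]
    exact lemB (fun i => (a i).factorization p) (Hf p) n m hn hm
end

section
/- Let (a_n)_{n≥1} be a strong divisibility sequence of positive integers and for n ≥ k ≥ 0 define the a-binomial coefficient C_a(n,k) = (a_n a_{n-1} ⋯ a_{n-k+1})/(a_1 a_2 ⋯ a_k), which is always a positive integer. Then for every n ≥ 0, lcm(C_a(n,0), C_a(n,1), ..., C_a(n,n)) = lcm(a_1, a_2, ..., a_{n+1}) / a_{n+1}. -/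
open Finset

private lemma exists_rank (a : ℕ → ℕ)
    (hsd : ∀ n m, 1 ≤ n → 1 ≤ m → Nat.gcd (a n) (a m) = a (Nat.gcd n m))
    (d : ℕ) (h : ∃ m, 0 < m ∧ d ∣ a m) :
    ∃ r, 0 < r ∧ ∀ m, 0 < m → (d ∣ a m ↔ r ∣ m) := by
  classical
  have hr := Nat.find_spec h
  set r := Nat.find h with hrdef
  refine ⟨r, hr.1, fun m hm => ⟨fun hdm => ?_, fun hrm => ?_⟩⟩
  · have hg : d ∣ a (Nat.gcd m r) := by
      rw [← hsd m r hm hr.1]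
      exact Nat.dvd_gcd hdm hr.2
    have hg0 : 0 < Nat.gcd m r := Nat.gcd_pos_of_pos_left _ hm
    have h1 : r ≤ Nat.gcd m r := Nat.find_min' h ⟨hg0, hg⟩
    have h2 : Nat.gcd m r ≤ r := Nat.gcd_le_right _ hr.1
    have heq : Nat.gcd m r = r := le_antisymm h2 h1
    exact heq ▸ Nat.gcd_dvd_left m r
  · have heq : Nat.gcd (a r) (a m) = a r := by
      rw [hsd r m hr.1 hm, Nat.gcd_eq_left hrm]
    exact hr.2.trans (heq ▸ Nat.gcd_dvd_right (a r) (a m))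

private lemma choose_r (a : ℕ → ℕ)
    (hsd : ∀ n m, 1 ≤ n → 1 ≤ m → Nat.gcd (a n) (a m) = a (Nat.gcd n m))
    (p M : ℕ) (hM : ∀ e, 1 ≤ e → e ≤ M → ∃ m, 0 < m ∧ p ^ e ∣ a m) :
    ∃ r : ℕ → ℕ, ∀ e ∈ Finset.Icc 1 M,
      0 < r e ∧ ∀ m, 0 < m → (p ^ e ∣ a m ↔ r e ∣ m) := by
  classical
  have h : ∀ e, ∃ rr, e ∈ Finset.Icc 1 M →
      (0 < rr ∧ ∀ m, 0 < m → (p ^ e ∣ a m ↔ rr ∣ m)) := by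
    intro e
    by_cases he : e ∈ Finset.Icc 1 M
    · obtain ⟨h1, h2⟩ := Finset.mem_Icc.mp he
      obtain ⟨r, hr⟩ := exists_rank a hsd (p ^ e) (hM e h1 h2)
      exact ⟨r, fun _ => hr⟩
    · exact ⟨1, fun hc => absurd hc he⟩
  choose r hr using h
  exact ⟨r, hr⟩

private lemma card_Ioc_filter (r s t : ℕ) (hst : s ≤ t) :
    s / r + ((Finset.Ioc s t).filter (fun j => r ∣ j)).card = t / r := by
  classical
  have hu : Finset.Ioc 0 s ∪ Finset.Ioc s t = Finset.Ioc 0 t :=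
    Finset.Ioc_union_Ioc_eq_Ioc (Nat.zero_le s) hst
  have hd : Disjoint (Finset.Ioc 0 s) (Finset.Ioc s t) := by
    rw [Finset.disjoint_left]
    intro x hx hx'
    simp only [Finset.mem_Ioc] at hx hx'
    omega
  have h := Nat.Ioc_filter_dvd_card_eq_div t r
  rw [← hu, Finset.filter_union,
    Finset.card_union_of_disjoint (Finset.disjoint_filter_filter hd),
    Nat.Ioc_filter_dvd_card_eq_div s r] at h
  exact h

private lemma fact_eq_card (a : ℕ → ℕ) {p M : ℕ} (hp : p.Prime) (r : ℕ → ℕ)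
    (hr : ∀ e ∈ Finset.Icc 1 M, 0 < r e ∧ ∀ m, 0 < m → (p ^ e ∣ a m ↔ r e ∣ m))
    (j : ℕ) (hj : 0 < j) (haj : a j ≠ 0) (hMj : (a j).factorization p ≤ M) :
    (a j).factorization p = ((Finset.Icc 1 M).filter (fun e => r e ∣ j)).card := by
  classical
  have key : (Finset.Icc 1 M).filter (fun e => r e ∣ j)
      = Finset.Icc 1 ((a j).factorization p) := by
    ext e
    simp only [Finset.mem_filter, Finset.mem_Icc]
    constructor
    · rintro ⟨⟨h1, h2⟩, h3⟩
      exact ⟨h1, (hp.pow_dvd_iff_le_factorization haj).mp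
        (((hr e (Finset.mem_Icc.mpr ⟨h1, h2⟩)).2 j hj).mpr h3)⟩
    · rintro ⟨h1, h2⟩
      have he : e ∈ Finset.Icc 1 M := Finset.mem_Icc.mpr ⟨h1, le_trans h2 hMj⟩
      exact ⟨⟨h1, le_trans h2 hMj⟩,
        ((hr e he).2 j hj).mp ((hp.pow_dvd_iff_le_factorization haj).mpr h2)⟩
  rw [key, Nat.card_Icc]
  omega

private lemma sum_fact (a : ℕ → ℕ) {p M : ℕ} (hp : p.Prime) (r : ℕ → ℕ)
    (hr : ∀ e ∈ Finset.Icc 1 M, 0 < r e ∧ ∀ m, 0 < m → (p ^ e ∣ a m ↔ r e ∣ m))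
    (s t : ℕ) (hst : s ≤ t) (ha0 : ∀ j ∈ Finset.Ioc s t, a j ≠ 0)
    (hM : ∀ j ∈ Finset.Ioc s t, (a j).factorization p ≤ M) :
    ∑ j ∈ Finset.Ioc s t, (a j).factorization p
      = ∑ e ∈ Finset.Icc 1 M, (t / r e - s / r e) := by
  classical
  have h1 : ∑ j ∈ Finset.Ioc s t, (a j).factorization p
      = ∑ j ∈ Finset.Ioc s t, ∑ e ∈ Finset.Icc 1 M, (if r e ∣ j then 1 else 0) := by
    refine Finset.sum_congr rfl fun j hj => ?_
    have hj0 : 0 < j := lt_of_le_of_lt (Nat.zero_le s) (Finset.mem_Ioc.mp hj).1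
    rw [fact_eq_card a hp r hr j hj0 (ha0 j hj) (hM j hj), Finset.card_filter]
  rw [h1, Finset.sum_comm]
  refine Finset.sum_congr rfl fun e he => ?_
  rw [← Finset.card_filter]
  have h2 := card_Ioc_filter (r e) s t hst
  omega

private lemma fact_lcm (f : ℕ → ℕ) (p : ℕ) :
    ∀ s : Finset ℕ, (∀ i ∈ s, f i ≠ 0) →
      (s.lcm f).factorization p = s.sup fun i => (f i).factorization p := by
  classical
  intro s
  induction s using Finset.induction_on with
  | empty => intro _; simp
  | @insert b s2 hb ih =>
    intro hf
    have h1 : f b ≠ 0 := hf b (Finset.mem_insert_self b s2)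
    have h2 : s2.lcm f ≠ 0 := by
      simp only [Ne, Finset.lcm_eq_zero_iff, Set.mem_image, Finset.mem_coe]
      rintro ⟨i, hi, h0⟩
      exact hf i (Finset.mem_insert_of_mem hi) h0
    rw [Finset.lcm_insert, Finset.sup_insert]
    have hlcm : (lcm (f b) (s2.lcm f)).factorization
        = (f b).factorization ⊔ (s2.lcm f).factorization :=
      Nat.factorization_lcm h1 h2
    rw [show (lcm (f b) (s2.lcm f)) = Nat.lcm (f b) (s2.lcm f) from rfl] at hlcm
    rw [show (lcm (f b) (s2.lcm f)) = Nat.lcm (f b) (s2.lcm f) from rfl]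
    rw [hlcm, Finsupp.sup_apply, ih (fun i hi => hf i (Finset.mem_insert_of_mem hi))]

private lemma prod_dvd_prod (a : ℕ → ℕ) (ha : ∀ n, 1 ≤ n → 0 < a n)
    (hsd : ∀ n m, 1 ≤ n → 1 ≤ m → Nat.gcd (a n) (a m) = a (Nat.gcd n m))
    (n k : ℕ) (hk : k ≤ n) :
    (∏ j ∈ Finset.Ioc 0 k, a j) ∣ ∏ j ∈ Finset.Ioc (n - k) n, a j := by
  classical
  have haj : ∀ j, 0 < j → a j ≠ 0 := fun j hj => (ha j hj).ne'
  have hQ0 : (∏ j ∈ Finset.Ioc 0 k, a j) ≠ 0 :=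
    Finset.prod_ne_zero_iff.mpr fun j hj =>
      haj j (lt_of_le_of_lt (Nat.zero_le 0) (Finset.mem_Ioc.mp hj).1)
  have hP0 : (∏ j ∈ Finset.Ioc (n - k) n, a j) ≠ 0 :=
    Finset.prod_ne_zero_iff.mpr fun j hj =>
      haj j (lt_of_le_of_lt (Nat.zero_le _) (Finset.mem_Ioc.mp hj).1)
  rw [← Nat.factorization_le_iff_dvd hQ0 hP0, Finsupp.le_def]
  intro p
  by_cases hp : p.Prime
  swap
  · rw [Nat.factorization_eq_zero_of_not_prime _ hp]
    exact Nat.zero_le _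
  set M := (Finset.Icc 1 (n + 1)).sup (fun j => (a j).factorization p) with hMdef
  have hub : ∀ j ∈ Finset.Icc 1 (n + 1), (a j).factorization p ≤ M :=
    fun j hj => Finset.le_sup (f := fun j => (a j).factorization p) hj
  have hex : ∀ e, 1 ≤ e → e ≤ M → ∃ m, 0 < m ∧ p ^ e ∣ a m := by
    intro e h1 h2
    obtain ⟨j, hj, hje⟩ := Finset.exists_mem_eq_sup (Finset.Icc 1 (n + 1))
      ⟨1, by simp⟩ (fun j => (a j).factorization p)
    obtain ⟨hj1, hj2⟩ := Finset.mem_Icc.mp hj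
    refine ⟨j, hj1, (hp.pow_dvd_iff_le_factorization (haj j hj1)).mpr ?_⟩
    omega
  obtain ⟨r, hr⟩ := choose_r a hsd p M hex
  have hfQ : (∏ j ∈ Finset.Ioc 0 k, a j).factorization p
      = ∑ e ∈ Finset.Icc 1 M, (k / r e - 0 / r e) := by
    rw [Nat.factorization_prod (fun j hj =>
      haj j (lt_of_le_of_lt (Nat.zero_le 0) (Finset.mem_Ioc.mp hj).1)),
      Finset.sum_apply']
    exact sum_fact a hp r hr 0 k (Nat.zero_le k)
      (fun j hj => haj j (lt_of_le_of_lt (Nat.zero_le 0) (Finset.mem_Ioc.mp hj).1))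
      (fun j hj => by
        have hm := Finset.mem_Ioc.mp hj
        exact hub j (Finset.mem_Icc.mpr ⟨by omega, by omega⟩))
  have hfP : (∏ j ∈ Finset.Ioc (n - k) n, a j).factorization p
      = ∑ e ∈ Finset.Icc 1 M, (n / r e - (n - k) / r e) := by
    rw [Nat.factorization_prod (fun j hj =>
      haj j (lt_of_le_of_lt (Nat.zero_le _) (Finset.mem_Ioc.mp hj).1)),
      Finset.sum_apply']
    exact sum_fact a hp r hr (n - k) n (by omega)
      (fun j hj => haj j (lt_of_le_of_lt (Nat.zero_le _) (Finset.mem_Ioc.mp hj).1))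
      (fun j hj => by
        have hm := Finset.mem_Ioc.mp hj
        exact hub j (Finset.mem_Icc.mpr ⟨by omega, by omega⟩))
  rw [hfQ, hfP]
  refine Finset.sum_le_sum fun e he => ?_
  have hre : 0 < r e := (hr e he).1
  have hadd := Nat.add_div (a := n - k) (b := k) hre
  rw [show n - k + k = n from by omega] at hadd
  have h0d : 0 / r e = 0 := Nat.zero_div _
  rcases le_or_gt (r e) ((n - k) % r e + k % r e) with hca | hca
  · rw [if_pos hca] at hadd; omega
  · rw [if_neg (not_le.mpr hca)] at hadd; omega

private lemma per_prime (a : ℕ → ℕ) (ha : ∀ n, 1 ≤ n → 0 < a n)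
    (hsd : ∀ n m, 1 ≤ n → 1 ≤ m → Nat.gcd (a n) (a m) = a (Nat.gcd n m))
    (n p : ℕ) (hp : p.Prime) :
    ∃ k0 ∈ Finset.range (n + 1),
      (∀ k ∈ Finset.range (n + 1),
        (a (n + 1)).factorization p
          + ((∏ j ∈ Finset.Ioc (n - k) n, a j) / ∏ j ∈ Finset.Ioc 0 k, a j).factorization p
          ≤ (Finset.Icc 1 (n + 1)).sup fun j => (a j).factorization p)
      ∧ ((Finset.Icc 1 (n + 1)).sup fun j => (a j).factorization p)
          ≤ (a (n + 1)).factorization p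
            + ((∏ j ∈ Finset.Ioc (n - k0) n, a j)
                / ∏ j ∈ Finset.Ioc 0 k0, a j).factorization p := by
  classical
  have haj : ∀ j, 0 < j → a j ≠ 0 := fun j hj => (ha j hj).ne'
  set M := (Finset.Icc 1 (n + 1)).sup (fun j => (a j).factorization p) with hMdef
  have hub : ∀ j ∈ Finset.Icc 1 (n + 1), (a j).factorization p ≤ M :=
    fun j hj => Finset.le_sup (f := fun j => (a j).factorization p) hj
  have hex : ∀ e, 1 ≤ e → e ≤ M → ∃ m, 0 < m ∧ p ^ e ∣ a m := by
    intro e h1 h2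
    obtain ⟨j, hj, hje⟩ := Finset.exists_mem_eq_sup (Finset.Icc 1 (n + 1))
      ⟨1, by simp⟩ (fun j => (a j).factorization p)
    obtain ⟨hj1, hj2⟩ := Finset.mem_Icc.mp hj
    refine ⟨j, hj1, (hp.pow_dvd_iff_le_factorization (haj j hj1)).mpr ?_⟩
    omega
  obtain ⟨r, hr⟩ := choose_r a hsd p M hex
  -- factorization of the binomial-type quotient
  have hCfact : ∀ k, k ≤ n →
      ((∏ j ∈ Finset.Ioc (n - k) n, a j) / ∏ j ∈ Finset.Ioc 0 k, a j).factorization p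
        = ∑ e ∈ Finset.Icc 1 M, ((n / r e - (n - k) / r e) - k / r e) := by
    intro k hk
    have hdvd := prod_dvd_prod a ha hsd n k hk
    have hfQ : (∏ j ∈ Finset.Ioc 0 k, a j).factorization p
        = ∑ e ∈ Finset.Icc 1 M, (k / r e) := by
      rw [Nat.factorization_prod (fun j hj =>
        haj j (lt_of_le_of_lt (Nat.zero_le 0) (Finset.mem_Ioc.mp hj).1)),
        Finset.sum_apply']
      rw [sum_fact a hp r hr 0 k (Nat.zero_le k)
        (fun j hj => haj j (lt_of_le_of_lt (Nat.zero_le 0) (Finset.mem_Ioc.mp hj).1))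
        (fun j hj => by
          have hm := Finset.mem_Ioc.mp hj
          exact hub j (Finset.mem_Icc.mpr ⟨by omega, by omega⟩))]
      simp
    have hfP : (∏ j ∈ Finset.Ioc (n - k) n, a j).factorization p
        = ∑ e ∈ Finset.Icc 1 M, (n / r e - (n - k) / r e) := by
      rw [Nat.factorization_prod (fun j hj =>
        haj j (lt_of_le_of_lt (Nat.zero_le _) (Finset.mem_Ioc.mp hj).1)),
        Finset.sum_apply']
      exact sum_fact a hp r hr (n - k) n (by omega)
        (fun j hj => haj j (lt_of_le_of_lt (Nat.zero_le _) (Finset.mem_Ioc.mp hj).1))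
        (fun j hj => by
          have hm := Finset.mem_Ioc.mp hj
          exact hub j (Finset.mem_Icc.mpr ⟨by omega, by omega⟩))
    have hterm : ∀ e ∈ Finset.Icc 1 M, k / r e ≤ n / r e - (n - k) / r e := by
      intro e he
      have hre : 0 < r e := (hr e he).1
      have hadd := Nat.add_div (a := n - k) (b := k) hre
      rw [show n - k + k = n from by omega] at hadd
      rcases le_or_gt (r e) ((n - k) % r e + k % r e) with hca | hca
      · rw [if_pos hca] at hadd; omega
      · rw [if_neg (not_le.mpr hca)] at hadd; omega
    rw [Nat.factorization_div hdvd, Finsupp.tsub_apply, hfQ, hfP,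
      ← Finset.sum_tsub_distrib _ hterm]
  -- value of the (n+1) term
  have hwn1 : (a (n + 1)).factorization p
      = ((Finset.Icc 1 M).filter (fun e => r e ∣ n + 1)).card :=
    fact_eq_card a hp r hr (n + 1) (by omega) (haj _ (by omega))
      (hub (n + 1) (Finset.mem_Icc.mpr ⟨by omega, le_rfl⟩))
  have hMcard : (Finset.Icc 1 M).card = M := by rw [Nat.card_Icc]; omega
  -- the upper bound, for every k
  have hUB : ∀ k ∈ Finset.range (n + 1),
      (a (n + 1)).factorization p
        + ((∏ j ∈ Finset.Ioc (n - k) n, a j) / ∏ j ∈ Finset.Ioc 0 k, a j).factorization p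
        ≤ M := by
    intro k hk
    have hkn : k ≤ n := by simpa [Nat.lt_succ_iff] using Finset.mem_range.mp hk
    rw [hCfact k hkn, hwn1, Finset.card_filter, ← Finset.sum_add_distrib]
    calc ∑ e ∈ Finset.Icc 1 M,
          ((if r e ∣ n + 1 then 1 else 0) + ((n / r e - (n - k) / r e) - k / r e))
        ≤ ∑ _e ∈ Finset.Icc 1 M, 1 := by
          refine Finset.sum_le_sum fun e he => ?_
          have hre : 0 < r e := (hr e he).1
          have hadd := Nat.add_div (a := n - k) (b := k) hre
          rw [show n - k + k = n from by omega] at hadd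
          by_cases hdv : r e ∣ n + 1
          · rw [if_pos hdv]
            -- show no carry: the if in hadd is 0
            have hcar : ¬ (r e ≤ (n - k) % r e + k % r e) := by
              intro hcon
              have hx : (n - k) % r e < r e := Nat.mod_lt _ hre
              have hy : k % r e < r e := Nat.mod_lt _ hre
              have hnm : n % r e = ((n - k) % r e + k % r e) % r e := by
                conv_lhs => rw [show n = (n - k) + k from by omega]
                rw [Nat.add_mod]
              have hs2 : (n - k) % r e + k % r e < 2 * r e := by omega
              have hsub : ((n - k) % r e + k % r e) % r e
                  = (n - k) % r e + k % r e - r e := by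
                rw [Nat.mod_eq_sub_mod hcon, Nat.mod_eq_of_lt (by omega)]
              -- n % r e = r e - 1 since r e ∣ n + 1
              obtain ⟨c, hc⟩ := hdv
              have hmod0 : (n + 1) % r e = 0 := by rw [hc, Nat.mul_mod_right]
              rcases Nat.lt_or_ge 1 (r e) with hre2 | hre1
              · have h1m : (1 : ℕ) % r e = 1 := Nat.mod_eq_of_lt hre2
                have hmm : (n + 1) % r e = (n % r e + 1) % r e := by
                  rw [Nat.add_mod, h1m]
                have hnlt : n % r e < r e := Nat.mod_lt _ hre
                have : n % r e = r e - 1 := by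
                  rcases Nat.lt_or_ge (n % r e + 1) (r e) with hlt | hge
                  · rw [Nat.mod_eq_of_lt hlt] at hmm; omega
                  · omega
                omega
              · -- r e = 1
                omega
            rw [if_neg hcar] at hadd
            omega
          · rw [if_neg hdv]
            rcases le_or_gt (r e) ((n - k) % r e + k % r e) with hca | hca
            · rw [if_pos hca] at hadd; omega
            · rw [if_neg (not_le.mpr hca)] at hadd; omega
    _ = M := by rw [← Finset.card_eq_sum_ones, hMcard]
  -- the lower bound, for a suitable k0
  set T := (Finset.Icc 1 M).filter (fun e => ¬ r e ∣ n + 1) with hTdef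
  have hsplit : ((Finset.Icc 1 M).filter (fun e => r e ∣ n + 1)).card + T.card = M := by
    rw [hTdef, Finset.card_filter_add_card_filter_not, hMcard]
  by_cases hT : T.Nonempty
  · -- choose k0 = r (max element of T) - 1
    set E := T.max' hT with hEdef
    have hET : E ∈ T := Finset.max'_mem T hT
    obtain ⟨hEI, hEnd⟩ := Finset.mem_filter.mp hET
    have hrE : 0 < r E := (hr E hEI).1
    have hpE : p ^ E ∣ a (r E) := ((hr E hEI).2 (r E) hrE).mpr dvd_rfl
    have hrEle : r E ≤ n + 1 := by
      obtain ⟨j, hj, hje⟩ := Finset.exists_mem_eq_sup (Finset.Icc 1 (n + 1))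
        ⟨1, by simp⟩ (fun j => (a j).factorization p)
      obtain ⟨hj1, hj2⟩ := Finset.mem_Icc.mp hj
      have hEM : E ≤ M := (Finset.mem_Icc.mp hEI).2
      have hpEj : p ^ E ∣ a j := (hp.pow_dvd_iff_le_factorization (haj j hj1)).mpr (by omega)
      have : r E ∣ j := ((hr E hEI).2 j hj1).mp hpEj
      exact le_trans (Nat.le_of_dvd hj1 this) hj2
    have hrEn : r E ≤ n := by
      rcases Nat.lt_or_ge (r E) (n + 1) with h | h
      · omega
      · have hEq : r E = n + 1 := by omega
        exact absurd (hEq ▸ dvd_rfl) hEnd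
    refine ⟨r E - 1, Finset.mem_range.mpr (by omega), hUB, ?_⟩
    rw [hCfact (r E - 1) (by omega), hwn1]
    have hterm : ∀ e ∈ Finset.Icc 1 M, (if ¬ r e ∣ n + 1 then 1 else 0)
        ≤ (n / r e - (n - (r E - 1)) / r e) - (r E - 1) / r e := by
      intro e he
      by_cases hdv : r e ∣ n + 1
      · rw [if_neg (by simpa using hdv)]
        exact Nat.zero_le _
      · rw [if_pos hdv]
        have hre : 0 < r e := (hr e he).1
        have heE : e ≤ E := Finset.le_max' T e (Finset.mem_filter.mpr ⟨he, hdv⟩)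
        have hpe : p ^ e ∣ a (r E) := (pow_dvd_pow p heE).trans hpE
        have hdr : r e ∣ r E := ((hr e he).2 (r E) hrE).mp hpe
        set q := r E / r e with hqdef
        have hqr : q * r e = r E := Nat.div_mul_cancel hdr
        have hq1 : 1 ≤ q := (Nat.one_le_div_iff hre).mpr (Nat.le_of_dvd hrE hdr)
        set c := (n + 1) / r e with hcdef
        have hc : n / r e = c := by
          rw [hcdef, Nat.succ_div, if_neg hdv, add_zero]
        have hqc : q ≤ c := Nat.div_le_div_right hrEle
        have hk0 : (r E - 1) / r e + 1 = q := by
          have : (r E - 1 + 1) / r e = (r E - 1) / r e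
              + if r e ∣ r E - 1 + 1 then 1 else 0 := Nat.succ_div
          rw [show r E - 1 + 1 = r E from by omega, if_pos hdr] at this
          omega
        have hnk : n - (r E - 1) = n + 1 - r e * q := by
          rw [mul_comm, hqr]; omega
        have hxr : (n - (r E - 1)) / r e = c - q := by
          rw [hnk, Nat.sub_mul_div]
        rw [hc, hxr]
        omega
    calc M = ((Finset.Icc 1 M).filter (fun e => r e ∣ n + 1)).card + T.card := hsplit.symm
    _ = ((Finset.Icc 1 M).filter (fun e => r e ∣ n + 1)).card
          + ∑ e ∈ Finset.Icc 1 M, (if ¬ r e ∣ n + 1 then 1 else 0) := by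
        rw [hTdef]; simp only [Finset.card_filter]
    _ ≤ ((Finset.Icc 1 M).filter (fun e => r e ∣ n + 1)).card
          + ∑ e ∈ Finset.Icc 1 M, ((n / r e - (n - (r E - 1)) / r e) - (r E - 1) / r e) :=
        Nat.add_le_add_left (Finset.sum_le_sum hterm) _
  · -- T empty : M = v_p(a (n+1))
    refine ⟨0, Finset.mem_range.mpr (by omega), hUB, ?_⟩
    have hT0 : T.card = 0 := by
      rw [Finset.card_eq_zero]
      exact Finset.not_nonempty_iff_eq_empty.mp hT
    have : M ≤ (a (n + 1)).factorization p := by rw [hwn1]; omega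
    exact le_trans this (Nat.le_add_right _ _)

theorem stmt_18 (a : ℕ → ℕ) (ha : ∀ n, 1 ≤ n → 0 < a n)
    (hsd : ∀ n m, 1 ≤ n → 1 ≤ m → Nat.gcd (a n) (a m) = a (Nat.gcd n m))
    (n : ℕ) :
    Finset.lcm (Finset.range (n + 1))
        (fun k => (∏ j ∈ Finset.Icc (n - k + 1) n, a j) / ∏ j ∈ Finset.Icc 1 k, a j)
      = Finset.lcm (Finset.Icc 1 (n + 1)) a / a (n + 1) := by
  classical
  have haj : ∀ j, 0 < j → a j ≠ 0 := fun j hj => (ha j hj).ne'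
  have hfun : (fun k => (∏ j ∈ Finset.Icc (n - k + 1) n, a j) / ∏ j ∈ Finset.Icc 1 k, a j)
      = fun k => (∏ j ∈ Finset.Ioc (n - k) n, a j) / ∏ j ∈ Finset.Ioc 0 k, a j := by
    funext k
    have h1 : Finset.Icc (n - k + 1) n = Finset.Ioc (n - k) n := by
      ext x; simp only [Finset.mem_Icc, Finset.mem_Ioc]; omega
    have h2 : Finset.Icc 1 k = Finset.Ioc 0 k := by
      ext x; simp only [Finset.mem_Icc, Finset.mem_Ioc]; omega
    rw [h1, h2]
  rw [hfun]
  set C : ℕ → ℕ := fun k => (∏ j ∈ Finset.Ioc (n - k) n, a j) / ∏ j ∈ Finset.Ioc 0 k, a j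
    with hCdef
  set L := Finset.lcm (Finset.Icc 1 (n + 1)) a with hLdef
  have hP0 : ∀ k, (∏ j ∈ Finset.Ioc (n - k) n, a j) ≠ 0 := fun k =>
    Finset.prod_ne_zero_iff.mpr fun j hj =>
      haj j (lt_of_le_of_lt (Nat.zero_le _) (Finset.mem_Ioc.mp hj).1)
  have hQ0 : ∀ k, (∏ j ∈ Finset.Ioc 0 k, a j) ≠ 0 := fun k =>
    Finset.prod_ne_zero_iff.mpr fun j hj =>
      haj j (lt_of_le_of_lt (Nat.zero_le 0) (Finset.mem_Ioc.mp hj).1)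
  have hC0 : ∀ k ∈ Finset.range (n + 1), C k ≠ 0 := by
    intro k hk
    have hkn : k ≤ n := by simpa [Nat.lt_succ_iff] using Finset.mem_range.mp hk
    have hdvd := prod_dvd_prod a ha hsd n k hkn
    rw [hCdef]
    exact Nat.div_ne_zero_iff.mpr ⟨hQ0 k, Nat.le_of_dvd (Nat.pos_of_ne_zero (hP0 k)) hdvd⟩
  have hlcmC0 : Finset.lcm (Finset.range (n + 1)) C ≠ 0 := by
    simp only [Ne, Finset.lcm_eq_zero_iff, Set.mem_image, Finset.mem_coe]
    rintro ⟨k, hk, h0⟩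
    exact hC0 k hk h0
  have hL0 : L ≠ 0 := by
    rw [hLdef]
    simp only [Ne, Finset.lcm_eq_zero_iff, Set.mem_image, Finset.mem_coe]
    rintro ⟨j, hj, h0⟩
    exact haj j (Finset.mem_Icc.mp hj).1 h0
  have hMleL : ∀ p : ℕ,
      ((Finset.Icc 1 (n + 1)).sup fun j => (a j).factorization p) ≤ L.factorization p := by
    intro p
    refine Finset.sup_le fun j hj => ?_
    have h1 : 1 ≤ j := (Finset.mem_Icc.mp hj).1
    have h2 := (Nat.factorization_le_iff_dvd (haj j h1) hL0).mpr (Finset.dvd_lcm hj)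
    exact Finsupp.le_def.mp h2 p
  have hlcmfact : ∀ p : ℕ, (Finset.lcm (Finset.range (n + 1)) C).factorization p
      = (Finset.range (n + 1)).sup fun k => (C k).factorization p :=
    fun p => fact_lcm C p (Finset.range (n + 1)) hC0
  have key : a (n + 1) * Finset.lcm (Finset.range (n + 1)) C = L := by
    have hA0 : a (n + 1) * Finset.lcm (Finset.range (n + 1)) C ≠ 0 :=
      mul_ne_zero (haj _ (by omega)) hlcmC0
    apply Nat.dvd_antisymm
    · rw [← Nat.factorization_le_iff_dvd hA0 hL0, Finsupp.le_def]
      intro p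
      by_cases hp : p.Prime
      swap
      · rw [Nat.factorization_eq_zero_of_not_prime _ hp]; exact Nat.zero_le _
      rw [Nat.factorization_mul (haj _ (by omega)) hlcmC0, Finsupp.add_apply, hlcmfact p]
      obtain ⟨k1, hk1, hsup⟩ := Finset.exists_mem_eq_sup (Finset.range (n + 1))
        ⟨0, by simp⟩ (fun k => (C k).factorization p)
      rw [hsup]
      obtain ⟨k0, hk0, hub, _⟩ := per_prime a ha hsd n p hp
      exact le_trans (hub k1 hk1) (hMleL p)
    · refine Finset.lcm_dvd fun j hj => ?_
      have h1 : 1 ≤ j := (Finset.mem_Icc.mp hj).1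
      rw [← Nat.factorization_le_iff_dvd (haj j h1) hA0, Finsupp.le_def]
      intro p
      by_cases hp : p.Prime
      swap
      · rw [Nat.factorization_eq_zero_of_not_prime _ hp]; exact Nat.zero_le _
      rw [Nat.factorization_mul (haj _ (by omega)) hlcmC0, Finsupp.add_apply, hlcmfact p]
      obtain ⟨k0, hk0, _, hlb⟩ := per_prime a ha hsd n p hp
      calc (a j).factorization p
          ≤ (Finset.Icc 1 (n + 1)).sup fun j => (a j).factorization p :=
            Finset.le_sup (f := fun j => (a j).factorization p) hj
        _ ≤ (a (n + 1)).factorization p + (C k0).factorization p := hlb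
        _ ≤ (a (n + 1)).factorization p
              + (Finset.range (n + 1)).sup fun k => (C k).factorization p :=
            Nat.add_le_add_left (Finset.le_sup (f := fun k => (C k).factorization p) hk0) _
  exact (Nat.div_eq_of_eq_mul_left (ha (n + 1) (by omega)) (by rw [← key, mul_comm])).symm
end
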